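/- arXiv:2108.12766 — 6 statements merged into one kernel-verified Lean document; each statement's English description precedes it below -/
import Mathlib

section
/- Let n be a nonnegative integer and let λ be a partition of 2n (i.e., |λ| = 2n). Then the Young diagram of λ can be tiled by dominoes if and only if λ has exactly n even hook lengths and exactly n odd hook lengths, counted with multiplicity; equivalently, a partition has empty 2-core if and only if its number of even hook lengths equals its number of odd hook lengths. -/
/-- A partition `λ`, 1-indexed: `λ_i = part i` for `i ≥ 1`. -/
structure OneIdxPartition where
  part : ℕ → ℕ
  part_zero : part 0 = 0
  antitone : ∀ ⦃i j : ℕ⦄, 1 ≤ i → i ≤ j → part j ≤ part i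
  finite : ∃ N : ℕ, ∀ i : ℕ, N ≤ i → part i = 0

/-- The conjugate partition: `λ'_j = #{i ≥ 1 : λ_i ≥ j}`. -/
noncomputable def conjFn (f : ℕ → ℕ) (j : ℕ) : ℕ :=
  Set.ncard {i : ℕ | 1 ≤ i ∧ j ≤ f i}

/-- The cells of the Young diagram of `λ`. -/
def cellsFn (f : ℕ → ℕ) : Set (ℕ × ℕ) :=
  {p : ℕ × ℕ | 1 ≤ p.1 ∧ 1 ≤ p.2 ∧ p.2 ≤ f p.1}

/-- The hook length of the cell `(i,j)`: `h(i,j) = (λ_i − j) + (λ'_j − i) + 1`. -/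
noncomputable def hookFn (f : ℕ → ℕ) (i j : ℕ) : ℕ :=
  (f i - j) + (conjFn f j - i) + 1

/-- `b(λ) = Σ_{(i,j)∈λ} (−1)^{λ_i + λ'_j − i − j + 1}(λ_i − i)`;
the exponent is replaced by `λ_i + λ'_j + i + j + 1`, which has the same parity. -/
noncomputable def bFn (f : ℕ → ℕ) : ℤ :=
  ∑ᶠ i : ℕ, ∑ j ∈ Finset.Icc 1 (f i),
    (-1 : ℤ) ^ (f i + conjFn f j + i + j + 1) * ((f i : ℤ) - (i : ℤ))

/-- The size `|λ| = Σ_i λ_i`. -/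
noncomputable def sizeFn (f : ℕ → ℕ) : ℕ := ∑ᶠ i : ℕ, f i

/-- A domino: a pair of horizontally or vertically adjacent cells. -/
def IsDomino (d : Set (ℕ × ℕ)) : Prop :=
  ∃ i j : ℕ, d = {(i, j), (i, j + 1)} ∨ d = {(i, j), (i + 1, j)}

/-- The Young diagram of `λ` can be tiled by dominoes. -/
def HasDominoTiling (f : ℕ → ℕ) : Prop :=
  ∃ D : Set (Set (ℕ × ℕ)), (∀ d ∈ D, IsDomino d) ∧
    D.PairwiseDisjoint id ∧ ⋃₀ D = cellsFn f

-- chunk 1 : conj lemmas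
namespace LW
open Finset

variable {f : ℕ → ℕ} {N : ℕ}

lemma mem_conj_iff (hv : ∀ i, N ≤ i → f i = 0)
    (hanti : ∀ ⦃i j : ℕ⦄, 1 ≤ i → i ≤ j → f j ≤ f i) {j : ℕ} (hj : 1 ≤ j) {i : ℕ} (hi : 1 ≤ i) :
    j ≤ f i ↔ i ≤ conjFn f j := by
  classical
  set Sj := (Finset.Icc 1 N).filter (fun i => j ≤ f i) with hSj
  have hset : {i : ℕ | 1 ≤ i ∧ j ≤ f i} = ↑Sj := by
    ext k
    simp only [hSj, Finset.coe_filter, Finset.mem_Icc, Set.mem_setOf_eq]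
    constructor
    · rintro ⟨h1, h2⟩
      refine ⟨⟨h1, ?_⟩, h2⟩
      by_contra h
      have := hv k (by omega)
      omega
    · rintro ⟨⟨h1, _⟩, h2⟩; exact ⟨h1, h2⟩
  have hconj : conjFn f j = Sj.card := by
    rw [conjFn, hset, Set.ncard_coe_finset]
  have hdown : ∀ k ∈ Sj, ∀ m, 1 ≤ m → m ≤ k → m ∈ Sj := by
    intro k hk m h1 h2
    simp only [hSj, Finset.mem_filter, Finset.mem_Icc] at hk ⊢
    exact ⟨⟨h1, le_trans h2 hk.1.2⟩, le_trans hk.2 (hanti h1 h2)⟩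
  constructor
  · intro h
    have hiS : i ∈ Sj := by
      simp only [hSj, Finset.mem_filter, Finset.mem_Icc]
      refine ⟨⟨hi, ?_⟩, h⟩
      by_contra hc
      have := hv i (by omega); omega
    have hsub : Finset.Icc 1 i ⊆ Sj := by
      intro m hm
      rw [Finset.mem_Icc] at hm
      exact hdown i hiS m hm.1 hm.2
    have := Finset.card_le_card hsub
    rw [Nat.card_Icc] at this
    omega
  · intro h
    by_contra hc
    push_neg at hc
    have hns : i ∉ Sj := by
      simp only [hSj, Finset.mem_filter, Finset.mem_Icc]
      push_neg
      intro _; omega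
    have hsub : Sj ⊆ Finset.Icc 1 (i - 1) := by
      intro k hk
      have h1 : 1 ≤ k := by
        have := (Finset.mem_filter.mp hk).1; rw [Finset.mem_Icc] at this; exact this.1
      rw [Finset.mem_Icc]
      refine ⟨h1, ?_⟩
      by_contra hki
      exact hns (hdown k hk i hi (by omega))
    have := Finset.card_le_card hsub
    rw [Nat.card_Icc] at this
    omega

lemma conj_le (hv : ∀ i, N ≤ i → f i = 0)
    (hanti : ∀ ⦃i j : ℕ⦄, 1 ≤ i → i ≤ j → f j ≤ f i) {j : ℕ} (hj : 1 ≤ j) :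
    conjFn f j ≤ N := by
  by_contra hc
  have h := (mem_conj_iff hv hanti hj (i := N + 1) (by omega)).mpr (by omega)
  rw [hv (N + 1) (by omega)] at h
  omega

lemma conj_anti (hv : ∀ i, N ≤ i → f i = 0)
    (hanti : ∀ ⦃i j : ℕ⦄, 1 ≤ i → i ≤ j → f j ≤ f i) {j j' : ℕ} (hj : 1 ≤ j) (hjj : j ≤ j') :
    conjFn f j' ≤ conjFn f j := by
  rcases Nat.eq_zero_or_pos (conjFn f j') with h0 | h0
  · omega
  · have h1 : j' ≤ f (conjFn f j') :=
      (mem_conj_iff hv hanti (by omega) h0).mpr le_rfl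
    exact (mem_conj_iff hv hanti hj h0).mp (by omega)

end LW
namespace LW
open Finset

/-- helper: equal parity gives equal powers of -1 -/
lemma negpow_congr {a b : ℕ} (h : a % 2 = b % 2) : (-1 : ℤ) ^ a = (-1) ^ b := by
  rcases Nat.even_or_odd a with ha | ha
  · have hb : Even b := by rw [Nat.even_iff] at *; omega
    rw [ha.neg_one_pow, hb.neg_one_pow]
  · have hb : Odd b := by rw [Nat.odd_iff] at *; omega
    rw [ha.neg_one_pow, hb.neg_one_pow]

lemma negpow_sub {c m : ℕ} (h : c ≤ m) : (-1 : ℤ) ^ (m - c) = (-1) ^ m * (-1) ^ c := by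
  have h2 : ((-1 : ℤ) ^ c) * ((-1 : ℤ) ^ c) = 1 := by
    rw [← pow_add]; exact Even.neg_one_pow ⟨c, rfl⟩
  calc (-1 : ℤ) ^ (m - c) = (-1 : ℤ) ^ (m - c) * (((-1 : ℤ) ^ c) * ((-1 : ℤ) ^ c)) := by
        rw [h2, mul_one]
    _ = ((-1 : ℤ) ^ (m - c + c)) * (-1) ^ c := by rw [← pow_add]; ring
    _ = (-1 : ℤ) ^ m * (-1) ^ c := by rw [Nat.sub_add_cancel h]

/-- `∑_{j=1}^m (-1)^j`, doubled. -/
lemma two_mul_sum_Icc_negpow (m : ℕ) :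
    2 * ∑ j ∈ Finset.Icc 1 m, (-1 : ℤ) ^ j = (-1) ^ m - 1 := by
  induction m with
  | zero => simp
  | succ m ih =>
    have hins : Finset.Icc 1 (m+1) = insert (m+1) (Finset.Icc 1 m) := by
      ext x; simp [Finset.mem_Icc]; omega
    rw [hins, Finset.sum_insert (by simp)]
    rw [mul_add, ih, pow_succ]
    ring

lemma sum_range_negpow_sub (m : ℕ) :
    ∑ c ∈ Finset.range m, (-1 : ℤ) ^ (m - c) = if Even m then 0 else -1 := by
  have h := Finset.sum_range_reflect (fun c => (-1 : ℤ) ^ (m - c)) m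
  have h2 : ∀ j ∈ Finset.range m, (-1 : ℤ) ^ (m - (m - 1 - j)) = (-1) ^ (j + 1) := by
    intro j hj
    rw [Finset.mem_range] at hj
    congr 1
    omega
  rw [Finset.sum_congr rfl h2] at h
  rw [← h]
  have : ∀ j ∈ Finset.range m, (-1 : ℤ) ^ (j + 1) = -1 * (-1) ^ j := by
    intro j _; rw [pow_succ]; ring
  rw [Finset.sum_congr rfl this, ← Finset.mul_sum, neg_one_geom_sum]
  by_cases hm : Even m <;> simp [hm]

lemma sum_Icc_negpow_even {N : ℕ} (hN : Even N) :
    ∑ i ∈ Finset.Icc 1 N, (-1 : ℤ) ^ i = 0 := by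
  have hr : Finset.range (N + 1) = insert 0 (Finset.Icc 1 N) := by
    ext x; simp [Finset.mem_range, Finset.mem_Icc]; omega
  have h := neg_one_geom_sum (R := ℤ) (n := N + 1)
  rw [hr, Finset.sum_insert (by simp)] at h
  have hodd : ¬ Even (N + 1) := by
    rcases hN with ⟨k, hk⟩; subst hk; simp [Nat.even_iff]; omega
  rw [if_neg hodd] at h
  simpa using h

/-- a finite downward-closed set of naturals is an initial range -/
lemma downclosed_eq_range (S : Finset ℕ) (h : ∀ x ∈ S, x ≠ 0 → x - 1 ∈ S) :
    S = Finset.range S.card := by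
  have hdc : ∀ x, x ∈ S → ∀ y, y ≤ x → y ∈ S := by
    intro x
    induction x with
    | zero => intro hx y hy; simpa [Nat.le_zero.mp hy] using hx
    | succ m ih =>
      intro hx y hy
      rcases Nat.eq_or_lt_of_le hy with h1 | h1
      · subst h1; exact hx
      · exact ih (by simpa using h _ hx (by omega)) y (by omega)
  have hsub : Finset.range S.card ⊆ S := by
    intro k hk
    rw [Finset.mem_range] at hk
    by_contra hns
    have : S ⊆ Finset.range k := by
      intro x hx
      rw [Finset.mem_range]
      by_contra hxk
      exact hns (hdc x hx k (by omega))
    have := Finset.card_le_card this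
    simp at this
    omega
  exact (Finset.eq_of_subset_of_card_le hsub (by simp)).symm

section Beta
variable (f : ℕ → ℕ) (N : ℕ)

/-- first-column hook length / beta number -/
def beta (i : ℕ) : ℕ := f i + (N - i)

/-- the complement position associated to column `j` -/
noncomputable def bb (j : ℕ) : ℕ := (N + j) - (1 + conjFn f j)

/-- the beta-set -/
noncomputable def BSet : Finset ℕ := (Finset.Icc 1 N).image (beta f N)

end Beta

variable {f : ℕ → ℕ} {N : ℕ}

lemma beta_lt (hanti : ∀ ⦃i j : ℕ⦄, 1 ≤ i → i ≤ j → f j ≤ f i)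
    {i k : ℕ} (hi : 1 ≤ i) (hik : i < k) (hk : k ≤ N) : beta f N k < beta f N i := by
  have h1 : f k ≤ f i := hanti hi (by omega)
  unfold beta
  omega

lemma beta_injOn (hanti : ∀ ⦃i j : ℕ⦄, 1 ≤ i → i ≤ j → f j ≤ f i) :
    Set.InjOn (beta f N) ↑(Finset.Icc 1 N) := by
  intro a ha b hb hab
  simp only [Finset.coe_Icc, Set.mem_Icc] at ha hb
  by_contra hne
  rcases Nat.lt_or_ge a b with h | h
  · have := beta_lt hanti ha.1 h hb.2; omega
  · have := beta_lt hanti hb.1 (by omega) ha.2; omega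

lemma card_BSet (hanti : ∀ ⦃i j : ℕ⦄, 1 ≤ i → i ≤ j → f j ≤ f i) :
    (BSet f N).card = N := by
  rw [BSet, Finset.card_image_of_injOn (beta_injOn hanti)]
  simp

end LW
namespace LW
open Finset
set_option linter.unusedSectionVars false

variable {f : ℕ → ℕ} {N : ℕ}

section WithHyp
variable (hv : ∀ i, N ≤ i → f i = 0)
    (hanti : ∀ ⦃i j : ℕ⦄, 1 ≤ i → i ≤ j → f j ≤ f i)

include hv hanti

lemma bb_lt_bb {j j' : ℕ} (hj : 1 ≤ j) (hjj : j < j') : bb f N j < bb f N j' := by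
  have h1 : conjFn f j' ≤ conjFn f j := conj_anti hv hanti hj (by omega)
  have h2 : conjFn f j ≤ N := conj_le hv hanti hj
  unfold bb
  omega

lemma bb_not_mem {j : ℕ} (hj : 1 ≤ j) : bb f N j ∉ BSet f N := by
  have h2 : conjFn f j ≤ N := conj_le hv hanti hj
  rw [BSet, Finset.mem_image]
  rintro ⟨k, hk, hbk⟩
  rw [Finset.mem_Icc] at hk
  rcases Nat.lt_or_ge (conjFn f j) k with h | h
  · -- k > conj j : f k < j
    have hfk : f k < j := by
      by_contra hc
      have := (mem_conj_iff hv hanti hj hk.1).mp (by omega)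
      omega
    unfold beta bb at hbk
    omega
  · -- k ≤ conj j : j ≤ f k
    have hfk : j ≤ f k := (mem_conj_iff hv hanti hj hk.1).mpr h
    unfold beta bb at hbk
    omega

lemma bb_lt_beta {i j : ℕ} (hi : 1 ≤ i) (hiN : i ≤ N) (hj : 1 ≤ j) (hjf : j ≤ f i) :
    bb f N j < beta f N i := by
  have h1 : i ≤ conjFn f j := (mem_conj_iff hv hanti hj hi).mp hjf
  have h2 : conjFn f j ≤ N := conj_le hv hanti hj
  unfold bb beta
  omega

lemma hook_eq {i j : ℕ} (hi : 1 ≤ i) (hiN : i ≤ N) (hj : 1 ≤ j) (hjf : j ≤ f i) :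
    hookFn f i j = beta f N i - bb f N j := by
  have h1 : i ≤ conjFn f j := (mem_conj_iff hv hanti hj hi).mp hjf
  have h2 : conjFn f j ≤ N := conj_le hv hanti hj
  unfold hookFn bb beta
  omega

/-- the intersection of the beta-set with an initial segment -/
lemma BSet_inter_range {i : ℕ} (hi : 1 ≤ i) (hiN : i ≤ N) :
    BSet f N ∩ Finset.range (beta f N i) = (Finset.Icc (i+1) N).image (beta f N) := by
  ext c
  simp only [Finset.mem_inter, Finset.mem_range, BSet, Finset.mem_image, Finset.mem_Icc]
  constructor
  · rintro ⟨⟨k, hk, rfl⟩, hlt⟩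
    refine ⟨k, ⟨?_, hk.2⟩, rfl⟩
    by_contra hc
    rcases Nat.eq_or_lt_of_le (Nat.le_of_not_lt (by omega) : k ≤ i) with h | h
    · subst h; omega
    · have := beta_lt hanti hk.1 h hiN; omega
  · rintro ⟨k, hk, rfl⟩
    exact ⟨⟨k, ⟨by omega, hk.2⟩, rfl⟩, beta_lt hanti hi (by omega) hk.2⟩

/-- the image of `[1, f i]` under `bb` is the complement of the beta-set below `beta i` -/
lemma image_bb_eq {i : ℕ} (hi : 1 ≤ i) (hiN : i ≤ N) :
    (Finset.Icc 1 (f i)).image (bb f N) = Finset.range (beta f N i) \ BSet f N := by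
  have hinj : Set.InjOn (bb f N) ↑(Finset.Icc 1 (f i)) := by
    intro a ha b hb hab
    simp only [Finset.coe_Icc, Set.mem_Icc] at ha hb
    by_contra hne
    rcases Nat.lt_or_ge a b with h | h
    · have := bb_lt_bb hv hanti ha.1 h; omega
    · have hba : b < a := by omega
      have := bb_lt_bb hv hanti hb.1 hba; omega
  have hsub : (Finset.Icc 1 (f i)).image (bb f N) ⊆ Finset.range (beta f N i) \ BSet f N := by
    intro c hc
    rw [Finset.mem_image] at hc
    obtain ⟨j, hj, rfl⟩ := hc
    rw [Finset.mem_Icc] at hj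
    rw [Finset.mem_sdiff, Finset.mem_range]
    exact ⟨bb_lt_beta hv hanti hi hiN hj.1 hj.2, bb_not_mem hv hanti hj.1⟩
  refine Finset.eq_of_subset_of_card_le hsub ?_
  have hcard1 : ((Finset.Icc 1 (f i)).image (bb f N)).card = f i := by
    rw [Finset.card_image_of_injOn hinj]; simp
  have hsd : Finset.range (beta f N i) \ BSet f N
      = Finset.range (beta f N i) \ (BSet f N ∩ Finset.range (beta f N i)) := by
    ext x; simp only [Finset.mem_sdiff, Finset.mem_inter, Finset.mem_range]; tauto
  have hinj2 : Set.InjOn (beta f N) ↑(Finset.Icc (i+1) N) := by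
    intro a ha b hb hab
    simp only [Finset.coe_Icc, Set.mem_Icc] at ha hb
    by_contra hne
    rcases Nat.lt_or_ge a b with h | h
    · have := beta_lt hanti (by omega : 1 ≤ a) h hb.2; omega
    · have := beta_lt hanti (by omega : 1 ≤ b) (by omega) ha.2; omega
  have hcard2 : (Finset.range (beta f N i) \ BSet f N).card = f i := by
    rw [hsd, Finset.card_sdiff_of_subset (by intro x hx; exact (Finset.mem_inter.mp hx).2)]
    rw [BSet_inter_range hv hanti hi hiN]
    rw [Finset.card_image_of_injOn hinj2]
    rw [Finset.card_range, Nat.card_Icc]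
    unfold beta
    omega
  omega

end WithHyp
end LW
namespace LW
open Finset
set_option linter.unusedSectionVars false

variable {f : ℕ → ℕ} {N : ℕ}

section TComp
variable (hv : ∀ i, N ≤ i → f i = 0)
    (hanti : ∀ ⦃i j : ℕ⦄, 1 ≤ i → i ≤ j → f j ≤ f i)
include hv hanti

lemma row_sum {i : ℕ} (hi : 1 ≤ i) (hiN : i ≤ N) :
    ∑ j ∈ Finset.Icc 1 (f i), (-1 : ℤ) ^ hookFn f i j
      = (if Even (beta f N i) then 0 else -1)
        - (-1 : ℤ) ^ beta f N i * ∑ k ∈ Finset.Icc (i+1) N, (-1 : ℤ) ^ beta f N k := by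
  have h1 : ∑ j ∈ Finset.Icc 1 (f i), (-1 : ℤ) ^ hookFn f i j
      = ∑ j ∈ Finset.Icc 1 (f i), (-1 : ℤ) ^ (beta f N i - bb f N j) := by
    refine Finset.sum_congr rfl fun j hj => ?_
    rw [Finset.mem_Icc] at hj
    rw [hook_eq hv hanti hi hiN hj.1 hj.2]
  have h2 : ∑ j ∈ Finset.Icc 1 (f i), (-1 : ℤ) ^ (beta f N i - bb f N j)
      = ∑ c ∈ (Finset.Icc 1 (f i)).image (bb f N), (-1 : ℤ) ^ (beta f N i - c) := by
    rw [Finset.sum_image]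
    intro a ha b hb hab
    rw [Finset.mem_coe, Finset.mem_Icc] at ha hb
    by_contra hne
    rcases Nat.lt_or_ge a b with h | h
    · have := bb_lt_bb hv hanti ha.1 h; omega
    · have hba : b < a := by omega
      have := bb_lt_bb hv hanti hb.1 hba; omega
  have hsd : Finset.range (beta f N i) \ BSet f N
      = Finset.range (beta f N i) \ (BSet f N ∩ Finset.range (beta f N i)) := by
    ext x; simp only [Finset.mem_sdiff, Finset.mem_inter, Finset.mem_range]; tauto
  rw [h1, h2, image_bb_eq hv hanti hi hiN, hsd,
    Finset.sum_sdiff_eq_sub (by intro x hx; exact (Finset.mem_inter.mp hx).2),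
    sum_range_negpow_sub, BSet_inter_range hv hanti hi hiN]
  congr 1
  have hinj2 : ∀ a ∈ Finset.Icc (i+1) N, ∀ b ∈ Finset.Icc (i+1) N,
      beta f N a = beta f N b → a = b := by
    intro a ha b hb hab
    rw [Finset.mem_Icc] at ha hb
    by_contra hne
    rcases Nat.lt_or_ge a b with h | h
    · have := beta_lt hanti (by omega : 1 ≤ a) h hb.2; omega
    · have hba : b < a := by omega
      have := beta_lt hanti (by omega : 1 ≤ b) hba ha.2; omega
  rw [Finset.sum_image hinj2, Finset.mul_sum]
  refine Finset.sum_congr rfl fun k hk => ?_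
  rw [Finset.mem_Icc] at hk
  have hlt : beta f N k < beta f N i := beta_lt hanti hi (by omega) hk.2
  rw [negpow_sub (le_of_lt hlt)]

/-- the key identity: twice the signed hook sum equals `s - s^2` where
`s` is the signed sum over the beta-set. -/
lemma two_T_eq :
    2 * ∑ i ∈ Finset.Icc 1 N, ∑ j ∈ Finset.Icc 1 (f i), (-1 : ℤ) ^ hookFn f i j
      = (∑ i ∈ Finset.Icc 1 N, (-1 : ℤ) ^ beta f N i)
        - (∑ i ∈ Finset.Icc 1 N, (-1 : ℤ) ^ beta f N i) ^ 2 := by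
  set u : ℕ → ℤ := fun i => (-1 : ℤ) ^ beta f N i with hu
  set s : ℤ := ∑ i ∈ Finset.Icc 1 N, u i with hs
  have husq : ∀ i, u i * u i = 1 := by
    intro i
    rw [hu, ← pow_add]
    exact Even.neg_one_pow ⟨beta f N i, rfl⟩
  -- rewrite T via row_sum
  have hT : ∑ i ∈ Finset.Icc 1 N, ∑ j ∈ Finset.Icc 1 (f i), (-1 : ℤ) ^ hookFn f i j
      = (∑ i ∈ Finset.Icc 1 N, (if Even (beta f N i) then (0:ℤ) else -1))
        - ∑ i ∈ Finset.Icc 1 N, u i * ∑ k ∈ Finset.Icc (i+1) N, u k := by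
    rw [← Finset.sum_sub_distrib]
    refine Finset.sum_congr rfl fun i hi => ?_
    rw [Finset.mem_Icc] at hi
    exact row_sum hv hanti hi.1 hi.2
  -- the "diagonal-ish" sum
  have hE : 2 * (∑ i ∈ Finset.Icc 1 N, (if Even (beta f N i) then (0:ℤ) else -1))
      = s - N := by
    rw [Finset.mul_sum, hs]
    have : ∀ i ∈ Finset.Icc 1 N, 2 * (if Even (beta f N i) then (0:ℤ) else -1)
        = u i - 1 := by
      intro i _
      by_cases h : Even (beta f N i)
      · rw [if_pos h, hu]; simp [h.neg_one_pow]
      · rw [if_neg h, hu]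
        show 2 * (-1 : ℤ) = (-1) ^ beta f N i - 1
        rw [(Nat.not_even_iff_odd.mp h).neg_one_pow]
        ring
    rw [Finset.sum_congr rfl this, Finset.sum_sub_distrib]
    simp
  -- the pair sum
  have hP : 2 * ∑ i ∈ Finset.Icc 1 N, u i * ∑ k ∈ Finset.Icc (i+1) N, u k
      = s ^ 2 - N := by
    have hsq : s ^ 2 = ∑ i ∈ Finset.Icc 1 N, ∑ k ∈ Finset.Icc 1 N, u i * u k := by
      rw [sq, hs, Finset.sum_mul_sum]
    have hsplit : ∀ i ∈ Finset.Icc 1 N,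
        ∑ k ∈ Finset.Icc 1 N, u i * u k
          = (∑ k ∈ Finset.Icc 1 (i-1), u i * u k) + u i * u i
            + ∑ k ∈ Finset.Icc (i+1) N, u i * u k := by
      intro i hi
      rw [Finset.mem_Icc] at hi
      have h1 : Finset.Icc 1 N = Finset.Icc 1 i ∪ Finset.Icc (i+1) N := by
        ext x; simp only [Finset.mem_union, Finset.mem_Icc]; omega
      have h2 : Disjoint (Finset.Icc 1 i) (Finset.Icc (i+1) N) := by
        rw [Finset.disjoint_left]
        intro x hx hx'
        rw [Finset.mem_Icc] at hx hx'
        omega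
      have h3 : Finset.Icc 1 i = insert i (Finset.Icc 1 (i-1)) := by
        ext x; simp only [Finset.mem_insert, Finset.mem_Icc]; omega
      rw [h1, Finset.sum_union h2, h3, Finset.sum_insert (by rw [Finset.mem_Icc]; omega)]
      ring
    have hswap : ∑ i ∈ Finset.Icc 1 N, ∑ k ∈ Finset.Icc 1 (i-1), u i * u k
        = ∑ i ∈ Finset.Icc 1 N, u i * ∑ k ∈ Finset.Icc (i+1) N, u k := by
      rw [Finset.sum_comm' (t' := Finset.Icc 1 N) (s' := fun k => Finset.Icc (k+1) N)
        (by intro x y; simp only [Finset.mem_Icc]; omega)]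
      refine Finset.sum_congr rfl fun k hk => ?_
      rw [Finset.mul_sum]
      refine Finset.sum_congr rfl fun i hi => mul_comm _ _
    have : s ^ 2 = (∑ i ∈ Finset.Icc 1 N, u i * ∑ k ∈ Finset.Icc (i+1) N, u k)
        + N + ∑ i ∈ Finset.Icc 1 N, u i * ∑ k ∈ Finset.Icc (i+1) N, u k := by
      rw [hsq, Finset.sum_congr rfl hsplit]
      rw [Finset.sum_add_distrib, Finset.sum_add_distrib, hswap]
      have hN : ∑ i ∈ Finset.Icc 1 N, u i * u i = N := by
        rw [Finset.sum_congr rfl (fun i _ => husq i)]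
        simp
      rw [hN]
      congr 1
      refine Finset.sum_congr rfl fun i hi => ?_
      rw [Finset.mul_sum]
    linarith [this]
  rw [hT]
  linarith [hE, hP]

end TComp
end LW
namespace LW
open Finset
set_option linter.unusedSectionVars false

section Cells
variable (f : ℕ → ℕ) (N : ℕ)

/-- the cells as a finset -/
def CFin : Finset (ℕ × ℕ) := (Finset.Icc 1 N).biUnion (fun i => {i} ×ˢ Finset.Icc 1 (f i))

end Cells

variable {f : ℕ → ℕ} {N : ℕ}

lemma mem_CFin {p : ℕ × ℕ} (hv : ∀ i, N ≤ i → f i = 0) :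
    p ∈ CFin f N ↔ (1 ≤ p.1 ∧ 1 ≤ p.2 ∧ p.2 ≤ f p.1) := by
  obtain ⟨a, b⟩ := p
  simp only [CFin, Finset.mem_biUnion, Finset.mem_product, Finset.mem_Icc,
    Finset.mem_singleton, Finset.mem_product]
  constructor
  · rintro ⟨i, hi, rfl, h2, h3⟩
    exact ⟨hi.1, h2, h3⟩
  · rintro ⟨h1, h2, h3⟩
    refine ⟨a, ⟨h1, ?_⟩, rfl, h2, h3⟩
    by_contra hc
    have := hv a (by omega); omega

lemma coe_CFin (hv : ∀ i, N ≤ i → f i = 0) : ↑(CFin f N) = cellsFn f := by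
  ext p
  rw [Finset.mem_coe, mem_CFin hv]
  rfl

lemma sum_CFin {M : Type*} [AddCommMonoid M] (g : ℕ × ℕ → M) :
    ∑ p ∈ CFin f N, g p = ∑ i ∈ Finset.Icc 1 N, ∑ j ∈ Finset.Icc 1 (f i), g (i, j) := by
  rw [CFin, Finset.sum_biUnion]
  · refine Finset.sum_congr rfl fun i _ => ?_
    rw [Finset.sum_product, Finset.sum_singleton]
  · intro x hx y hy hxy
    simp only [Function.onFun]
    rw [Finset.disjoint_left]
    intro p hp hp'
    rw [Finset.mem_product, Finset.mem_singleton] at hp hp'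
    exact hxy (hp.1 ▸ hp'.1)

lemma card_CFin : (CFin f N).card = ∑ i ∈ Finset.Icc 1 N, f i := by
  rw [Finset.card_eq_sum_ones, sum_CFin (fun _ => 1)]
  refine Finset.sum_congr rfl fun i _ => ?_
  rw [Finset.sum_const, Nat.card_Icc]
  simp

lemma s_beta_eq_s_f (hN : Even N) :
    ∑ i ∈ Finset.Icc 1 N, (-1 : ℤ) ^ beta f N i
      = ∑ i ∈ Finset.Icc 1 N, (-1 : ℤ) ^ (f i + i) := by
  refine Finset.sum_congr rfl fun i hi => ?_
  rw [Finset.mem_Icc] at hi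
  refine negpow_congr ?_
  unfold beta
  rw [Nat.even_iff] at hN
  omega

lemma two_U_eq (hN : Even N) :
    2 * ∑ i ∈ Finset.Icc 1 N, ∑ j ∈ Finset.Icc 1 (f i), (-1 : ℤ) ^ (i + j)
      = ∑ i ∈ Finset.Icc 1 N, (-1 : ℤ) ^ (f i + i) := by
  have hrow : ∀ i ∈ Finset.Icc 1 N, 2 * ∑ j ∈ Finset.Icc 1 (f i), (-1 : ℤ) ^ (i + j)
      = (-1 : ℤ) ^ (f i + i) - (-1 : ℤ) ^ i := by
    intro i _
    have h1 : ∑ j ∈ Finset.Icc 1 (f i), (-1 : ℤ) ^ (i + j)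
        = (-1 : ℤ) ^ i * ∑ j ∈ Finset.Icc 1 (f i), (-1 : ℤ) ^ j := by
      rw [Finset.mul_sum]
      exact Finset.sum_congr rfl fun j _ => by rw [pow_add]
    rw [h1, show (2 : ℤ) * ((-1 : ℤ) ^ i * ∑ j ∈ Finset.Icc 1 (f i), (-1 : ℤ) ^ j)
      = (-1 : ℤ) ^ i * (2 * ∑ j ∈ Finset.Icc 1 (f i), (-1 : ℤ) ^ j) by ring,
      two_mul_sum_Icc_negpow, mul_sub, mul_one, ← pow_add, add_comm i (f i)]
  rw [Finset.mul_sum, Finset.sum_congr rfl hrow, Finset.sum_sub_distrib,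
    sum_Icc_negpow_even hN, sub_zero]

/-- a domino-tiled finite region has zero checkerboard signed sum -/
lemma tiling_sum_zero (C : Finset (ℕ × ℕ)) :
    ∀ D : Set (Set (ℕ × ℕ)), (∀ d ∈ D, IsDomino d) → D.PairwiseDisjoint id →
      ⋃₀ D = ↑C → ∑ p ∈ C, (-1 : ℤ) ^ (p.1 + p.2) = 0 := by
  induction C using Finset.strongInduction with
  | _ C ih =>
    intro D hdom hdisj hcov
    rcases Set.eq_empty_or_nonempty D with rfl | ⟨d, hd⟩
    · rw [Set.sUnion_empty] at hcov
      have : C = ∅ := Finset.coe_injective (by rw [← hcov]; simp)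
      subst this; simp
    · obtain ⟨a, b, hab, hdab, hsum⟩ : ∃ a b : ℕ × ℕ, a ≠ b ∧ d = ({a, b} : Set (ℕ × ℕ))
          ∧ (-1 : ℤ) ^ (a.1 + a.2) + (-1 : ℤ) ^ (b.1 + b.2) = 0 := by
        obtain ⟨i, j, h | h⟩ := hdom d hd
        · refine ⟨(i, j), (i, j + 1), by simp, h, ?_⟩
          show (-1 : ℤ) ^ (i + j) + (-1 : ℤ) ^ (i + (j + 1)) = 0
          rw [show i + (j + 1) = (i + j) + 1 by omega, pow_succ]
          ring
        · refine ⟨(i, j), (i + 1, j), by simp, h, ?_⟩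
          show (-1 : ℤ) ^ (i + j) + (-1 : ℤ) ^ (i + 1 + j) = 0
          rw [show i + 1 + j = (i + j) + 1 by omega, pow_succ]
          ring
      have had : a ∈ d := by rw [hdab]; exact Set.mem_insert _ _
      have hbd : b ∈ d := by rw [hdab]; exact Set.mem_insert_of_mem _ rfl
      have hsubC : d ⊆ ↑C := by rw [← hcov]; exact Set.subset_sUnion_of_mem hd
      have haC : a ∈ C := hsubC had
      have hbC : b ∈ C := hsubC hbd
      set C' := (C.erase a).erase b with hC'
      have hbCa : b ∈ C.erase a := Finset.mem_erase.mpr ⟨fun h => hab h.symm, hbC⟩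
      have hnotin : ∀ e ∈ D, e ≠ d → a ∉ e ∧ b ∉ e := by
        intro e he hne
        have hdise : Disjoint d e := hdisj hd he (fun h => hne h.symm)
        rw [Set.disjoint_left] at hdise
        exact ⟨fun h => hdise had h, fun h => hdise hbd h⟩
      have hcov' : ⋃₀ (D \ {d}) = ↑C' := by
        ext p
        constructor
        · rintro ⟨e, he, hpe⟩
          rw [Set.mem_diff, Set.mem_singleton_iff] at he
          have hnab := hnotin e he.1 he.2
          have hpC : p ∈ C := by
            rw [← Finset.mem_coe, ← hcov]
            exact ⟨e, he.1, hpe⟩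
          rw [Finset.mem_coe, hC', Finset.mem_erase, Finset.mem_erase]
          refine ⟨?_, ?_, hpC⟩
          · intro h; subst h; exact hnab.2 hpe
          · intro h; subst h; exact hnab.1 hpe
        · intro hp
          rw [Finset.mem_coe, hC', Finset.mem_erase, Finset.mem_erase] at hp
          obtain ⟨hpb, hpa, hpC⟩ := hp
          have hpU : p ∈ ⋃₀ D := by rw [hcov]; exact hpC
          obtain ⟨e, heD, hpe⟩ := hpU
          refine ⟨e, ⟨heD, ?_⟩, hpe⟩
          intro h
          rw [Set.mem_singleton_iff] at h
          subst h
          rw [hdab] at hpe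
          simp only [Set.mem_insert_iff, Set.mem_singleton_iff] at hpe
          rcases hpe with h | h
          · exact hpa h
          · exact hpb h
      have hss : C' ⊂ C := by
        refine Finset.ssubset_iff_of_subset ?_ |>.mpr ⟨a, haC, ?_⟩
        · exact (Finset.erase_subset _ _).trans (Finset.erase_subset _ _)
        · rw [hC', Finset.mem_erase, Finset.mem_erase]
          tauto
      have hIH : ∑ p ∈ C', (-1 : ℤ) ^ (p.1 + p.2) = 0 :=
        ih C' hss (D \ {d}) (fun e he => hdom e he.1)
          (hdisj.subset Set.diff_subset) hcov'
      have h1 : ∑ p ∈ C.erase a, (-1 : ℤ) ^ (p.1 + p.2)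
          = ∑ p ∈ C, (-1 : ℤ) ^ (p.1 + p.2) - (-1 : ℤ) ^ (a.1 + a.2) := by
        rw [Finset.sum_erase_eq_sub haC]
      have h2 : ∑ p ∈ C', (-1 : ℤ) ^ (p.1 + p.2)
          = ∑ p ∈ C.erase a, (-1 : ℤ) ^ (p.1 + p.2) - (-1 : ℤ) ^ (b.1 + b.2) := by
        rw [hC', Finset.sum_erase_eq_sub hbCa]
      rw [h2, h1] at hIH
      linarith
end LW
namespace LW
open Finset
set_option linter.unusedSectionVars false

variable {f : ℕ → ℕ} {N : ℕ}

lemma sum_Icc_sub (N : ℕ) : ∑ k ∈ Finset.Icc 1 N, (N - k) = ∑ x ∈ Finset.range N, x := by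
  refine Finset.sum_bij' (i := fun k _ => N - k) (j := fun x _ => N - x) ?_ ?_ ?_ ?_ ?_
  · intro a ha
    rw [Finset.mem_Icc] at ha
    show N - a ∈ Finset.range N
    rw [Finset.mem_range]
    omega
  · intro a ha
    rw [Finset.mem_range] at ha
    show N - a ∈ Finset.Icc 1 N
    rw [Finset.mem_Icc]
    omega
  · intro a ha
    rw [Finset.mem_Icc] at ha
    show N - (N - a) = a
    omega
  · intro a ha
    rw [Finset.mem_range] at ha
    show N - (N - a) = a
    omega
  · intro a ha
    rfl

lemma exists_removable
    (hv : ∀ i, N ≤ i → f i = 0)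
    (hanti : ∀ ⦃i j : ℕ⦄, 1 ≤ i → i ≤ j → f j ≤ f i)
    (hN : Even N)
    (hM : 0 < ∑ i ∈ Finset.Icc 1 N, f i)
    (hs : ∑ i ∈ Finset.Icc 1 N, (-1 : ℤ) ^ (f i + i) = 0) :
    ∃ k, 1 ≤ k ∧ k ≤ N ∧ 2 ≤ beta f N k ∧ beta f N k - 2 ∉ BSet f N := by
  by_contra hc
  push_neg at hc
  have hB2 : ∀ b ∈ BSet f N, 2 ≤ b → b - 2 ∈ BSet f N := by
    intro b hb h2
    rw [BSet, Finset.mem_image] at hb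
    obtain ⟨k, hk, rfl⟩ := hb
    rw [Finset.mem_Icc] at hk
    exact hc k hk.1 hk.2 h2
  classical
  set Be := (BSet f N).filter (fun b => b % 2 = 0) with hBe
  set Bo := (BSet f N).filter (fun b => b % 2 = 1) with hBo
  set E := Be.card with hE
  set O := Bo.card with hO
  -- even part is an initial segment after halving
  have hhalfE : Be.image (· / 2) = Finset.range E := by
    rw [hE, ← Finset.card_image_of_injOn (f := (· / 2))]
    · apply downclosed_eq_range
      intro x hx hx0
      rw [Finset.mem_image] at hx ⊢
      obtain ⟨b, hb, rfl⟩ := hx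
      rw [hBe, Finset.mem_filter] at hb
      have hb2 : 2 ≤ b := by omega
      refine ⟨b - 2, ?_, by omega⟩
      rw [hBe, Finset.mem_filter]
      exact ⟨hB2 b hb.1 hb2, by omega⟩
    · intro a ha b hb hab
      rw [hBe, Finset.coe_filter] at ha hb
      simp only [Set.mem_setOf_eq] at ha hb
      simp only at hab
      omega
  have hhalfO : Bo.image (· / 2) = Finset.range O := by
    rw [hO, ← Finset.card_image_of_injOn (f := (· / 2))]
    · apply downclosed_eq_range
      intro x hx hx0
      rw [Finset.mem_image] at hx ⊢
      obtain ⟨b, hb, rfl⟩ := hx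
      rw [hBo, Finset.mem_filter] at hb
      have hb2 : 2 ≤ b := by omega
      refine ⟨b - 2, ?_, by omega⟩
      rw [hBo, Finset.mem_filter]
      exact ⟨hB2 b hb.1 hb2, by omega⟩
    · intro a ha b hb hab
      rw [hBo, Finset.coe_filter] at ha hb
      simp only [Set.mem_setOf_eq] at ha hb
      simp only at hab
      omega
  have hfe : (BSet f N).filter (fun b => ¬ b % 2 = 0) = Bo := by
    rw [hBo]; apply Finset.filter_congr; intro b _
    omega
  have hEON : E + O = N := by
    have hsplit := Finset.card_filter_add_card_filter_not
      (s := BSet f N) (p := fun b => b % 2 = 0)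
    rw [hfe, card_BSet hanti] at hsplit
    rw [hE, hO, hBe]
    exact hsplit
  have hEO : E = O := by
    have h1 : ∑ i ∈ Finset.Icc 1 N, (-1 : ℤ) ^ beta f N i = 0 := by
      rw [s_beta_eq_s_f hN]; exact hs
    have h2 : ∑ b ∈ BSet f N, (-1 : ℤ) ^ b = 0 := by
      rw [BSet, Finset.sum_image] at *
      · exact h1
      · intro a ha b hb hab
        exact beta_injOn hanti (by exact_mod_cast ha) (by exact_mod_cast hb) hab
    rw [← Finset.sum_filter_add_sum_filter_not (BSet f N) (fun b => b % 2 = 0)] at h2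
    have he : ∑ b ∈ (BSet f N).filter (fun b => b % 2 = 0), (-1 : ℤ) ^ b = (E : ℤ) := by
      have hone : ∀ b ∈ (BSet f N).filter (fun b => b % 2 = 0), (-1 : ℤ) ^ b = 1 := by
        intro b hb
        rw [Finset.mem_filter] at hb
        have : Even b := by rw [Nat.even_iff]; exact hb.2
        rw [this.neg_one_pow]
      rw [Finset.sum_congr rfl hone, Finset.sum_const, hE, hBe]
      simp
    have ho : ∑ b ∈ (BSet f N).filter (fun b => ¬ b % 2 = 0), (-1 : ℤ) ^ b = -(O : ℤ) := by
      have hone : ∀ b ∈ (BSet f N).filter (fun b => ¬ b % 2 = 0), (-1 : ℤ) ^ b = -1 := by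
        intro b hb
        rw [Finset.mem_filter] at hb
        have : Odd b := by rw [Nat.odd_iff]; omega
        rw [this.neg_one_pow]
      rw [Finset.sum_congr rfl hone, Finset.sum_const, hfe, hO]
      simp
    rw [he, ho] at h2
    have : (E : ℤ) = O := by linarith
    exact_mod_cast this
  -- now B = range N
  have hsub : Finset.range N ⊆ BSet f N := by
    intro x hx
    rw [Finset.mem_range] at hx
    rcases Nat.even_or_odd x with hex | hox
    · have hx2 : x / 2 ∈ Finset.range E := by
        rw [Finset.mem_range, Nat.even_iff] at *
        omega
      rw [← hhalfE, Finset.mem_image] at hx2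
      obtain ⟨b, hb, hbx⟩ := hx2
      rw [hBe, Finset.mem_filter] at hb
      have : b = x := by rw [Nat.even_iff] at hex; omega
      exact this ▸ hb.1
    · have hx2 : x / 2 ∈ Finset.range O := by
        rw [Finset.mem_range, Nat.odd_iff] at *
        omega
      rw [← hhalfO, Finset.mem_image] at hx2
      obtain ⟨b, hb, hbx⟩ := hx2
      rw [hBo, Finset.mem_filter] at hb
      have : b = x := by rw [Nat.odd_iff] at hox; omega
      exact this ▸ hb.1
  have hBeq : BSet f N = Finset.range N := by
    refine (Finset.eq_of_subset_of_card_le hsub ?_).symm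
    rw [card_BSet hanti]
    simp
  -- sum contradiction
  have hsum1 : ∑ b ∈ BSet f N, b = ∑ k ∈ Finset.Icc 1 N, beta f N k := by
    rw [BSet, Finset.sum_image]
    intro a ha b hb hab
    exact beta_injOn hanti (by exact_mod_cast ha) (by exact_mod_cast hb) hab
  have hsum2 : ∑ k ∈ Finset.Icc 1 N, beta f N k
      = (∑ k ∈ Finset.Icc 1 N, f k) + ∑ k ∈ Finset.Icc 1 N, (N - k) := by
    rw [← Finset.sum_add_distrib]
    exact Finset.sum_congr rfl fun k _ => rfl
  rw [hBeq] at hsum1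
  rw [hsum2, sum_Icc_sub] at hsum1
  rw [Finset.sum_range_id] at hsum1
  omega

end LW
namespace LW
open Finset
set_option linter.unusedSectionVars false

lemma negpow_succ_pair (a : ℕ) : (-1 : ℤ) ^ a + (-1 : ℤ) ^ (a + 1) = 0 := by
  rw [pow_succ]; ring

lemma tiling_of_balanced (N : ℕ) (hN : Even N) (M : ℕ) :
    ∀ f : ℕ → ℕ, f 0 = 0 → (∀ ⦃i j : ℕ⦄, 1 ≤ i → i ≤ j → f j ≤ f i) →
      (∀ i, N ≤ i → f i = 0) → ∑ i ∈ Finset.Icc 1 N, f i = M →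
      ∑ i ∈ Finset.Icc 1 N, (-1 : ℤ) ^ (f i + i) = 0 → HasDominoTiling f := by
  induction M using Nat.strong_induction_on with
  | _ M ih =>
  intro f h0 hanti hv hsum hs
  rcases Nat.eq_zero_or_pos M with rfl | hM
  · -- empty partition
    have hf : ∀ i, f i = 0 := by
      intro i
      rcases Nat.eq_zero_or_pos i with rfl | hi
      · exact h0
      rcases Nat.lt_or_ge N i with hiN | hiN
      · exact hv i (by omega)
      · exact Finset.sum_eq_zero_iff.mp hsum i (Finset.mem_Icc.mpr ⟨hi, hiN⟩)
    have hcells : cellsFn f = ∅ := by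
      ext p
      simp only [cellsFn, Set.mem_setOf_eq, hf, Set.mem_empty_iff_false, iff_false]
      omega
    exact ⟨∅, fun d hd => absurd hd (Set.notMem_empty d),
      Set.pairwiseDisjoint_empty, by rw [Set.sUnion_empty, hcells]⟩
  · obtain ⟨k, hk1, hkN, hb2, hbnot⟩ := exists_removable hv hanti hN (by omega) hs
    have hfN : f N = 0 := hv N le_rfl
    have hkltN : k < N := by
      rcases Nat.eq_or_lt_of_le hkN with h | h
      · exfalso; subst h; unfold beta at hb2; omega
      · exact h
    have hbmem : ∀ m, 1 ≤ m → m ≤ N → beta f N m ∈ BSet f N := fun m h1 h2 =>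
      Finset.mem_image_of_mem _ (Finset.mem_Icc.mpr ⟨h1, h2⟩)
    have hlt1 : beta f N (k + 1) < beta f N k := beta_lt hanti hk1 (by omega) (by omega)
    have hne2 : beta f N (k + 1) ≠ beta f N k - 2 := fun h =>
      hbnot (h ▸ hbmem (k + 1) (by omega) (by omega))
    by_cases hvert : beta f N (k + 1) = beta f N k - 1
    · -- vertical domino at rows k, k+1, column f k
      have hfk1 : f (k + 1) = f k := by unfold beta at hvert hb2; omega
      have hfk : 1 ≤ f k := by
        by_contra hc
        have hk2N : k + 2 ≤ N := by unfold beta at hb2; omega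
        have hf2 : f (k + 2) = 0 := by
          have := hanti (i := k + 1) (j := k + 2) (by omega) (by omega); omega
        have heq : beta f N (k + 2) = beta f N k - 2 := by unfold beta; omega
        exact hbnot (heq ▸ hbmem (k + 2) (by omega) hk2N)
      have hk1ltN : k + 1 < N := by
        by_contra hc
        have hkk : k + 1 = N := by omega
        have hz : f (k + 1) = 0 := hv (k + 1) (by omega)
        unfold beta at hvert hb2
        omega
      have hfk2 : f (k + 2) ≤ f k - 1 := by
        have hlt2 : beta f N (k + 2) < beta f N (k + 1) :=
          beta_lt hanti (by omega) (by omega) (by omega)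
        have hne2' : beta f N (k + 2) ≠ beta f N k - 2 := fun h =>
          hbnot (h ▸ hbmem (k + 2) (by omega) (by omega))
        unfold beta at hlt2 hne2' hvert hb2
        omega
      set f' := Function.update (Function.update f k (f k - 1)) (k + 1) (f k - 1) with hf'
      have hf'k : f' k = f k - 1 := by
        rw [hf', Function.update_of_ne (by omega), Function.update_self]
      have hf'k1 : f' (k + 1) = f k - 1 := by rw [hf', Function.update_self]
      have hf'other : ∀ i, i ≠ k → i ≠ k + 1 → f' i = f i := fun i h1 h2 => by
        rw [hf', Function.update_of_ne h2, Function.update_of_ne h1]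
      have h0' : f' 0 = 0 := by rw [hf'other 0 (by omega) (by omega)]; exact h0
      have hanti' : ∀ ⦃i j : ℕ⦄, 1 ≤ i → i ≤ j → f' j ≤ f' i := by
        intro i j h1 hij
        by_cases hjk : j = k
        · by_cases hik : i = k
          · rw [hik, hjk]
          · rw [hjk, hf'k, hf'other i hik (by omega)]
            have h3 := hanti h1 (show i ≤ k by omega)
            omega
        · by_cases hjk1 : j = k + 1
          · rw [hjk1, hf'k1]
            by_cases hik : i = k
            · rw [hik, hf'k]
            · by_cases hik1 : i = k + 1
              · rw [hik1, hf'k1]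
              · rw [hf'other i hik hik1]
                have h3 := hanti h1 (show i ≤ k by omega)
                omega
          · rw [hf'other j hjk hjk1]
            by_cases hik : i = k
            · rw [hik, hf'k]
              have h2 := hanti (show (1:ℕ) ≤ k + 2 by omega) (show k + 2 ≤ j by omega)
              omega
            · by_cases hik1 : i = k + 1
              · rw [hik1, hf'k1]
                have h2 := hanti (show (1:ℕ) ≤ k + 2 by omega) (show k + 2 ≤ j by omega)
                omega
              · rw [hf'other i hik hik1]
                exact hanti h1 hij
      have hv' : ∀ i, N ≤ i → f' i = 0 := by
        intro i hi
        rw [hf'other i (by omega) (by omega)]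
        exact hv i hi
      have hmem1 : k + 1 ∈ Finset.Icc 1 N := Finset.mem_Icc.mpr ⟨by omega, by omega⟩
      have hmem2 : k ∈ (Finset.Icc 1 N).erase (k + 1) :=
        Finset.mem_erase.mpr ⟨by omega, Finset.mem_Icc.mpr ⟨hk1, hkN⟩⟩
      have hsplitN : ∀ g : ℕ → ℕ, ∑ i ∈ Finset.Icc 1 N, g i
          = g (k + 1) + (g k + ∑ i ∈ ((Finset.Icc 1 N).erase (k + 1)).erase k, g i) := by
        intro g
        rw [Finset.add_sum_erase _ g hmem2, Finset.add_sum_erase _ g hmem1]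
      have hsplitZ : ∀ g : ℕ → ℤ, ∑ i ∈ Finset.Icc 1 N, g i
          = g (k + 1) + (g k + ∑ i ∈ ((Finset.Icc 1 N).erase (k + 1)).erase k, g i) := by
        intro g
        rw [Finset.add_sum_erase _ g hmem2, Finset.add_sum_erase _ g hmem1]
      have hco : ∀ i ∈ ((Finset.Icc 1 N).erase (k + 1)).erase k, f' i = f i := by
        intro i hi
        rw [Finset.mem_erase, Finset.mem_erase] at hi
        exact hf'other i hi.1 hi.2.1
      have hsum' : ∑ i ∈ Finset.Icc 1 N, f' i = M - 2 := by
        have h1 := hsplitN f'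
        have h2 := hsplitN f
        rw [hf'k, hf'k1, Finset.sum_congr rfl hco] at h1
        have h3 : (((Finset.Icc 1 N).erase (k + 1)).erase k).sum f
            = ∑ i ∈ ((Finset.Icc 1 N).erase (k + 1)).erase k, f i := rfl
        rw [h3] at h1
        omega
      have hs' : ∑ i ∈ Finset.Icc 1 N, (-1 : ℤ) ^ (f' i + i) = 0 := by
        have hco' : ∀ i ∈ ((Finset.Icc 1 N).erase (k + 1)).erase k,
            (-1 : ℤ) ^ (f' i + i) = (-1 : ℤ) ^ (f i + i) := fun i hi => by rw [hco i hi]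
        rw [hsplitZ (fun i => (-1 : ℤ) ^ (f' i + i))]
        simp only [hf'k, hf'k1]
        rw [Finset.sum_congr rfl hco']
        rw [hsplitZ (fun i => (-1 : ℤ) ^ (f i + i))] at hs
        have hz1 : (-1 : ℤ) ^ (f k - 1 + k) + (-1 : ℤ) ^ (f k - 1 + (k + 1)) = 0 := by
          rw [show f k - 1 + (k + 1) = (f k - 1 + k) + 1 by omega]
          exact negpow_succ_pair _
        have hz2 : (-1 : ℤ) ^ (f (k + 1) + (k + 1)) + (-1 : ℤ) ^ (f k + k) = 0 := by
          rw [hfk1, show f k + (k + 1) = (f k + k) + 1 by omega]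
          rw [add_comm]
          exact negpow_succ_pair _
        linarith
      set d : Set (ℕ × ℕ) := {(k, f k), (k + 1, f k)} with hd
      have hdomd : IsDomino d := ⟨k, f k, Or.inr rfl⟩
      have hcell : cellsFn f = cellsFn f' ∪ d := by
        ext ⟨i, j⟩
        simp only [cellsFn, Set.mem_setOf_eq, Set.mem_union, hd, Set.mem_insert_iff,
          Set.mem_singleton_iff, Prod.mk.injEq]
        by_cases hik : i = k
        · rw [hik, hf'k]
          omega
        · by_cases hik1 : i = k + 1
          · rw [hik1, hf'k1, hfk1]
            omega
          · rw [hf'other i hik hik1]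
            omega
      have hdnotin : ∀ p ∈ d, p ∉ cellsFn f' := by
        intro p hp
        rw [hd] at hp
        simp only [Set.mem_insert_iff, Set.mem_singleton_iff] at hp
        rcases hp with rfl | rfl
        · intro hc
          obtain ⟨_, _, h3⟩ := hc
          simp only [hf'k] at h3
          omega
        · intro hc
          obtain ⟨_, _, h3⟩ := hc
          simp only [hf'k1] at h3
          omega
      obtain ⟨D', hdomD', hdisjD', hcovD'⟩ :=
        ih (M - 2) (by omega) f' h0' hanti' hv' hsum' hs'
      refine ⟨insert d D', ?_, ?_, ?_⟩
      · intro e he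
        rcases Set.mem_insert_iff.mp he with rfl | he'
        · exact hdomd
        · exact hdomD' e he'
      · refine hdisjD'.insert ?_
        intro e he _
        rw [Set.disjoint_left]
        intro p hpd hpe
        have hpc : p ∈ cellsFn f' := by
          rw [← hcovD']
          exact ⟨e, he, hpe⟩
        exact hdnotin p hpd hpc
      · rw [Set.sUnion_insert, hcovD', hcell, Set.union_comm]
    · -- horizontal domino at row k, columns f k - 1, f k
      have hkey : f (k + 1) ≤ f k - 2 ∧ 2 ≤ f k := by
        unfold beta at hlt1 hne2 hvert hb2
        omega
      have hfk : 2 ≤ f k := hkey.2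
      set f' := Function.update f k (f k - 2) with hf'
      have hf'k : f' k = f k - 2 := by rw [hf', Function.update_self]
      have hf'other : ∀ i, i ≠ k → f' i = f i := fun i h1 => by
        rw [hf', Function.update_of_ne h1]
      have h0' : f' 0 = 0 := by rw [hf'other 0 (by omega)]; exact h0
      have hanti' : ∀ ⦃i j : ℕ⦄, 1 ≤ i → i ≤ j → f' j ≤ f' i := by
        intro i j h1 hij
        by_cases hjk : j = k
        · by_cases hik : i = k
          · rw [hik, hjk]
          · rw [hjk, hf'k, hf'other i hik]
            have h3 := hanti h1 (show i ≤ k by omega)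
            omega
        · rw [hf'other j hjk]
          by_cases hik : i = k
          · rw [hik, hf'k]
            have h2 := hanti (show (1:ℕ) ≤ k + 1 by omega) (show k + 1 ≤ j by omega)
            omega
          · rw [hf'other i hik]
            exact hanti h1 hij
      have hv' : ∀ i, N ≤ i → f' i = 0 := by
        intro i hi
        rw [hf'other i (by omega)]
        exact hv i hi
      have hmem1 : k ∈ Finset.Icc 1 N := Finset.mem_Icc.mpr ⟨hk1, hkN⟩
      have hsplitN : ∀ g : ℕ → ℕ, ∑ i ∈ Finset.Icc 1 N, g i
          = g k + ∑ i ∈ (Finset.Icc 1 N).erase k, g i := by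
        intro g
        rw [Finset.add_sum_erase _ g hmem1]
      have hsplitZ : ∀ g : ℕ → ℤ, ∑ i ∈ Finset.Icc 1 N, g i
          = g k + ∑ i ∈ (Finset.Icc 1 N).erase k, g i := by
        intro g
        rw [Finset.add_sum_erase _ g hmem1]
      have hco : ∀ i ∈ (Finset.Icc 1 N).erase k, f' i = f i := by
        intro i hi
        rw [Finset.mem_erase] at hi
        exact hf'other i hi.1
      have hsum' : ∑ i ∈ Finset.Icc 1 N, f' i = M - 2 := by
        have h1 := hsplitN f'
        have h2 := hsplitN f
        rw [hf'k, Finset.sum_congr rfl hco] at h1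
        have h3 : ((Finset.Icc 1 N).erase k).sum f
            = ∑ i ∈ (Finset.Icc 1 N).erase k, f i := rfl
        rw [h3] at h1
        omega
      have hs' : ∑ i ∈ Finset.Icc 1 N, (-1 : ℤ) ^ (f' i + i) = 0 := by
        have hco' : ∀ i ∈ (Finset.Icc 1 N).erase k,
            (-1 : ℤ) ^ (f' i + i) = (-1 : ℤ) ^ (f i + i) := fun i hi => by rw [hco i hi]
        rw [hsplitZ (fun i => (-1 : ℤ) ^ (f' i + i))]
        simp only [hf'k]
        rw [Finset.sum_congr rfl hco']
        rw [hsplitZ (fun i => (-1 : ℤ) ^ (f i + i))] at hs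
        have he : (-1 : ℤ) ^ (f k - 2 + k) = (-1 : ℤ) ^ (f k + k) := negpow_congr (by omega)
        rw [he]
        exact hs
      set d : Set (ℕ × ℕ) := {(k, f k - 1), (k, f k)} with hd
      have hdomd : IsDomino d := by
        refine ⟨k, f k - 1, Or.inl ?_⟩
        rw [hd, show f k - 1 + 1 = f k by omega]
      have hcell : cellsFn f = cellsFn f' ∪ d := by
        ext ⟨i, j⟩
        simp only [cellsFn, Set.mem_setOf_eq, Set.mem_union, hd, Set.mem_insert_iff,
          Set.mem_singleton_iff, Prod.mk.injEq]
        by_cases hik : i = k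
        · rw [hik, hf'k]
          omega
        · rw [hf'other i hik]
          omega
      have hdnotin : ∀ p ∈ d, p ∉ cellsFn f' := by
        intro p hp
        rw [hd] at hp
        simp only [Set.mem_insert_iff, Set.mem_singleton_iff] at hp
        rcases hp with rfl | rfl
        · intro hc
          obtain ⟨_, _, h3⟩ := hc
          simp only [hf'k] at h3
          omega
        · intro hc
          obtain ⟨_, _, h3⟩ := hc
          simp only [hf'k] at h3
          omega
      obtain ⟨D', hdomD', hdisjD', hcovD'⟩ :=
        ih (M - 2) (by omega) f' h0' hanti' hv' hsum' hs'
      refine ⟨insert d D', ?_, ?_, ?_⟩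
      · intro e he
        rcases Set.mem_insert_iff.mp he with rfl | he'
        · exact hdomd
        · exact hdomD' e he'
      · refine hdisjD'.insert ?_
        intro e he _
        rw [Set.disjoint_left]
        intro p hpd hpe
        have hpc : p ∈ cellsFn f' := by
          rw [← hcovD']
          exact ⟨e, he, hpe⟩
        exact hdnotin p hpd hpc
      · rw [Set.sUnion_insert, hcovD', hcell, Set.union_comm]
end LW

open LW in
/-- a partition of `2n` can be tiled by dominoes iff it has exactly `n`
even and exactly `n` odd hook lengths (counted with multiplicity over the cells). -/
theorem littlewood_two_core_iff_hooks (n : ℕ) (μ : OneIdxPartition)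
    (hsize : sizeFn μ.part = 2 * n) :
    HasDominoTiling μ.part ↔
      Set.ncard {p : ℕ × ℕ | p ∈ cellsFn μ.part ∧ Even (hookFn μ.part p.1 p.2)} = n ∧
      Set.ncard {p : ℕ × ℕ | p ∈ cellsFn μ.part ∧ Odd (hookFn μ.part p.1 p.2)} = n := by
  classical
  open LW in
  obtain ⟨N₀, hN₀⟩ := μ.finite
  set f := μ.part with hf
  set N := 2 * N₀ + 2 with hN
  have hNeven : Even N := ⟨N₀ + 1, by omega⟩
  have hv : ∀ i, N ≤ i → f i = 0 := fun i hi => hN₀ i (by omega)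
  have hanti : ∀ ⦃i j : ℕ⦄, 1 ≤ i → i ≤ j → f j ≤ f i := μ.antitone
  have h0 : f 0 = 0 := μ.part_zero
  -- total size over the window
  have hsum2n : ∑ i ∈ Finset.Icc 1 N, f i = 2 * n := by
    have hsupp : Function.support f ⊆ ↑(Finset.Icc 1 N) := by
      intro x hx
      rw [Function.mem_support] at hx
      simp only [Finset.coe_Icc, Set.mem_Icc]
      constructor
      · by_contra hc
        exact hx (by rw [show x = 0 by omega]; exact h0)
      · by_contra hc
        exact hx (hv x (by omega))
    have := finsum_eq_sum_of_support_subset f hsupp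
    rw [sizeFn] at hsize
    rw [← this]
    exact hsize
  -- the even/odd cell sets are finsets
  set Ce := (CFin f N).filter (fun p => Even (hookFn f p.1 p.2)) with hCe
  set Co := (CFin f N).filter (fun p => Odd (hookFn f p.1 p.2)) with hCo
  have hCeSet : {p : ℕ × ℕ | p ∈ cellsFn f ∧ Even (hookFn f p.1 p.2)} = ↑Ce := by
    ext p
    simp only [Set.mem_setOf_eq, hCe, Finset.coe_filter, mem_CFin hv, cellsFn]
  have hCoSet : {p : ℕ × ℕ | p ∈ cellsFn f ∧ Odd (hookFn f p.1 p.2)} = ↑Co := by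
    ext p
    simp only [Set.mem_setOf_eq, hCo, Finset.coe_filter, mem_CFin hv, cellsFn]
  have hCoCo : (CFin f N).filter (fun p => ¬ Even (hookFn f p.1 p.2)) = Co := by
    rw [hCo]
    apply Finset.filter_congr
    intro p _
    simp [Nat.not_even_iff_odd]
  have hcards : Ce.card + Co.card = 2 * n := by
    have h := Finset.card_filter_add_card_filter_not
      (s := CFin f N) (p := fun p => Even (hookFn f p.1 p.2))
    rw [hCoCo, card_CFin, hsum2n] at h
    rw [hCe]
    exact h
  -- signed hook sum in terms of the filtered cardinalities
  have hTcard : ∑ p ∈ CFin f N, (-1 : ℤ) ^ hookFn f p.1 p.2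
      = (Ce.card : ℤ) - (Co.card : ℤ) := by
    rw [← Finset.sum_filter_add_sum_filter_not (CFin f N)
      (fun p => Even (hookFn f p.1 p.2))]
    have h1 : ∑ p ∈ (CFin f N).filter (fun p => Even (hookFn f p.1 p.2)),
        (-1 : ℤ) ^ hookFn f p.1 p.2 = (Ce.card : ℤ) := by
      have hone : ∀ p ∈ (CFin f N).filter (fun p => Even (hookFn f p.1 p.2)),
          (-1 : ℤ) ^ hookFn f p.1 p.2 = 1 := by
        intro p hp
        rw [Finset.mem_filter] at hp
        exact hp.2.neg_one_pow
      rw [Finset.sum_congr rfl hone, Finset.sum_const, hCe]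
      simp
    have h2 : ∑ p ∈ (CFin f N).filter (fun p => ¬ Even (hookFn f p.1 p.2)),
        (-1 : ℤ) ^ hookFn f p.1 p.2 = -(Co.card : ℤ) := by
      have hone : ∀ p ∈ (CFin f N).filter (fun p => ¬ Even (hookFn f p.1 p.2)),
          (-1 : ℤ) ^ hookFn f p.1 p.2 = -1 := by
        intro p hp
        rw [Finset.mem_filter] at hp
        exact (Nat.not_even_iff_odd.mp hp.2).neg_one_pow
      rw [Finset.sum_congr rfl hone, Finset.sum_const, hCoCo]
      simp
    rw [h1, h2]
    ring
  -- the two key identities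
  set sf : ℤ := ∑ i ∈ Finset.Icc 1 N, (-1 : ℤ) ^ (f i + i) with hsf
  have hT2 : 2 * ∑ p ∈ CFin f N, (-1 : ℤ) ^ hookFn f p.1 p.2 = sf - sf ^ 2 := by
    rw [sum_CFin (fun p => (-1 : ℤ) ^ hookFn f p.1 p.2)]
    have := two_T_eq hv hanti
    rw [s_beta_eq_s_f hNeven] at this
    exact this
  have hU2 : 2 * ∑ p ∈ CFin f N, (-1 : ℤ) ^ (p.1 + p.2) = sf := by
    rw [sum_CFin (fun p => (-1 : ℤ) ^ (p.1 + p.2))]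
    exact two_U_eq hNeven
  rw [hCeSet, hCoSet, Set.ncard_coe_finset, Set.ncard_coe_finset]
  constructor
  · rintro ⟨D, h1, h2, h3⟩
    have hU0 : ∑ p ∈ CFin f N, (-1 : ℤ) ^ (p.1 + p.2) = 0 :=
      tiling_sum_zero (CFin f N) D h1 h2 (by rw [coe_CFin hv]; exact h3)
    have hsf0 : sf = 0 := by rw [← hU2, hU0]; ring
    have hT0 : ∑ p ∈ CFin f N, (-1 : ℤ) ^ hookFn f p.1 p.2 = 0 := by
      have := hT2
      rw [hsf0] at this
      linarith
    rw [hTcard] at hT0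
    constructor <;> [skip; skip] <;> omega
  · rintro ⟨he, ho⟩
    have hT0 : ∑ p ∈ CFin f N, (-1 : ℤ) ^ hookFn f p.1 p.2 = 0 := by
      rw [hTcard, he, ho]
      ring
    have hsf0 : sf = 0 := by
      have h2T : sf - sf ^ 2 = 0 := by rw [← hT2, hT0]; ring
      have hfac : sf * (1 - sf) = 0 := by ring_nf; linarith [h2T]
      rcases mul_eq_zero.mp hfac with h | h
      · exact h
      · exfalso
        have : sf = 1 := by linarith
        rw [this] at hU2
        omega
    exact tiling_of_balanced N hNeven (2 * n) f h0 hanti hv hsum2n (by rw [← hsf]; exact hsf0)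
end

section
/- Let m be a positive integer and let λ be a partition with at most 2m parts (padded with zeros so that λ_1, …, λ_{2m} are defined). Then the Young diagram of λ can be tiled by dominoes if and only if the sequence λ_1 + 2m − 1, λ_2 + 2m − 2, …, λ_{2m−1} + 1, λ_{2m} contains exactly m even integers and exactly m odd integers. -/
/-- A partition `λ`, 1-indexed: `λ_i = part i` for `i ≥ 1`. -/
structure PartitionOneIdx where
  part : ℕ → ℕ
  part_zero : part 0 = 0
  antitone : ∀ ⦃i j : ℕ⦄, 1 ≤ i → i ≤ j → part j ≤ part i
  finite : ∃ N : ℕ, ∀ i : ℕ, N ≤ i → part i = 0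

namespace TwoCoreAux

def Ecol : Set (ℕ × ℕ) := {p | Even (p.1 + p.2)}
def Ocol : Set (ℕ × ℕ) := {p | ¬ Even (p.1 + p.2)}

/-- balanced coloring predicate for a finite set of cells -/
def Bal (S : Set (ℕ × ℕ)) : Prop := (S ∩ Ecol).ncard = (S ∩ Ocol).ncard

lemma domino_facts {d : Set (ℕ × ℕ)} (hd : IsDomino d) :
    (d ∩ Ecol).ncard = 1 ∧ (d ∩ Ocol).ncard = 1 ∧ d.Finite ∧ d.ncard = 2 := by
  obtain ⟨i, j, h | h⟩ := hd
  · subst h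
    by_cases hp : Even (i + j)
    · have h2 : ¬ Even (i + (j + 1)) := by
        simp only [Nat.even_iff] at *; omega
      refine ⟨?_, ?_, (Set.finite_singleton _).insert _, Set.ncard_pair (by simp)⟩
      · have : ({(i, j), (i, j + 1)} : Set (ℕ × ℕ)) ∩ Ecol = {(i, j)} := by
          ext p; simp only [Set.mem_inter_iff, Set.mem_insert_iff, Set.mem_singleton_iff,
            Ecol, Set.mem_setOf_eq]
          constructor
          · rintro ⟨h1 | h1, h3⟩ <;> subst h1 <;> simp_all
          · rintro rfl; exact ⟨Or.inl rfl, hp⟩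
        rw [this, Set.ncard_singleton]
      · have : ({(i, j), (i, j + 1)} : Set (ℕ × ℕ)) ∩ Ocol = {(i, j + 1)} := by
          ext p; simp only [Set.mem_inter_iff, Set.mem_insert_iff, Set.mem_singleton_iff,
            Ocol, Set.mem_setOf_eq]
          constructor
          · rintro ⟨h1 | h1, h3⟩ <;> subst h1 <;> simp_all
          · rintro rfl; exact ⟨Or.inr rfl, h2⟩
        rw [this, Set.ncard_singleton]
    · have h2 : Even (i + (j + 1)) := by
        simp only [Nat.even_iff] at *; omega
      refine ⟨?_, ?_, (Set.finite_singleton _).insert _, Set.ncard_pair (by simp)⟩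
      · have : ({(i, j), (i, j + 1)} : Set (ℕ × ℕ)) ∩ Ecol = {(i, j + 1)} := by
          ext p; simp only [Set.mem_inter_iff, Set.mem_insert_iff, Set.mem_singleton_iff,
            Ecol, Set.mem_setOf_eq]
          constructor
          · rintro ⟨h1 | h1, h3⟩ <;> subst h1 <;> simp_all
          · rintro rfl; exact ⟨Or.inr rfl, h2⟩
        rw [this, Set.ncard_singleton]
      · have : ({(i, j), (i, j + 1)} : Set (ℕ × ℕ)) ∩ Ocol = {(i, j)} := by
          ext p; simp only [Set.mem_inter_iff, Set.mem_insert_iff, Set.mem_singleton_iff,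
            Ocol, Set.mem_setOf_eq]
          constructor
          · rintro ⟨h1 | h1, h3⟩ <;> subst h1 <;> simp_all
          · rintro rfl; exact ⟨Or.inl rfl, hp⟩
        rw [this, Set.ncard_singleton]
  · subst h
    by_cases hp : Even (i + j)
    · have h2 : ¬ Even (i + 1 + j) := by
        simp only [Nat.even_iff] at *; omega
      refine ⟨?_, ?_, (Set.finite_singleton _).insert _, Set.ncard_pair (by simp)⟩
      · have : ({(i, j), (i + 1, j)} : Set (ℕ × ℕ)) ∩ Ecol = {(i, j)} := by
          ext p; simp only [Set.mem_inter_iff, Set.mem_insert_iff, Set.mem_singleton_iff,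
            Ecol, Set.mem_setOf_eq]
          constructor
          · rintro ⟨h1 | h1, h3⟩ <;> subst h1 <;> simp_all
          · rintro rfl; exact ⟨Or.inl rfl, hp⟩
        rw [this, Set.ncard_singleton]
      · have : ({(i, j), (i + 1, j)} : Set (ℕ × ℕ)) ∩ Ocol = {(i + 1, j)} := by
          ext p; simp only [Set.mem_inter_iff, Set.mem_insert_iff, Set.mem_singleton_iff,
            Ocol, Set.mem_setOf_eq]
          constructor
          · rintro ⟨h1 | h1, h3⟩ <;> subst h1 <;> simp_all
          · rintro rfl; exact ⟨Or.inr rfl, h2⟩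
        rw [this, Set.ncard_singleton]
    · have h2 : Even (i + 1 + j) := by
        simp only [Nat.even_iff] at *; omega
      refine ⟨?_, ?_, (Set.finite_singleton _).insert _, Set.ncard_pair (by simp)⟩
      · have : ({(i, j), (i + 1, j)} : Set (ℕ × ℕ)) ∩ Ecol = {(i + 1, j)} := by
          ext p; simp only [Set.mem_inter_iff, Set.mem_insert_iff, Set.mem_singleton_iff,
            Ecol, Set.mem_setOf_eq]
          constructor
          · rintro ⟨h1 | h1, h3⟩ <;> subst h1 <;> simp_all
          · rintro rfl; exact ⟨Or.inr rfl, h2⟩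
        rw [this, Set.ncard_singleton]
      · have : ({(i, j), (i + 1, j)} : Set (ℕ × ℕ)) ∩ Ocol = {(i, j)} := by
          ext p; simp only [Set.mem_inter_iff, Set.mem_insert_iff, Set.mem_singleton_iff,
            Ocol, Set.mem_setOf_eq]
          constructor
          · rintro ⟨h1 | h1, h3⟩ <;> subst h1 <;> simp_all
          · rintro rfl; exact ⟨Or.inl rfl, hp⟩
        rw [this, Set.ncard_singleton]

end TwoCoreAux

namespace TwoCoreAux

lemma bal_union {S' d : Set (ℕ × ℕ)} (hS' : S'.Finite) (hd : IsDomino d)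
    (hdis : Disjoint S' d) :
    ((S' ∪ d) ∩ Ecol).ncard = (S' ∩ Ecol).ncard + 1 ∧
    ((S' ∪ d) ∩ Ocol).ncard = (S' ∩ Ocol).ncard + 1 := by
  obtain ⟨hE, hO, hfin, _⟩ := domino_facts hd
  constructor
  · rw [Set.union_inter_distrib_right, Set.ncard_union_eq
      (Set.disjoint_of_subset Set.inter_subset_left Set.inter_subset_left hdis)
      (hS'.inter_of_left _) (hfin.inter_of_left _), hE]
  · rw [Set.union_inter_distrib_right, Set.ncard_union_eq
      (Set.disjoint_of_subset Set.inter_subset_left Set.inter_subset_left hdis)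
      (hS'.inter_of_left _) (hfin.inter_of_left _), hO]

lemma tiled_bal : ∀ n (S : Set (ℕ × ℕ)) (D : Set (Set (ℕ × ℕ))), S.Finite → S.ncard ≤ n →
    (∀ d ∈ D, IsDomino d) → D.PairwiseDisjoint id → ⋃₀ D = S → Bal S := by
  intro n
  induction n with
  | zero =>
    intro S D hfin hcard _ _ _
    have : S = ∅ := by
      rw [← Set.ncard_eq_zero hfin]; omega
    subst this
    simp [Bal]
  | succ n ih =>
    intro S D hfin hcard hdom hpair hU
    rcases Set.eq_empty_or_nonempty S with rfl | ⟨p, hp⟩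
    · simp [Bal]
    · have hp' : p ∈ ⋃₀ D := hU ▸ hp
      obtain ⟨d, hdD, hpd⟩ := hp'
      have hdS : d ⊆ S := hU ▸ Set.subset_sUnion_of_mem hdD
      obtain ⟨_, _, hdfin, hd2⟩ := domino_facts (hdom d hdD)
      have hU' : ⋃₀ (D \ {d}) = S \ d := by
        ext x
        constructor
        · rintro ⟨d', ⟨hd'D, hd'ne⟩, hxd'⟩
          refine ⟨hU ▸ Set.subset_sUnion_of_mem hd'D hxd', ?_⟩
          intro hxd
          have : Disjoint d' d := hpair hd'D hdD (by simpa using hd'ne)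
          exact Set.disjoint_left.mp this hxd' hxd
        · rintro ⟨hxS, hxd⟩
          obtain ⟨d', hd'D, hxd'⟩ := hU ▸ hxS
          exact ⟨d', ⟨hd'D, fun h => hxd (by simpa using h ▸ hxd')⟩, hxd'⟩
      have hcard' : (S \ d).ncard ≤ n := by
        rw [Set.ncard_diff hdS hdfin, hd2]
        have := Set.ncard_le_ncard hdS hfin
        omega
      have hbal' : Bal (S \ d) := ih (S \ d) (D \ {d}) hfin.diff hcard'
        (fun d' hd' => hdom d' hd'.1) (hpair.subset Set.diff_subset) hU'
      have hSeq : S = (S \ d) ∪ d := (Set.diff_union_of_subset hdS).symm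
      obtain ⟨h1, h2⟩ := bal_union hfin.diff (hdom d hdD)
        (Set.disjoint_sdiff_left)
      unfold Bal
      rw [hSeq, h1, h2, hbal']

end TwoCoreAux

namespace TwoCoreAux

open Finset

/-- number of even numbers in `Icc 1 n` -/
lemma card_even_Icc (n : ℕ) : ((Finset.Icc 1 n).filter (fun i => Even i)).card = n / 2 := by
  induction n with
  | zero => simp
  | succ n ih =>
    rw [← Finset.insert_Icc_right_eq_Icc_add_one (by omega), Finset.filter_insert]
    by_cases h : Even (n + 1)
    · rw [if_pos h, Finset.card_insert_of_notMem (by simp), ih]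
      simp only [Nat.even_iff] at h
      omega
    · rw [if_neg h, ih]
      simp only [Nat.even_iff] at h
      omega

lemma row_diff (i : ℕ) (n : ℕ) :
    (((Finset.Icc 1 n).filter (fun j => Even (i + j))).card : ℤ) -
      (((Finset.Icc 1 n).filter (fun j => ¬ Even (i + j))).card : ℤ) =
    if Even n then 0 else if Even i then -1 else 1 := by
  induction n with
  | zero => simp
  | succ n ih =>
    rw [← Finset.insert_Icc_right_eq_Icc_add_one (by omega), Finset.filter_insert, Finset.filter_insert]
    by_cases h : Even (i + (n + 1))
    · rw [if_pos h, if_neg (by simpa using h), Finset.card_insert_of_notMem (by simp)]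
      push_cast
      rw [show ((((Finset.Icc 1 n).filter (fun j => Even (i + j))).card : ℤ) + 1) -
        (((Finset.Icc 1 n).filter (fun j => ¬ Even (i + j))).card : ℤ) =
        ((((Finset.Icc 1 n).filter (fun j => Even (i + j))).card : ℤ) -
        (((Finset.Icc 1 n).filter (fun j => ¬ Even (i + j))).card : ℤ)) + 1 by ring, ih]
      simp only [Nat.even_iff] at h ⊢
      split_ifs <;> omega
    · rw [if_neg h, if_pos h, Finset.card_insert_of_notMem (by simp)]
      push_cast
      rw [show ((((Finset.Icc 1 n).filter (fun j => Even (i + j))).card : ℤ)) -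
        ((((Finset.Icc 1 n).filter (fun j => ¬ Even (i + j))).card : ℤ) + 1) =
        ((((Finset.Icc 1 n).filter (fun j => Even (i + j))).card : ℤ) -
        (((Finset.Icc 1 n).filter (fun j => ¬ Even (i + j))).card : ℤ)) - 1 by ring, ih]
      simp only [Nat.even_iff] at h ⊢
      split_ifs <;> omega

/-- the cells as a Finset -/
noncomputable def cellsF (m : ℕ) (f : ℕ → ℕ) : Finset (ℕ × ℕ) :=
  (Finset.Icc 1 (2 * m)).biUnion (fun i => (Finset.Icc 1 (f i)).image (fun j => (i, j)))

lemma cells_eq (m : ℕ) (f : ℕ → ℕ) (hz : ∀ i, 2 * m + 1 ≤ i → f i = 0) :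
    cellsFn f = ↑(cellsF m f) := by
  ext ⟨i, j⟩
  simp only [cellsFn, Set.mem_setOf_eq, cellsF, Finset.coe_biUnion, Finset.mem_coe,
    Finset.mem_Icc, Set.mem_iUnion, Finset.coe_image, Set.mem_image, Finset.mem_coe]
  constructor
  · rintro ⟨h1, h2, h3⟩
    have hi : i ≤ 2 * m := by
      by_contra hc
      have := hz i (by omega)
      omega
    exact ⟨i, ⟨h1, hi⟩, j, by simp [Finset.mem_Icc]; omega⟩
  · rintro ⟨i', ⟨h1, h2⟩, j', hj', heq⟩
    cases heq
    exact ⟨h1, hj'.1, hj'.2⟩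


end TwoCoreAux

namespace TwoCoreAux

open Finset

lemma card_filter_cells (m : ℕ) (f : ℕ → ℕ) (p : ℕ × ℕ → Prop) [DecidablePred p] :
    ((cellsF m f).filter p).card =
      ∑ i ∈ Finset.Icc 1 (2 * m), ((Finset.Icc 1 (f i)).filter (fun j => p (i, j))).card := by
  classical
  rw [cellsF, Finset.filter_biUnion, Finset.card_biUnion]
  · apply Finset.sum_congr rfl
    intro i _
    rw [Finset.filter_image, Finset.card_image_of_injective]
    intro a b h
    exact (Prod.mk.injEq _ _ _ _ ▸ h).2
  · intro x _ y _ hxy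
    simp only [Finset.disjoint_left, Finset.mem_filter, Finset.mem_image]
    rintro a ⟨⟨j, _, rfl⟩, _⟩ ⟨⟨j', _, h⟩, _⟩
    exact hxy ((Prod.mk.injEq _ _ _ _ ▸ h).1.symm)

lemma count_lemma (m : ℕ) (f : ℕ → ℕ) :
    (((Finset.Icc 1 (2 * m)).filter (fun i => Even (f i + 2 * m - i))).card = m) ↔
    ((Finset.Icc 1 (2 * m)).filter (fun i => ¬ Even i ∧ ¬ Even (f i))).card =
      ((Finset.Icc 1 (2 * m)).filter (fun i => Even i ∧ ¬ Even (f i))).card := by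
  classical
  set s := Finset.Icc 1 (2 * m) with hs
  have hcong : s.filter (fun i => Even (f i + 2 * m - i)) =
      s.filter (fun i => (Even i ↔ Even (f i))) := by
    apply Finset.filter_congr
    intro i hi
    rw [hs, Finset.mem_Icc] at hi
    simp only [Nat.even_iff]
    omega
  have hm' : (s.filter (fun i => Even i)).card = m := by
    rw [hs, card_even_Icc]; omega
  have h1 : (s.filter (fun i => Even i ∧ Even (f i))).card +
      (s.filter (fun i => Even i ∧ ¬ Even (f i))).card = m := by
    rw [← hm', ← Finset.filter_filter, ← Finset.filter_filter]
    exact Finset.card_filter_add_card_filter_not (fun i => Even (f i))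
  have h2 : (s.filter (fun i => (Even i ↔ Even (f i)))).card =
      (s.filter (fun i => Even i ∧ Even (f i))).card +
      (s.filter (fun i => ¬ Even i ∧ ¬ Even (f i))).card := by
    have := Finset.card_filter_add_card_filter_not
      (s := s.filter (fun i => (Even i ↔ Even (f i)))) (fun i => Even i)
    rw [Finset.filter_filter, Finset.filter_filter] at this
    rw [← this]
    congr 1
    · apply congrArg
      apply Finset.filter_congr
      intro i _; constructor
      · rintro ⟨h, h'⟩; exact ⟨h', h.mp h'⟩
      · rintro ⟨h, h'⟩; exact ⟨⟨fun _ => h', fun _ => h⟩, h⟩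
    · apply congrArg
      apply Finset.filter_congr
      intro i _; constructor
      · rintro ⟨h, h'⟩; exact ⟨h', fun he => h' (h.mpr he)⟩
      · rintro ⟨h, h'⟩; exact ⟨⟨fun he => absurd he h, fun he => absurd he h'⟩, h⟩
  rw [hcong, h2]
  omega

lemma bal_iff_beta (m : ℕ) (f : ℕ → ℕ) (hz : ∀ i, 2 * m + 1 ≤ i → f i = 0) :
    Bal (cellsFn f) ↔
      (((Finset.Icc 1 (2 * m)).filter (fun i => Even (f i + 2 * m - i))).card = m) := by
  classical
  rw [Bal, cells_eq m f hz, count_lemma]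
  have hE : ((cellsF m f : Set (ℕ × ℕ)) ∩ Ecol).ncard =
      ((cellsF m f).filter (fun p => Even (p.1 + p.2))).card := by
    rw [← Set.ncard_coe_finset]
    congr 1
    ext p
    simp [Ecol]
  have hO : ((cellsF m f : Set (ℕ × ℕ)) ∩ Ocol).ncard =
      ((cellsF m f).filter (fun p => ¬ Even (p.1 + p.2))).card := by
    rw [← Set.ncard_coe_finset]
    congr 1
    ext p
    simp [Ocol]
  rw [hE, hO, card_filter_cells, card_filter_cells]
  refine Iff.trans (Nat.cast_inj (R := ℤ)).symm ?_
  push_cast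
  rw [← sub_eq_zero, ← Finset.sum_sub_distrib,
    Finset.sum_congr rfl (fun i _ => row_diff i (f i))]
  have hterm : ∀ i : ℕ, (if Even (f i) then (0:ℤ) else if Even i then -1 else 1) =
      (if (¬ Even i ∧ ¬ Even (f i)) then (1:ℤ) else 0) -
      (if (Even i ∧ ¬ Even (f i)) then (1:ℤ) else 0) := by
    intro i
    by_cases h1 : Even (f i) <;> by_cases h2 : Even i <;> simp [h1, h2]
  rw [Finset.sum_congr rfl (fun i _ => hterm i), Finset.sum_sub_distrib,
    Finset.sum_boole, Finset.sum_boole, sub_eq_zero]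
  exact Nat.cast_inj

end TwoCoreAux

namespace TwoCoreAux

open Finset

def Hrem (f : ℕ → ℕ) (k : ℕ) : Prop := 2 ≤ f k ∧ f (k+1) + 2 ≤ f k
def Vrem (f : ℕ → ℕ) (k : ℕ) : Prop := 1 ≤ f k ∧ f k = f (k+1) ∧ f (k+2) < f k

lemma staircase_of_no_removable (f : ℕ → ℕ)
    (hanti : ∀ ⦃i j : ℕ⦄, 1 ≤ i → i ≤ j → f j ≤ f i)
    (hfin : ∃ N : ℕ, ∀ i : ℕ, N ≤ i → f i = 0)
    (hno : ∀ k, 1 ≤ k → ¬ Hrem f k ∧ ¬ Vrem f k) :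
    ∀ i, 1 ≤ i → f i = f 1 + 1 - i := by
  have hchain : ∀ i, 1 ≤ i → 0 < f i → f i = f (i+1) → False := by
    intro i hi hpos heq
    obtain ⟨N, hN⟩ := hfin
    have key : ∀ t, f (i + t) = f i ∧ f (i + t + 1) = f i := by
      intro t
      induction t with
      | zero => exact ⟨rfl, heq.symm⟩
      | succ t ih =>
        have h1 : f (i + t) = f i := ih.1
        have h2 : f (i + t + 1) = f i := ih.2
        have hV := (hno (i + t) (by omega)).2
        rw [Vrem] at hV
        have h3 : ¬ f (i + t + 2) < f (i + t) := fun hc => hV ⟨by omega, by omega, hc⟩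
        have h4 : f (i + t + 2) ≤ f i := hanti hi (by omega)
        show f (i + t + 1) = f i ∧ f (i + t + 1 + 1) = f i
        refine ⟨h2, ?_⟩
        have : f (i + t + 1 + 1) = f (i + t + 2) := by ring_nf
        omega
    have h5 := (key (N + 1)).1
    have h6 := hN (i + (N + 1)) (by omega)
    omega
  have hstep : ∀ i, 1 ≤ i → 0 < f i → f i = f (i+1) + 1 := by
    intro i hi hpos
    have hle : f (i+1) ≤ f i := hanti hi (by omega)
    have hH := (hno i hi).1
    rw [Hrem] at hH
    have hne : f i ≠ f (i+1) := fun h => hchain i hi hpos h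
    omega
  intro i hi
  induction i, hi using Nat.le_induction with
  | base => omega
  | succ n hn ihn =>
    by_cases hp : 0 < f n
    · have := hstep n hn hp
      omega
    · have h1 : f (n+1) ≤ f n := hanti hn (by omega)
      omega

lemma staircase_not_beta (m k : ℕ) (hk : 1 ≤ k) (hk2 : k ≤ 2 * m) (f : ℕ → ℕ)
    (hf : ∀ i, 1 ≤ i → f i = k + 1 - i) :
    ((Finset.Icc 1 (2 * m)).filter (fun i => Even (f i + 2 * m - i))).card ≠ m := by
  classical
  have hsplit : Finset.Icc 1 (2 * m) = Finset.Icc 1 k ∪ Finset.Icc (k+1) (2 * m) := by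
    ext x; simp only [Finset.mem_Icc, Finset.mem_union]; omega
  have hdisj : Disjoint (Finset.Icc 1 k) (Finset.Icc (k+1) (2 * m)) := by
    rw [Finset.disjoint_left]
    intro a ha hb
    simp only [Finset.mem_Icc] at ha hb
    omega
  rw [hsplit, Finset.filter_union,
    Finset.card_union_of_disjoint (Finset.disjoint_filter_filter hdisj)]
  have h1 : (Finset.Icc 1 k).filter (fun i => Even (f i + 2 * m - i)) =
      (Finset.Icc 1 k).filter (fun _ => Even (k + 1)) := by
    apply Finset.filter_congr
    intro i hi
    rw [Finset.mem_Icc] at hi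
    rw [hf i hi.1]
    simp only [Nat.even_iff]
    omega
  have h2 : (Finset.Icc (k+1) (2 * m)).filter (fun i => Even (f i + 2 * m - i)) =
      (Finset.Icc (k+1) (2 * m)).filter (fun i => Even i) := by
    apply Finset.filter_congr
    intro i hi
    rw [Finset.mem_Icc] at hi
    rw [hf i (by omega)]
    simp only [Nat.even_iff]
    omega
  have h3 : ((Finset.Icc (k+1) (2 * m)).filter (fun i => Even i)).card = m - k / 2 := by
    have h4 : ((Finset.Icc 1 (2*m)).filter (fun i => Even i)).card =
        ((Finset.Icc 1 k).filter (fun i => Even i)).card +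
        ((Finset.Icc (k+1) (2*m)).filter (fun i => Even i)).card := by
      rw [hsplit, Finset.filter_union,
        Finset.card_union_of_disjoint (Finset.disjoint_filter_filter hdisj)]
    rw [card_even_Icc, card_even_Icc] at h4
    omega
  rw [h1, h2, h3, Finset.filter_const]
  split_ifs with hev
  · simp only [Nat.card_Icc]
    simp only [Nat.even_iff] at hev
    omega
  · simp only [Finset.card_empty]
    rw [Nat.not_even_iff] at hev
    omega

lemma bal_of_union {S' d : Set (ℕ × ℕ)} (hS' : S'.Finite) (hd : IsDomino d)
    (hdis : Disjoint S' d) (hbal : Bal (S' ∪ d)) : Bal S' := by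
  obtain ⟨h1, h2⟩ := bal_union hS' hd hdis
  unfold Bal at *
  omega

lemma cells_finite (m : ℕ) (f : ℕ → ℕ) (hz : ∀ i, 2 * m + 1 ≤ i → f i = 0) :
    (cellsFn f).Finite := by
  rw [cells_eq m f hz]
  exact (cellsF m f).finite_toSet

end TwoCoreAux

namespace TwoCoreAux

open Finset

lemma cells_empty (f : ℕ → ℕ) (h : ∀ i, 1 ≤ i → f i = 0) : cellsFn f = ∅ := by
  ext ⟨i, j⟩
  simp only [cellsFn, Set.mem_setOf_eq, Set.mem_empty_iff_false, iff_false, not_and]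
  intro hi hj
  rw [h i hi]
  omega

lemma build (m : ℕ) : ∀ N : ℕ, ∀ f : ℕ → ℕ,
    (∀ ⦃i j : ℕ⦄, 1 ≤ i → i ≤ j → f j ≤ f i) →
    (∀ i, 2 * m + 1 ≤ i → f i = 0) →
    (∑ i ∈ Finset.Icc 1 (2 * m), f i ≤ N) →
    Bal (cellsFn f) → HasDominoTiling f := by
  intro N
  induction N with
  | zero =>
    intro f hanti hz hsum _
    have hall : ∀ i, 1 ≤ i → f i = 0 := by
      intro i hi
      by_cases hle : i ≤ 2 * m
      · exact Finset.sum_eq_zero_iff_of_nonneg (fun i _ => Nat.zero_le _) |>.mp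
          (Nat.le_zero.mp hsum) i (Finset.mem_Icc.mpr ⟨hi, hle⟩)
      · exact hz i (by omega)
    exact ⟨∅, by simp, by simp [Set.PairwiseDisjoint, Set.Pairwise], by
      rw [Set.sUnion_empty, cells_empty f hall]⟩
  | succ N ih =>
    intro f hanti hz hsum hbal
    by_cases hall : ∀ i, 1 ≤ i → f i = 0
    · exact ⟨∅, by simp, by simp [Set.PairwiseDisjoint, Set.Pairwise], by
        rw [Set.sUnion_empty, cells_empty f hall]⟩
    · push_neg at hall
      obtain ⟨i0, hi0, hfi0⟩ := hall
      by_cases hrem : ∃ k, 1 ≤ k ∧ (Hrem f k ∨ Vrem f k)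
      · obtain ⟨k, hk1, hk⟩ := hrem
        rcases hk with hH | hV
        · -- horizontal domino removal
          obtain ⟨hfk2, hfk1⟩ := hH
          have hk2m : k ≤ 2 * m := by
            by_contra hc
            have := hz k (by omega)
            omega
          set f' : ℕ → ℕ := fun i => if i = k then f k - 2 else f i with hf'
          have hf'k : f' k = f k - 2 := by simp [hf']
          have hf'ne : ∀ i, i ≠ k → f' i = f i := fun i h => by simp [hf', h]
          set d : Set (ℕ × ℕ) := {(k, f k - 1), (k, f k)} with hd
          have hdom : IsDomino d := by
            refine ⟨k, f k - 1, Or.inl ?_⟩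
            rw [hd, show f k - 1 + 1 = f k by omega]
          have hanti' : ∀ ⦃i j : ℕ⦄, 1 ≤ i → i ≤ j → f' j ≤ f' i := by
            intro i j hi hij
            by_cases h1 : i = k <;> by_cases h2 : j = k
            · rw [h1, h2]
            · rw [h1, hf'k, hf'ne j h2]
              have hj : k + 1 ≤ j := by omega
              have := hanti (show (1:ℕ) ≤ k + 1 by omega) hj
              omega
            · rw [h2, hf'k, hf'ne i h1]
              have := hanti hi (show i ≤ k by omega)
              omega
            · rw [hf'ne i h1, hf'ne j h2]
              exact hanti hi hij
          have hz' : ∀ i, 2 * m + 1 ≤ i → f' i = 0 := by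
            intro i hi
            rw [hf'ne i (by omega)]
            exact hz i hi
          have hkmem : k ∈ Finset.Icc 1 (2 * m) := Finset.mem_Icc.mpr ⟨hk1, hk2m⟩
          have hsum' : ∑ i ∈ Finset.Icc 1 (2 * m), f' i + 2 = ∑ i ∈ Finset.Icc 1 (2 * m), f i := by
            rw [← Finset.add_sum_erase _ f hkmem, ← Finset.add_sum_erase _ f' hkmem]
            have he : ∑ i ∈ (Finset.Icc 1 (2 * m)).erase k, f' i =
                ∑ i ∈ (Finset.Icc 1 (2 * m)).erase k, f i :=
              Finset.sum_congr rfl (fun i hi => hf'ne i (Finset.ne_of_mem_erase hi))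
            rw [he, hf'k]
            omega
          have hcells : cellsFn f = cellsFn f' ∪ d := by
            ext ⟨i, j⟩
            simp only [cellsFn, Set.mem_setOf_eq, Set.mem_union, hd, Set.mem_insert_iff,
              Set.mem_singleton_iff, Prod.mk.injEq]
            by_cases h : i = k
            · rw [h, hf'k]
              omega
            · rw [hf'ne i h]
              omega
          have hdisj : Disjoint (cellsFn f') d := by
            rw [Set.disjoint_right]
            rintro p (rfl | rfl) <;>
            · simp only [cellsFn, Set.mem_setOf_eq]
              rw [hf'k]
              omega
          have hbal' : Bal (cellsFn f') :=
            bal_of_union (cells_finite m f' hz') hdom hdisj (hcells ▸ hbal)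
          obtain ⟨D', hD1, hD2, hD3⟩ := ih f' hanti' hz' (by omega) hbal'
          refine ⟨insert d D', ?_, ?_, ?_⟩
          · rintro d'' (rfl | h)
            · exact hdom
            · exact hD1 d'' h
          · refine hD2.insert ?_
            intro d' hd' _
            have hsub : (d' : Set (ℕ × ℕ)) ⊆ cellsFn f' := hD3 ▸ Set.subset_sUnion_of_mem hd'
            exact hdisj.symm.mono_right hsub
          · rw [Set.sUnion_insert, hD3, Set.union_comm, hcells]
        · -- vertical domino removal
          obtain ⟨hfk1, hfkeq, hfk2⟩ := hV
          have hk12m : k + 1 ≤ 2 * m := by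
            by_contra hc
            have := hz (k + 1) (by omega)
            omega
          set f' : ℕ → ℕ := fun i => if i = k ∨ i = k + 1 then f k - 1 else f i with hf'
          have hf'k : f' k = f k - 1 := by simp [hf']
          have hf'k1 : f' (k + 1) = f k - 1 := by simp [hf']
          have hf'ne : ∀ i, i ≠ k → i ≠ k + 1 → f' i = f i := fun i h h' => by
            simp [hf', h, h']
          set d : Set (ℕ × ℕ) := {(k, f k), (k + 1, f k)} with hd
          have hdom : IsDomino d := ⟨k, f k, Or.inr rfl⟩
          have hv : ∀ i, i = k ∨ i = k + 1 → f' i = f k - 1 := by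
            rintro i (rfl | rfl)
            exacts [hf'k, hf'k1]
          have hanti' : ∀ ⦃i j : ℕ⦄, 1 ≤ i → i ≤ j → f' j ≤ f' i := by
            intro i j hi hij
            by_cases h1 : i = k ∨ i = k + 1 <;> by_cases h2 : j = k ∨ j = k + 1
            · rw [hv i h1, hv j h2]
            · push_neg at h2
              rw [hv i h1, hf'ne j h2.1 h2.2]
              have hj : k + 2 ≤ j := by omega
              have := hanti (show (1:ℕ) ≤ k + 2 by omega) hj
              omega
            · push_neg at h1
              rw [hf'ne i h1.1 h1.2, hv j h2]
              have hik : i ≤ k := by omega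
              have := hanti hi hik
              omega
            · push_neg at h1
              push_neg at h2
              rw [hf'ne i h1.1 h1.2, hf'ne j h2.1 h2.2]
              exact hanti hi hij
          have hz' : ∀ i, 2 * m + 1 ≤ i → f' i = 0 := by
            intro i hi
            rw [hf'ne i (by omega) (by omega)]
            exact hz i hi
          have hkmem : k ∈ Finset.Icc 1 (2 * m) := Finset.mem_Icc.mpr ⟨hk1, by omega⟩
          have hk1mem : k + 1 ∈ (Finset.Icc 1 (2 * m)).erase k := by
            rw [Finset.mem_erase]
            exact ⟨by omega, Finset.mem_Icc.mpr ⟨by omega, hk12m⟩⟩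
          have hsum' : ∑ i ∈ Finset.Icc 1 (2 * m), f' i + 2 = ∑ i ∈ Finset.Icc 1 (2 * m), f i := by
            rw [← Finset.add_sum_erase _ f hkmem, ← Finset.add_sum_erase _ f' hkmem,
              ← Finset.add_sum_erase _ f hk1mem, ← Finset.add_sum_erase _ f' hk1mem]
            have he : ∑ i ∈ ((Finset.Icc 1 (2 * m)).erase k).erase (k + 1), f' i =
                ∑ i ∈ ((Finset.Icc 1 (2 * m)).erase k).erase (k + 1), f i :=
              Finset.sum_congr rfl (fun i hi => by
                rw [Finset.mem_erase, Finset.mem_erase] at hi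
                exact hf'ne i hi.2.1 hi.1)
            rw [he, hf'k, hf'k1]
            omega
          have hcells : cellsFn f = cellsFn f' ∪ d := by
            ext ⟨i, j⟩
            simp only [cellsFn, Set.mem_setOf_eq, Set.mem_union, hd, Set.mem_insert_iff,
              Set.mem_singleton_iff, Prod.mk.injEq]
            by_cases h : i = k
            · rw [h, hf'k]
              omega
            · by_cases h' : i = k + 1
              · rw [h', hf'k1]
                omega
              · rw [hf'ne i h h']
                omega
          have hdisj : Disjoint (cellsFn f') d := by
            rw [Set.disjoint_right]
            rintro p (rfl | rfl)
            · simp only [cellsFn, Set.mem_setOf_eq]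
              rw [hf'k]
              omega
            · simp only [cellsFn, Set.mem_setOf_eq]
              rw [hf'k1]
              omega
          have hbal' : Bal (cellsFn f') :=
            bal_of_union (cells_finite m f' hz') hdom hdisj (hcells ▸ hbal)
          obtain ⟨D', hD1, hD2, hD3⟩ := ih f' hanti' hz' (by omega) hbal'
          refine ⟨insert d D', ?_, ?_, ?_⟩
          · rintro d'' (rfl | h)
            · exact hdom
            · exact hD1 d'' h
          · refine hD2.insert ?_
            intro d' hd' _
            have hsub : (d' : Set (ℕ × ℕ)) ⊆ cellsFn f' := hD3 ▸ Set.subset_sUnion_of_mem hd'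
            exact hdisj.symm.mono_right hsub
          · rw [Set.sUnion_insert, hD3, Set.union_comm, hcells]
      · -- no removable domino: staircase, contradiction with Bal
        exfalso
        push_neg at hrem
        have hno : ∀ k, 1 ≤ k → ¬ Hrem f k ∧ ¬ Vrem f k := by
          intro k hk
          have := hrem k hk
          tauto
        have hst := staircase_of_no_removable f hanti ⟨2 * m + 1, hz⟩ hno
        have hf1 : 1 ≤ f 1 := by
          have := hanti (i := 1) (j := i0) le_rfl hi0
          omega
        have hf12m : f 1 ≤ 2 * m := by
          by_contra hc
          have h1 := hst (f 1) (by omega)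
          have h2 := hz (f 1) (by omega)
          omega
        exact staircase_not_beta m (f 1) hf1 hf12m f hst
          ((bal_iff_beta m f hz).mp hbal)

end TwoCoreAux

/-- for a partition `λ` with at most `2m` parts, the Young diagram of `λ`
can be tiled by dominoes iff the sequence `λ_i + 2m − i`, `1 ≤ i ≤ 2m`, contains exactly
`m` even and exactly `m` odd integers. -/
theorem two_core_iff_beta_numbers (m : ℕ) (hm : 0 < m) (μ : PartitionOneIdx)
    (hlen : μ.part (2 * m + 1) = 0) :
    HasDominoTiling μ.part ↔
      ((Finset.Icc 1 (2 * m)).filter (fun i => Even (μ.part i + 2 * m - i))).card = m ∧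
      ((Finset.Icc 1 (2 * m)).filter (fun i => Odd (μ.part i + 2 * m - i))).card = m := by
  classical
  have hz : ∀ i, 2 * m + 1 ≤ i → μ.part i = 0 := fun i hi =>
    Nat.le_zero.mp (hlen ▸ μ.antitone (by omega) hi)
  constructor
  · rintro ⟨D, h1, h2, h3⟩
    have hfin := TwoCoreAux.cells_finite m μ.part hz
    have hbal : TwoCoreAux.Bal (cellsFn μ.part) :=
      TwoCoreAux.tiled_bal (cellsFn μ.part).ncard _ D hfin le_rfl h1 h2 h3
    have hbeta := (TwoCoreAux.bal_iff_beta m μ.part hz).mp hbal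
    refine ⟨hbeta, ?_⟩
    have hcongr : (Finset.Icc 1 (2 * m)).filter (fun i => Odd (μ.part i + 2 * m - i)) =
        (Finset.Icc 1 (2 * m)).filter (fun i => ¬ Even (μ.part i + 2 * m - i)) := by
      apply Finset.filter_congr
      intro i _
      simp only [Nat.odd_iff, Nat.even_iff]
      omega
    rw [hcongr]
    have hsplit := Finset.card_filter_add_card_filter_not
      (s := Finset.Icc 1 (2 * m)) (fun i => Even (μ.part i + 2 * m - i))
    rw [Nat.card_Icc] at hsplit
    omega
  · rintro ⟨h1, _⟩
    exact TwoCoreAux.build m (∑ i ∈ Finset.Icc 1 (2 * m), μ.part i) μ.part μ.antitone hz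
      le_rfl ((TwoCoreAux.bal_iff_beta m μ.part hz).mpr h1)
end

section
/- Let λ be a partition with empty 2-core. Then b(λ) ≥ 0, and b(λ) = 0 if and only if every part of λ is even. -/
/-- A partition `λ`, 1-indexed: `λ_i = part i` for `i ≥ 1`. -/
structure IdxPartition where
  part : ℕ → ℕ
  part_zero : part 0 = 0
  antitone : ∀ ⦃i j : ℕ⦄, 1 ≤ i → i ≤ j → part j ≤ part i
  finite : ∃ N : ℕ, ∀ i : ℕ, N ≤ i → part i = 0

namespace BAux
open Finset

structure Ctx (f : ℕ → ℕ) (m : ℕ) : Prop where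
  anti : ∀ ⦃i j : ℕ⦄, 1 ≤ i → i ≤ j → f j ≤ f i
  pos : ∀ i, 1 ≤ i → i ≤ m → 1 ≤ f i
  zero : ∀ i, m < i → f i = 0
  z0 : f 0 = 0

/-- sign of beta number -/
noncomputable def sfn (f : ℕ → ℕ) (m k : ℕ) : ℤ := (-1) ^ (f k + (m - k))
/-- prefix sums of signs -/
noncomputable def Pfn (f : ℕ → ℕ) (m r : ℕ) : ℤ := ∑ k ∈ Finset.Ico 1 r, sfn f m k
/-- total sign sum -/
noncomputable def Tv (f : ℕ → ℕ) (m : ℕ) : ℤ := Pfn f m (m + 1)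
/-- the nonnegative quadratic weight -/
noncomputable def qfn (f : ℕ → ℕ) (m r : ℕ) : ℤ :=
  (Pfn f m r - Tv f m) * (Pfn f m r - Tv f m + 1)
/-- integer beta numbers -/
noncomputable def Bfn (f : ℕ → ℕ) (m k : ℕ) : ℤ := (f k : ℤ) + m - k


variable {f : ℕ → ℕ} {m : ℕ}

lemma conj_card (hc : Ctx f m) {j : ℕ} (hj : 1 ≤ j) :
    conjFn f j = ((Finset.Icc 1 m).filter fun i => j ≤ f i).card := by
  rw [conjFn, ← Set.ncard_coe_finset]
  congr 1
  ext i
  simp only [Set.mem_setOf_eq, coe_filter, mem_Icc, Set.mem_setOf_eq]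
  constructor
  · rintro ⟨h1, h2⟩
    refine ⟨⟨h1, ?_⟩, h2⟩
    by_contra hle
    have := hc.zero i (by omega)
    omega
  · rintro ⟨⟨h1, _⟩, h2⟩; exact ⟨h1, h2⟩

lemma conj_le_m (hc : Ctx f m) {j : ℕ} (hj : 1 ≤ j) : conjFn f j ≤ m := by
  rw [conj_card hc hj]
  calc ((Finset.Icc 1 m).filter fun i => j ≤ f i).card ≤ (Finset.Icc 1 m).card :=
        card_filter_le _ _
    _ = m := by rw [Nat.card_Icc]; omega

lemma le_conj_iff (hc : Ctx f m) {i j : ℕ} (hi : 1 ≤ i) (hj : 1 ≤ j) :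
    i ≤ conjFn f j ↔ j ≤ f i := by
  rw [conj_card hc hj]
  constructor
  · intro hle
    by_contra hfi
    push_neg at hfi
    have hsub : ((Finset.Icc 1 m).filter fun k => j ≤ f k) ⊆ Finset.Ico 1 i := by
      intro a ha
      simp only [mem_filter, mem_Icc] at ha
      simp only [mem_Ico]
      refine ⟨ha.1.1, ?_⟩
      by_contra hai
      push_neg at hai
      have := hc.anti hi hai
      omega
    have := card_le_card hsub
    rw [Nat.card_Ico] at this
    omega
  · intro hfi
    have him : i ≤ m := by
      by_contra hmi
      have := hc.zero i (by omega)
      omega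
    have hsub : Finset.Icc 1 i ⊆ (Finset.Icc 1 m).filter fun k => j ≤ f k := by
      intro a ha
      simp only [mem_Icc] at ha
      simp only [mem_filter, mem_Icc]
      exact ⟨⟨ha.1, le_trans ha.2 him⟩, le_trans hfi (hc.anti ha.1 ha.2)⟩
    have := card_le_card hsub
    rw [Nat.card_Icc] at this
    omega

lemma conj_anti (hc : Ctx f m) {j j' : ℕ} (hj : 1 ≤ j) (hjj : j ≤ j') :
    conjFn f j' ≤ conjFn f j := by
  rw [conj_card hc hj, conj_card hc (le_trans hj hjj)]
  apply card_le_card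
  intro a ha
  simp only [mem_filter, mem_Icc] at ha ⊢
  exact ⟨ha.1, le_trans hjj ha.2⟩

lemma neg_one_pow_sub {a b : ℕ} (h : b ≤ a) : ((-1 : ℤ)) ^ (a - b) = (-1) ^ (a + b) := by
  have key : a + b = (a - b) + 2 * b := by omega
  rw [key, pow_add, pow_mul]
  norm_num

lemma neg_one_pow_parity {a b : ℕ} (h : a % 2 = b % 2) : ((-1 : ℤ)) ^ a = (-1) ^ b := by
  rcases Nat.even_or_odd a with ha | ha
  · have ha' := Nat.even_iff.1 ha
    have hb : Even b := Nat.even_iff.2 (by omega)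
    rw [ha.neg_one_pow, hb.neg_one_pow]
  · have ha' := Nat.odd_iff.1 ha
    have hb : Odd b := Nat.odd_iff.2 (by omega)
    rw [ha.neg_one_pow, hb.neg_one_pow]

lemma two_mul_altsum (n : ℕ) :
    2 * ∑ t ∈ Finset.Icc 1 n, (-1 : ℤ) ^ t = (-1) ^ n - 1 := by
  induction n with
  | zero => simp
  | succ n ih =>
    rw [Finset.sum_Icc_succ_top (by omega : 1 ≤ n + 1), mul_add, ih, pow_succ]
    ring

lemma zz_nonneg (z : ℤ) : 0 ≤ z * (z + 1) := by
  rcases le_or_gt 0 z with hz | hz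
  · exact mul_nonneg hz (by linarith)
  · nlinarith [mul_nonneg (show (0:ℤ) ≤ -z by omega) (show (0:ℤ) ≤ -(z+1) by omega)]

lemma tele (g : ℕ → ℤ) (n : ℕ) :
    ∑ i ∈ Finset.Icc 1 n, (g (i + 1) - g i) = g (n + 1) - g 1 := by
  induction n with
  | zero => simp
  | succ n ih => rw [Finset.sum_Icc_succ_top (by omega : 1 ≤ n + 1), ih]; ring


lemma row (hc : Ctx f m) {i : ℕ} (hi1 : 1 ≤ i) (him : i ≤ m) :
    ∑ j ∈ Finset.Icc 1 (f i), (-1 : ℤ) ^ (f i + conjFn f j + i + j + 1)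
      = (∑ t ∈ Finset.Icc 1 (f i + (m - i)), (-1 : ℤ) ^ t)
        - ∑ k ∈ Finset.Icc (i + 1) m, (-1 : ℤ) ^ ((f i + (m - i)) + (f k + (m - k))) := by
  have hfi1 : 1 ≤ f i := hc.pos i hi1 him
  set φ : ℕ → ℕ := fun j => (f i - j) + (conjFn f j - i) + 1 with hφdef
  set ψ : ℕ → ℕ := fun k => (f i + (m - i)) - (f k + (m - k)) with hψdef
  -- φ strictly decreasing on the row
  have hφmono : ∀ j j', 1 ≤ j → j < j' → j' ≤ f i → φ j' < φ j := by
    intro j j' hj hjj' hj'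
    have h1 : conjFn f j' ≤ conjFn f j := conj_anti hc hj (le_of_lt hjj')
    simp only [hφdef]
    omega
  have hφinj : Set.InjOn φ (Finset.Icc 1 (f i)) := by
    intro a ha b hb hab
    simp only [coe_Icc, Set.mem_Icc] at ha hb
    rcases lt_trichotomy a b with h | h | h
    · exact absurd hab (by have := hφmono a b ha.1 h hb.2; omega)
    · exact h
    · exact absurd hab (by have := hφmono b a hb.1 h ha.2; omega)
  -- ψ strictly increasing on the legs
  have hψmono : ∀ k k', i < k → k < k' → k' ≤ m → ψ k < ψ k' := by
    intro k k' hk hkk' hk'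
    have h1 : f k' ≤ f k := hc.anti (by omega) (le_of_lt hkk')
    have h2 : f k ≤ f i := hc.anti hi1 (le_of_lt hk)
    simp only [hψdef]
    omega
  have hψinj : Set.InjOn ψ (Finset.Icc (i + 1) m) := by
    intro a ha b hb hab
    simp only [coe_Icc, Set.mem_Icc] at ha hb
    rcases lt_trichotomy a b with h | h | h
    · exact absurd hab (by have := hψmono a b (by omega) h hb.2; omega)
    · exact h
    · exact absurd hab (by have := hψmono b a (by omega) h ha.2; omega)
  set A : Finset ℕ := (Finset.Icc 1 (f i)).image φ with hAdef
  set B : Finset ℕ := (Finset.Icc (i + 1) m).image ψ with hBdef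
  have hAsub : A ⊆ Finset.Icc 1 (f i + (m - i)) := by
    intro t ht
    simp only [hAdef, mem_image, mem_Icc] at ht ⊢
    obtain ⟨j, hj, rfl⟩ := ht
    have h1 : conjFn f j ≤ m := conj_le_m hc hj.1
    simp only [hφdef]
    omega
  have hBsub : B ⊆ Finset.Icc 1 (f i + (m - i)) := by
    intro t ht
    simp only [hBdef, mem_image, mem_Icc] at ht ⊢
    obtain ⟨k, hk, rfl⟩ := ht
    have h1 : f k ≤ f i := hc.anti hi1 (by omega)
    have h2 : 1 ≤ f k ∨ k = m := by
      rcases eq_or_lt_of_le hk.2 with h | h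
      · right; exact h
      · left; exact hc.pos k (by omega) hk.2
    simp only [hψdef]
    omega
  have hdisjAB : Disjoint A B := by
    rw [Finset.disjoint_left]
    intro t htA htB
    simp only [hAdef, hBdef, mem_image, mem_Icc] at htA htB
    obtain ⟨j, hj, hjt⟩ := htA
    obtain ⟨k, hk, hkt⟩ := htB
    have hconj_i : i ≤ conjFn f j := (le_conj_iff hc hi1 hj.1).2 hj.2
    have hconj_m : conjFn f j ≤ m := conj_le_m hc hj.1
    have hfk : f k ≤ f i := hc.anti hi1 (by omega)
    rcases le_or_gt j (f k) with hcase | hcase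
    · have hkc : k ≤ conjFn f j := (le_conj_iff hc (by omega : 1 ≤ k) hj.1).2 hcase
      simp only [hφdef] at hjt
      simp only [hψdef] at hkt
      omega
    · have hkc : conjFn f j < k := by
        by_contra hcon
        push_neg at hcon
        have := (le_conj_iff hc (by omega : 1 ≤ k) hj.1).1 hcon
        omega
      simp only [hφdef] at hjt
      simp only [hψdef] at hkt
      omega
  have hcardA : A.card = f i := by
    rw [hAdef, Finset.card_image_of_injOn hφinj, Nat.card_Icc]; omega
  have hcardB : B.card = m + 1 - (i + 1) := by
    rw [hBdef, Finset.card_image_of_injOn hψinj, Nat.card_Icc]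
  have hunion : A ∪ B = Finset.Icc 1 (f i + (m - i)) := by
    apply Finset.eq_of_subset_of_card_le (Finset.union_subset hAsub hBsub)
    rw [Finset.card_union_of_disjoint hdisjAB, hcardA, hcardB, Nat.card_Icc]
    omega
  -- transfer sums
  have hsumA : ∑ j ∈ Finset.Icc 1 (f i), (-1 : ℤ) ^ (f i + conjFn f j + i + j + 1)
      = ∑ t ∈ A, (-1 : ℤ) ^ t := by
    rw [hAdef, Finset.sum_image hφinj]
    apply Finset.sum_congr rfl
    intro j hj
    simp only [mem_Icc] at hj
    have h1 : i ≤ conjFn f j := (le_conj_iff hc hi1 hj.1).2 hj.2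
    apply neg_one_pow_parity
    simp only [hφdef]
    omega
  have hsumB : ∑ k ∈ Finset.Icc (i + 1) m, (-1 : ℤ) ^ ((f i + (m - i)) + (f k + (m - k)))
      = ∑ t ∈ B, (-1 : ℤ) ^ t := by
    rw [hBdef, Finset.sum_image hψinj]
    apply Finset.sum_congr rfl
    intro k hk
    simp only [mem_Icc] at hk
    have hfk : f k ≤ f i := hc.anti hi1 (by omega)
    apply neg_one_pow_parity
    simp only [hψdef]
    omega
  rw [hsumA, hsumB, ← hunion, Finset.sum_union hdisjAB]
  ring

lemma cells_finite (hc : Ctx f m) : (cellsFn f).Finite := by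
  apply Set.Finite.subset (Set.finite_Icc (1, 1) (m, f 1))
  rintro ⟨a, b⟩ ⟨h1, h2, h3⟩
  simp only at h1 h2 h3
  have ham : a ≤ m := by
    by_contra hcon
    have := hc.zero a (by omega)
    omega
  have hbf : b ≤ f 1 := le_trans h3 (hc.anti le_rfl h1)
  simp [Prod.le_def]
  omega

lemma cells_eq_coe (hc : Ctx f m) :
    cellsFn f =
      ↑((Finset.Icc 1 m).biUnion fun i => (Finset.Icc 1 (f i)).image fun j => (i, j)) := by
  ext ⟨a, b⟩
  simp only [cellsFn, Set.mem_setOf_eq, coe_biUnion, coe_Icc, Set.mem_iUnion, coe_image,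
    Set.mem_image, Set.mem_Icc, exists_prop]
  constructor
  · rintro ⟨h1, h2, h3⟩
    have ham : a ≤ m := by
      by_contra hcon
      have := hc.zero a (by omega)
      omega
    exact ⟨a, ⟨h1, ham⟩, b, ⟨h2, h3⟩, rfl⟩
  · rintro ⟨i, hi, j, hj, heq⟩
    cases heq
    exact ⟨hi.1, hj.1, hj.2⟩

lemma chi_eval (hc : Ctx f m) :
    ∑ᶠ p ∈ cellsFn f, ((-1 : ℤ) ^ (p.1 + p.2))
      = ∑ i ∈ Finset.Icc 1 m, (-1 : ℤ) ^ i * ∑ j ∈ Finset.Icc 1 (f i), (-1 : ℤ) ^ j := by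
  rw [cells_eq_coe hc, finsum_mem_coe_finset]
  rw [Finset.sum_biUnion]
  · apply Finset.sum_congr rfl
    intro i _
    rw [Finset.sum_image (by intro a _ b _ hab; simpa using hab)]
    rw [Finset.mul_sum]
    apply Finset.sum_congr rfl
    intro j _
    rw [pow_add]
  · intro x _ y _ hxy
    simp only [Function.onFun, id]
    rw [Finset.disjoint_left]
    intro p hp hp'
    simp only [mem_image] at hp hp'
    obtain ⟨j, _, rfl⟩ := hp
    obtain ⟨j', _, heq⟩ := hp'
    exact hxy (by simpa using (Prod.mk.injEq .. ▸ heq.symm).1)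

lemma chi_zero (hc : Ctx f m) (h : HasDominoTiling f) :
    ∑ᶠ p ∈ cellsFn f, ((-1 : ℤ) ^ (p.1 + p.2)) = 0 := by
  obtain ⟨D, hdom, hdisj, hcov⟩ := h
  have hcf : (cellsFn f).Finite := cells_finite hc
  have hDsub : D ⊆ {t | t ⊆ cellsFn f} := by
    intro d hd
    simp only [Set.mem_setOf_eq]
    rw [← hcov]
    exact Set.subset_sUnion_of_mem hd
  have hDfin : D.Finite := (Set.Finite.finite_subsets hcf).subset hDsub
  have hdfin : ∀ d ∈ D, Set.Finite d := fun d hd => hcf.subset (hDsub hd)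
  rw [← hcov, finsum_mem_sUnion hdisj hDfin hdfin]
  have hzero : ∀ d ∈ D, ∑ᶠ p ∈ d, ((-1 : ℤ) ^ (p.1 + p.2)) = 0 := by
    intro d hd
    obtain ⟨i, j, hcase | hcase⟩ := hdom d hd
    · rw [hcase, finsum_mem_pair (by simp)]
      simp only
      have : i + (j + 1) = (i + j) + 1 := by omega
      rw [this, pow_succ]
      ring
    · rw [hcase, finsum_mem_pair (by simp)]
      simp only
      have : (i + 1) + j = (i + j) + 1 := by omega
      rw [this, pow_succ]
      ring
  calc ∑ᶠ d ∈ D, ∑ᶠ p ∈ d, ((-1 : ℤ) ^ (p.1 + p.2))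
      = ∑ᶠ d ∈ D, (0 : ℤ) := by
        apply finsum_mem_congr rfl hzero
    _ = 0 := by simp

lemma T_val (hc : Ctx f m) (h : HasDominoTiling f) :
    ∑ k ∈ Finset.Icc 1 m, (-1 : ℤ) ^ (f k + (m - k)) = ((m % 2 : ℕ) : ℤ) := by
  have h0 := chi_zero hc h
  rw [chi_eval hc] at h0
  -- 2 * 0 = ∑ i, (-1)^i * ((-1)^(f i) - 1)
  have h1 : ∑ i ∈ Finset.Icc 1 m, ((-1 : ℤ) ^ (f i + i) - (-1) ^ i) = 0 := by
    have := congrArg (fun z => 2 * z) h0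
    simp only [mul_zero] at this
    rw [Finset.mul_sum] at this
    rw [← this]
    apply Finset.sum_congr rfl
    intro i _
    have h2 := two_mul_altsum (f i)
    have : (2 : ℤ) * ((-1) ^ i * ∑ j ∈ Finset.Icc 1 (f i), (-1 : ℤ) ^ j)
        = (-1) ^ i * (2 * ∑ j ∈ Finset.Icc 1 (f i), (-1 : ℤ) ^ j) := by ring
    rw [this, h2, pow_add]
    ring
  have h3 : ∑ i ∈ Finset.Icc 1 m, (-1 : ℤ) ^ (f i + i) = ∑ i ∈ Finset.Icc 1 m, (-1 : ℤ) ^ i := by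
    have := Finset.sum_sub_distrib (f := fun i => (-1 : ℤ) ^ (f i + i)) (g := fun i => (-1 : ℤ) ^ i) (s := Finset.Icc 1 m)
    rw [this] at h1
    linarith
  have h4 : ∑ k ∈ Finset.Icc 1 m, (-1 : ℤ) ^ (f k + (m - k))
      = (-1) ^ m * ∑ i ∈ Finset.Icc 1 m, (-1 : ℤ) ^ (f i + i) := by
    rw [Finset.mul_sum]
    apply Finset.sum_congr rfl
    intro k hk
    simp only [mem_Icc] at hk
    rw [← pow_add]
    apply neg_one_pow_parity
    omega
  have h5 : 2 * ∑ i ∈ Finset.Icc 1 m, (-1 : ℤ) ^ i = (-1) ^ m - 1 := by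
    exact two_mul_altsum m
  rcases Nat.even_or_odd m with hm | hm
  · have hmp : (-1 : ℤ) ^ m = 1 := hm.neg_one_pow
    have hm2 : m % 2 = 0 := Nat.even_iff.1 hm
    rw [h4, h3, hmp, hm2]
    have hS : ∑ i ∈ Finset.Icc 1 m, (-1 : ℤ) ^ i = 0 := by rw [hmp] at h5; linarith
    rw [hS]; norm_num
  · have hmp : (-1 : ℤ) ^ m = -1 := hm.neg_one_pow
    have hm2 : m % 2 = 1 := Nat.odd_iff.1 hm
    rw [h4, h3, hmp, hm2]
    have hS : ∑ i ∈ Finset.Icc 1 m, (-1 : ℤ) ^ i = -1 := by rw [hmp] at h5; linarith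
    rw [hS]; norm_num


lemma sval (k : ℕ) : sfn f m k = 1 ∨ sfn f m k = -1 := by
  rcases Nat.even_or_odd (f k + (m - k)) with he | he
  · left; exact he.neg_one_pow
  · right; exact he.neg_one_pow

lemma Psucc (r : ℕ) (hr : 1 ≤ r) : Pfn f m (r + 1) = Pfn f m r + sfn f m r :=
  Finset.sum_Ico_succ_top hr _

lemma P1 : Pfn f m 1 = 0 := by simp [Pfn]

lemma Tval2 (hc : Ctx f m) (h : HasDominoTiling f) : Tv f m = ((m % 2 : ℕ) : ℤ) := by
  rw [Tv, Pfn, Finset.Ico_add_one_right_eq_Icc]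
  exact T_val hc h

lemma bFn_eq (hc : Ctx f m) :
    bFn f = ∑ i ∈ Finset.Icc 1 m,
      (∑ j ∈ Finset.Icc 1 (f i), (-1 : ℤ) ^ (f i + conjFn f j + i + j + 1))
        * ((f i : ℤ) - (i : ℤ)) := by
  rw [bFn]
  rw [finsum_eq_sum_of_support_subset _ (s := Finset.Icc 1 m) ?_]
  · exact Finset.sum_congr rfl fun i _ => (Finset.sum_mul ..).symm
  · intro i hi
    simp only [Function.mem_support] at hi
    simp only [coe_Icc, Set.mem_Icc]
    by_contra hcon
    apply hi
    have hfi : f i = 0 := by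
      rcases Nat.lt_or_ge i 1 with h1 | h1
      · have : i = 0 := by omega
        rw [this]; exact hc.z0
      · exact hc.zero i (by push_neg at hcon; exact hcon h1)
    rw [hfi]
    simp

lemma two_b (hc : Ctx f m) (hT01 : Tv f m = 0 ∨ Tv f m = 1) :
    2 * bFn f = ∑ i ∈ Finset.Icc 1 m, (Bfn f m i - Bfn f m (i + 1)) * qfn f m (i + 1) := by
  have hq1 : qfn f m 1 = 0 := by
    rw [qfn, P1]
    rcases hT01 with h' | h' <;> rw [h'] <;> ring
  have hqm : qfn f m (m + 1) = 0 := by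
    rw [qfn, ← Tv]
    ring
  have hrow : ∀ i ∈ Finset.Icc 1 m,
      2 * ∑ j ∈ Finset.Icc 1 (f i), (-1 : ℤ) ^ (f i + conjFn f j + i + j + 1)
        = qfn f m (i + 1) - qfn f m i := by
    intro i hi
    simp only [mem_Icc] at hi
    rw [row hc hi.1 hi.2]
    have hA := two_mul_altsum (f i + (m - i))
    have hC : ∑ k ∈ Finset.Icc (i + 1) m, (-1 : ℤ) ^ ((f i + (m - i)) + (f k + (m - k)))
        = sfn f m i * (Tv f m - Pfn f m (i + 1)) := by
      have h1 : ∑ k ∈ Finset.Icc (i + 1) m, (-1 : ℤ) ^ ((f i + (m - i)) + (f k + (m - k)))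
          = sfn f m i * ∑ k ∈ Finset.Icc (i + 1) m, sfn f m k := by
        rw [Finset.mul_sum]
        exact Finset.sum_congr rfl fun k _ => by rw [pow_add]; rfl
      have h2 : ∑ k ∈ Finset.Icc (i + 1) m, sfn f m k = Tv f m - Pfn f m (i + 1) := by
        have h3 : Pfn f m (i + 1) + ∑ k ∈ Finset.Ico (i + 1) (m + 1), sfn f m k
            = Tv f m := by
          rw [Tv, Pfn, Pfn]
          exact Finset.sum_Ico_consecutive _ (by omega) (by omega)
        have h4 : Finset.Icc (i + 1) m = Finset.Ico (i + 1) (m + 1) := by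
          rw [Finset.Ico_add_one_right_eq_Icc]
        rw [h4]
        linarith
      rw [h1, h2]
    rw [hC]
    have hsfn : (-1 : ℤ) ^ (f i + (m - i)) = sfn f m i := rfl
    rw [mul_sub, hA, hsfn]
    have hP2 : Pfn f m (i + 1) = Pfn f m i + sfn f m i := Psucc i hi.1
    rw [qfn, qfn, hP2]
    rcases sval (f := f) (m := m) i with hs | hs <;> rw [hs] <;> ring
  calc 2 * bFn f
      = ∑ i ∈ Finset.Icc 1 m,
          (2 * ∑ j ∈ Finset.Icc 1 (f i), (-1 : ℤ) ^ (f i + conjFn f j + i + j + 1))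
            * ((f i : ℤ) - (i : ℤ)) := by
        rw [bFn_eq hc, Finset.mul_sum]
        exact Finset.sum_congr rfl fun i _ => by ring
    _ = ∑ i ∈ Finset.Icc 1 m,
          (qfn f m (i + 1) - qfn f m i) * (Bfn f m i - m) := by
        apply Finset.sum_congr rfl
        intro i hi
        rw [hrow i hi]
        simp only [mem_Icc] at hi
        have : (f i : ℤ) - (i : ℤ) = Bfn f m i - m := by rw [Bfn]; ring
        rw [this]
    _ = ∑ i ∈ Finset.Icc 1 m,
          ((Bfn f m i - Bfn f m (i + 1)) * qfn f m (i + 1)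
            + ((Bfn f m (i + 1) * qfn f m (i + 1) - Bfn f m i * qfn f m i)
               - (m : ℤ) * (qfn f m (i + 1) - qfn f m i))) := by
        exact Finset.sum_congr rfl fun i _ => by ring
    _ = (∑ i ∈ Finset.Icc 1 m, (Bfn f m i - Bfn f m (i + 1)) * qfn f m (i + 1))
        + ((Bfn f m (m + 1) * qfn f m (m + 1) - Bfn f m 1 * qfn f m 1)
           - (m : ℤ) * (qfn f m (m + 1) - qfn f m 1)) := by
        rw [Finset.sum_add_distrib]
        congr 1
        rw [Finset.sum_sub_distrib, tele (fun i => Bfn f m i * qfn f m i) m,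
          ← Finset.mul_sum, tele (fun i => qfn f m i) m]
    _ = ∑ i ∈ Finset.Icc 1 m, (Bfn f m i - Bfn f m (i + 1)) * qfn f m (i + 1) := by
        rw [hq1, hqm]
        ring


lemma key (hc : Ctx f m) (h : HasDominoTiling f) :
    0 ≤ bFn f ∧ (bFn f = 0 ↔ ∀ i : ℕ, Even (f i)) := by
  have hT := Tval2 hc h
  have hT01 : Tv f m = 0 ∨ Tv f m = 1 := by omega
  have h2b := two_b hc hT01
  have hd : ∀ i, 1 ≤ i → 0 < Bfn f m i - Bfn f m (i + 1) := by
    intro i hi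
    have h1 : f (i + 1) ≤ f i := hc.anti hi (by omega)
    rw [Bfn, Bfn]
    push_cast
    omega
  have hqn : ∀ r, 0 ≤ qfn f m r := fun r => zz_nonneg _
  have hterm : ∀ i ∈ Finset.Icc 1 m, 0 ≤ (Bfn f m i - Bfn f m (i + 1)) * qfn f m (i + 1) := by
    intro i hi
    simp only [mem_Icc] at hi
    exact mul_nonneg (le_of_lt (hd i hi.1)) (hqn _)
  have hsum : 0 ≤ ∑ i ∈ Finset.Icc 1 m, (Bfn f m i - Bfn f m (i + 1)) * qfn f m (i + 1) :=
    Finset.sum_nonneg hterm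
  constructor
  · omega
  constructor
  · -- b = 0 → all parts even
    intro hb0
    have hz : ∀ i ∈ Finset.Icc 1 m, (Bfn f m i - Bfn f m (i + 1)) * qfn f m (i + 1) = 0 := by
      have := (Finset.sum_eq_zero_iff_of_nonneg hterm).1 (by omega)
      exact this
    have hqz : ∀ i, 1 ≤ i → i ≤ m → qfn f m (i + 1) = 0 := by
      intro i h1 h2
      have := hz i (by simp [mem_Icc]; omega)
      rcases mul_eq_zero.1 this with h' | h'
      · exact absurd h' (by have := hd i h1; omega)
      · exact h'
    -- the prefix sums are confined to {T-1, T}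
    have claim : ∀ i, i ≤ m → Pfn f m (i + 1) = Tv f m - (((m + i) % 2 : ℕ) : ℤ) := by
      intro i
      induction i with
      | zero =>
        intro _
        rw [P1]
        have : (m + 0) % 2 = m % 2 := by omega
        rw [this, hT]
        ring
      | succ i ih =>
        intro him
        have hIH := ih (by omega)
        have hstep : Pfn f m (i + 1 + 1) = Pfn f m (i + 1) + sfn f m (i + 1) :=
          Psucc (i + 1) (by omega)
        have hq0 := hqz (i + 1) (by omega) him
        rw [qfn] at hq0
        have hor : Pfn f m (i + 1 + 1) = Tv f m ∨ Pfn f m (i + 1 + 1) = Tv f m - 1 := by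
          rcases mul_eq_zero.1 hq0 with h' | h' <;> omega
        have hs := sval (f := f) (m := m) (i + 1)
        have hpar : (m + i) % 2 + (m + (i + 1)) % 2 = 1 := by omega
        omega
    -- deduce parity of each part
    intro i0
    rcases Nat.lt_or_ge i0 1 with hi0 | hi0
    · have : i0 = 0 := by omega
      rw [this, hc.z0]; exact Even.zero
    rcases Nat.lt_or_ge m i0 with hi1 | hi1
    · rw [hc.zero i0 hi1]; exact Even.zero
    · obtain ⟨i', rfl⟩ : ∃ i', i0 = i' + 1 := ⟨i0 - 1, by omega⟩
      have hcl1 := claim i' (by omega)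
      have hcl2 := claim (i' + 1) (by omega)
      have hstep : Pfn f m (i' + 1 + 1) = Pfn f m (i' + 1) + sfn f m (i' + 1) :=
        Psucc (i' + 1) (by omega)
      rcases Nat.even_or_odd (f (i' + 1) + (m - (i' + 1))) with he | he
      · have hsv : sfn f m (i' + 1) = 1 := he.neg_one_pow
        have hfe := Nat.even_iff.1 he
        rw [hsv] at hstep
        refine Nat.even_iff.2 ?_
        omega
      · have hsv : sfn f m (i' + 1) = -1 := he.neg_one_pow
        have hfe := Nat.odd_iff.1 he
        rw [hsv] at hstep
        refine Nat.even_iff.2 ?_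
        omega
  · -- all parts even → b = 0
    intro hev
    have claim2 : ∀ i, i ≤ m → Pfn f m (i + 1) = ((m % 2 : ℕ) : ℤ) - (((m + i) % 2 : ℕ) : ℤ) := by
      intro i
      induction i with
      | zero =>
        intro _
        rw [P1]
        have : (m + 0) % 2 = m % 2 := by omega
        rw [this]
        ring
      | succ i ih =>
        intro him
        have hIH := ih (by omega)
        have hstep : Pfn f m (i + 1 + 1) = Pfn f m (i + 1) + sfn f m (i + 1) :=
          Psucc (i + 1) (by omega)
        have hfe := Nat.even_iff.1 (hev (i + 1))
        rcases Nat.even_or_odd (f (i + 1) + (m - (i + 1))) with he | he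
        · have hsv : sfn f m (i + 1) = 1 := he.neg_one_pow
          have he' := Nat.even_iff.1 he
          rw [hsv] at hstep
          omega
        · have hsv : sfn f m (i + 1) = -1 := he.neg_one_pow
          have he' := Nat.odd_iff.1 he
          rw [hsv] at hstep
          omega
    have hqz : ∀ i ∈ Finset.Icc 1 m, (Bfn f m i - Bfn f m (i + 1)) * qfn f m (i + 1) = 0 := by
      intro i hi
      simp only [mem_Icc] at hi
      have hcl := claim2 i hi.2
      have hq : qfn f m (i + 1) = 0 := by
        rw [qfn]
        have hor : Pfn f m (i + 1) - Tv f m = 0 ∨ Pfn f m (i + 1) - Tv f m + 1 = 0 := by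
          omega
        rcases hor with h' | h'
        · rw [h']; ring
        · rw [mul_comm, h']; ring
      rw [hq, mul_zero]
    have : ∑ i ∈ Finset.Icc 1 m, (Bfn f m i - Bfn f m (i + 1)) * qfn f m (i + 1) = 0 :=
      Finset.sum_eq_zero hqz
    omega


end BAux

/-- if `λ` has empty 2-core then `b(λ) ≥ 0`, with `b(λ) = 0` iff
every part of `λ` is even. -/
theorem b_nonneg_and_eq_zero_iff_even (μ : IdxPartition) (h : HasDominoTiling μ.part) :
    0 ≤ bFn μ.part ∧ (bFn μ.part = 0 ↔ ∀ i : ℕ, Even (μ.part i)) := by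
  obtain ⟨N, hN⟩ := μ.finite
  have hex : ∃ m : ℕ, BAux.Ctx μ.part m := by
    set S : Finset ℕ := (Finset.range (N + 1)).filter fun i => 1 ≤ i ∧ 1 ≤ μ.part i with hS
    have hzero_gen : ∀ i, 1 ≤ i → i ∉ S → μ.part i = 0 := by
      intro i h1 h2
      rcases Nat.lt_or_ge i (N + 1) with hi | hi
      · by_contra hcon
        exact h2 (by simp [hS, Finset.mem_filter, Finset.mem_range]; omega)
      · exact hN i (by omega)
    rcases S.eq_empty_or_nonempty with hemp | hne
    · refine ⟨0, ⟨μ.antitone, by omega, ?_, μ.part_zero⟩⟩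
      intro i hi
      exact hzero_gen i (by omega) (by rw [hemp]; exact Finset.notMem_empty i)
    · refine ⟨S.max' hne, ⟨μ.antitone, ?_, ?_, μ.part_zero⟩⟩
      · intro i h1 h2
        have hm := S.max'_mem hne
        simp only [hS, Finset.mem_filter] at hm
        exact le_trans hm.2.2 (μ.antitone h1 h2)
      · intro i hi
        apply hzero_gen i (by omega)
        intro hmem
        have := S.le_max' i hmem
        omega
  obtain ⟨m, hc⟩ := hex
  exact BAux.key hc h
end

section
/- Let n be a positive integer and let λ be a partition with at most 2n parts, padded with zeros so that λ_1, …, λ_{2n} are defined. Then b(λ) = Σ_{i=1}^{2n} Σ_{j=1}^{λ_i+2n−i} (−1)^{λ_i − i − j + 1}(λ_i − i) − Σ_{1≤i<j≤2n} (−1)^{λ_i − λ_j + j − i}(λ_i − i). -/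
/-- A partition `λ`, 1-indexed: `λ_i = part i` for `i ≥ 1`. -/
structure NatPartition where
  part : ℕ → ℕ
  part_zero : part 0 = 0
  antitone : ∀ ⦃i j : ℕ⦄, 1 ≤ i → i ≤ j → part j ≤ part i
  finite : ∃ N : ℕ, ∀ i : ℕ, N ≤ i → part i = 0

section Aux

/-- `negS m = Σ_{j=1}^m (-1)^j`. -/
def negS (m : ℕ) : ℤ := ∑ j ∈ Finset.Ioc 0 m, (-1 : ℤ) ^ j

lemma two_negS (m : ℕ) : 2 * negS m = (-1 : ℤ) ^ m - 1 := by
  induction m with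
  | zero => simp [negS]
  | succ k ih =>
    simp only [negS] at ih ⊢
    rw [Finset.sum_Ioc_succ_top (Nat.zero_le _), pow_succ]
    linarith

lemma negS_congr {a b : ℕ} (h : (-1 : ℤ) ^ a = (-1 : ℤ) ^ b) : negS a = negS b := by
  have h2 : 2 * negS a = 2 * negS b := by rw [two_negS, two_negS, h]
  exact mul_left_cancel₀ two_ne_zero h2

lemma neg_one_sq_pow (i : ℕ) : (-1 : ℤ) ^ i * (-1 : ℤ) ^ i = 1 := by
  rw [← pow_add]
  exact Even.neg_one_pow ⟨i, rfl⟩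

lemma conj_eq (f : ℕ → ℕ) (hf : ∀ ⦃i j : ℕ⦄, 1 ≤ i → i ≤ j → f j ≤ f i)
    {i j : ℕ} (hi : 1 ≤ i) (h1 : f (i + 1) < j) (h2 : j ≤ f i) :
    conjFn f j = i := by
  have hset : {k : ℕ | 1 ≤ k ∧ j ≤ f k} = ↑(Finset.Icc 1 i) := by
    ext k
    simp only [Set.mem_setOf_eq, Finset.coe_Icc, Set.mem_Icc]
    constructor
    · rintro ⟨hk1, hkj⟩
      refine ⟨hk1, ?_⟩
      by_contra h
      push_neg at h
      have := hf (by omega : 1 ≤ i + 1) (by omega : i + 1 ≤ k)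
      omega
    · rintro ⟨hk1, hki⟩
      exact ⟨hk1, le_trans h2 (hf hk1 hki)⟩
  rw [conjFn, hset, Set.ncard_coe_finset, Nat.card_Icc]
  omega

lemma T_eq (n : ℕ) (hn : 0 < n) (f : ℕ → ℕ)
    (hf : ∀ ⦃i j : ℕ⦄, 1 ≤ i → i ≤ j → f j ≤ f i) (h0 : f (2 * n + 1) = 0) :
    ∀ d i : ℕ, i + d = 2 * n → 1 ≤ i →
      (∑ j ∈ Finset.Ioc 0 (f i), (-1 : ℤ) ^ (conjFn f j + j))
        = negS (f i + i) + ∑ j ∈ Finset.Ioc i (2 * n), (-1 : ℤ) ^ (f j + j) := by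
  intro d
  induction d with
  | zero =>
    intro i hi2n hi1
    have hi : i = 2 * n := by omega
    subst hi
    have hconj : ∀ j ∈ Finset.Ioc 0 (f (2 * n)), ((-1 : ℤ)) ^ (conjFn f j + j)
        = (-1 : ℤ) ^ j := by
      intro j hj
      rw [Finset.mem_Ioc] at hj
      rw [conj_eq f hf (by omega : 1 ≤ 2 * n) (by omega) hj.2, pow_add,
        pow_mul]
      norm_num
    rw [Finset.sum_congr rfl hconj, Finset.Ioc_self, Finset.sum_empty, add_zero]
    have : negS (f (2 * n) + 2 * n) = negS (f (2 * n)) := by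
      apply negS_congr
      rw [pow_add, pow_mul]
      norm_num
    rw [this, negS]
  | succ d ih =>
    intro i hi2n hi1
    have hIH := ih (i + 1) (by omega) (by omega)
    have hle : f (i + 1) ≤ f i := hf hi1 (Nat.le_succ i)
    -- split left sum
    have hsplit : (∑ j ∈ Finset.Ioc 0 (f (i + 1)), (-1 : ℤ) ^ (conjFn f j + j))
        + (∑ j ∈ Finset.Ioc (f (i + 1)) (f i), (-1 : ℤ) ^ (conjFn f j + j))
        = ∑ j ∈ Finset.Ioc 0 (f i), (-1 : ℤ) ^ (conjFn f j + j) :=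
      Finset.sum_Ioc_consecutive _ (Nat.zero_le _) hle
    have hmid : (∑ j ∈ Finset.Ioc (f (i + 1)) (f i), (-1 : ℤ) ^ (conjFn f j + j))
        = (-1 : ℤ) ^ i * (negS (f i) - negS (f (i + 1))) := by
      have hc : ∀ j ∈ Finset.Ioc (f (i + 1)) (f i), ((-1 : ℤ)) ^ (conjFn f j + j)
          = (-1 : ℤ) ^ i * (-1 : ℤ) ^ j := by
        intro j hj
        rw [Finset.mem_Ioc] at hj
        rw [conj_eq f hf hi1 hj.1 hj.2, pow_add]
      rw [Finset.sum_congr rfl hc, ← Finset.mul_sum]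
      congr 1
      have := Finset.sum_Ioc_consecutive (fun j => (-1 : ℤ) ^ j)
        (Nat.zero_le (f (i + 1))) hle
      simp only [negS]
      linarith
    -- split right sum
    have hrsplit : (∑ j ∈ Finset.Ioc i (i + 1), (-1 : ℤ) ^ (f j + j))
        + (∑ j ∈ Finset.Ioc (i + 1) (2 * n), (-1 : ℤ) ^ (f j + j))
        = ∑ j ∈ Finset.Ioc i (2 * n), (-1 : ℤ) ^ (f j + j) :=
      Finset.sum_Ioc_consecutive _ (Nat.le_succ i) (by omega)
    have hsingle : (∑ j ∈ Finset.Ioc i (i + 1), (-1 : ℤ) ^ (f j + j))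
        = (-1 : ℤ) ^ (f (i + 1) + (i + 1)) := by
      rw [show Finset.Ioc i (i + 1) = {i + 1} from by rw [← Finset.Icc_add_one_left_eq_Ioc, Finset.Icc_self]]
      rw [Finset.sum_singleton]
    -- arithmetic
    have e1 := two_negS (f i)
    have e2 := two_negS (f (i + 1))
    have e3 : 2 * negS (f i + i) = (-1 : ℤ) ^ (f i) * (-1 : ℤ) ^ i - 1 := by
      rw [two_negS, pow_add]
    have e4 : 2 * negS (f (i + 1) + (i + 1))
        = -((-1 : ℤ) ^ (f (i + 1)) * (-1 : ℤ) ^ i) - 1 := by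
      rw [two_negS, pow_add, pow_succ]; ring
    have e5 : ((-1 : ℤ)) ^ (f (i + 1) + (i + 1))
        = -((-1 : ℤ) ^ (f (i + 1)) * (-1 : ℤ) ^ i) := by
      rw [pow_add, pow_succ]; ring
    rw [← hsplit, hmid, hIH, ← hrsplit, hsingle, e5]
    have key : 2 * ((negS (f (i + 1) + (i + 1))
          + ∑ j ∈ Finset.Ioc (i + 1) (2 * n), (-1 : ℤ) ^ (f j + j))
          + (-1 : ℤ) ^ i * (negS (f i) - negS (f (i + 1))))
        = 2 * (negS (f i + i)
          + (-((-1 : ℤ) ^ (f (i + 1)) * (-1 : ℤ) ^ i)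
            + ∑ j ∈ Finset.Ioc (i + 1) (2 * n), (-1 : ℤ) ^ (f j + j))) := by
      linear_combination e4 + (-1 : ℤ) ^ i * e1 - (-1 : ℤ) ^ i * e2 - e3
    exact mul_left_cancel₀ two_ne_zero key

end Aux
/-- for `λ` with at most `2n` parts,
`b(λ) = Σ_{i=1}^{2n} Σ_{j=1}^{λ_i+2n−i} (−1)^{λ_i−i−j+1}(λ_i−i)
        − Σ_{1≤i<j≤2n} (−1)^{λ_i−λ_j+j−i}(λ_i−i)`,
where the exponents of `−1` are replaced by natural numbers of the same parity. -/
theorem b_eq_staircase_sum (n : ℕ) (hn : 0 < n) (μ : NatPartition)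
    (hlen : μ.part (2 * n + 1) = 0) :
    bFn μ.part =
      (∑ i ∈ Finset.Icc 1 (2 * n), ∑ j ∈ Finset.Icc 1 (μ.part i + 2 * n - i),
        (-1 : ℤ) ^ (μ.part i + i + j + 1) * ((μ.part i : ℤ) - (i : ℤ)))
      - ∑ i ∈ Finset.Icc 1 (2 * n), ∑ j ∈ Finset.Ioc i (2 * n),
          (-1 : ℤ) ^ (μ.part i + μ.part j + i + j) * ((μ.part i : ℤ) - (i : ℤ)) := by
  set f := μ.part with hf_def
  have hf : ∀ ⦃i j : ℕ⦄, 1 ≤ i → i ≤ j → f j ≤ f i := μ.antitone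
  have hzero : ∀ i : ℕ, 2 * n + 1 ≤ i → f i = 0 := by
    intro i hi
    have := hf (by omega : 1 ≤ 2 * n + 1) hi
    omega
  -- reduce the finsum to a finite sum
  have hsupp : Function.support (fun i : ℕ => ∑ j ∈ Finset.Icc 1 (f i),
      (-1 : ℤ) ^ (f i + conjFn f j + i + j + 1) * ((f i : ℤ) - (i : ℤ)))
      ⊆ ↑(Finset.Icc 1 (2 * n)) := by
    intro i hi
    simp only [Function.mem_support] at hi
    simp only [Finset.coe_Icc, Set.mem_Icc]
    by_contra h
    push_neg at h
    have hfi : f i = 0 := by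
      rcases Nat.lt_or_ge i 1 with h1 | h1
      · have : i = 0 := by omega
        rw [this]; exact μ.part_zero
      · exact hzero i (by have := h h1; omega)
    apply hi
    rw [hfi]
    simp
  rw [bFn, finsum_eq_sum_of_support_subset _ hsupp, ← Finset.sum_sub_distrib]
  apply Finset.sum_congr rfl
  intro i hi
  rw [Finset.mem_Icc] at hi
  have hTi := T_eq n hn f hf (hzero _ le_rfl) (2 * n - i) i (by omega) hi.1
  have hIoc : ∀ m : ℕ, Finset.Icc 1 m = Finset.Ioc 0 m := fun m => Finset.Icc_add_one_left_eq_Ioc 0 m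
  set K : ℤ := (-1 : ℤ) ^ (f i + i + 1) * ((f i : ℤ) - (i : ℤ)) with hK
  -- LHS row
  have hL : (∑ j ∈ Finset.Icc 1 (f i),
      (-1 : ℤ) ^ (f i + conjFn f j + i + j + 1) * ((f i : ℤ) - (i : ℤ)))
      = K * ∑ j ∈ Finset.Ioc 0 (f i), (-1 : ℤ) ^ (conjFn f j + j) := by
    rw [hIoc, Finset.mul_sum]
    apply Finset.sum_congr rfl
    intro j _
    have he : f i + conjFn f j + i + j + 1 = (f i + i + 1) + (conjFn f j + j) := by ring
    rw [he, pow_add, hK]; ring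
  -- first RHS row
  have hA : (∑ j ∈ Finset.Icc 1 (f i + 2 * n - i),
      (-1 : ℤ) ^ (f i + i + j + 1) * ((f i : ℤ) - (i : ℤ)))
      = K * negS (f i + 2 * n - i) := by
    rw [hIoc, negS, Finset.mul_sum]
    apply Finset.sum_congr rfl
    intro j _
    have he : f i + i + j + 1 = (f i + i + 1) + j := by ring
    rw [he, pow_add, hK]; ring
  -- second RHS row
  have hB : (∑ j ∈ Finset.Ioc i (2 * n),
      (-1 : ℤ) ^ (f i + f j + i + j) * ((f i : ℤ) - (i : ℤ)))
      = -K * ∑ j ∈ Finset.Ioc i (2 * n), (-1 : ℤ) ^ (f j + j) := by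
    rw [Finset.mul_sum]
    apply Finset.sum_congr rfl
    intro j _
    have he : f i + f j + i + j + 1 = ((f i + i + 1) + (f j + j)) := by ring
    have : ((-1 : ℤ)) ^ (f i + f j + i + j) * (-1)
        = (-1 : ℤ) ^ (f i + i + 1) * (-1 : ℤ) ^ (f j + j) := by
      rw [← pow_succ, ← pow_add, he]
    have h2 : ((-1 : ℤ)) ^ (f i + f j + i + j)
        = -((-1 : ℤ) ^ (f i + i + 1) * (-1 : ℤ) ^ (f j + j)) := by
      linarith [this]
    rw [h2, hK]; ring
  -- parity: negS (f i + 2n - i) = negS (f i + i)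
  have hpar : negS (f i + 2 * n - i) = negS (f i + i) := by
    apply negS_congr
    have hii : (f i + 2 * n - i) + i = f i + 2 * n := by omega
    have h1 : ((-1 : ℤ)) ^ (f i + 2 * n - i) * (-1 : ℤ) ^ i
        = (-1 : ℤ) ^ (f i) * (-1 : ℤ) ^ (2 * n) := by
      rw [← pow_add, hii, pow_add]
    have h2n : ((-1 : ℤ)) ^ (2 * n) = 1 := by
      rw [pow_mul]; norm_num
    have h3 : ((-1 : ℤ)) ^ (f i + 2 * n - i) * ((-1 : ℤ) ^ i * (-1 : ℤ) ^ i)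
        = (-1 : ℤ) ^ (f i) * (-1 : ℤ) ^ i := by
      rw [← mul_assoc, h1, h2n]; ring
    rw [neg_one_sq_pow i, mul_one] at h3
    rw [h3, pow_add]
  rw [hL, hA, hB, hTi, hpar]
  ring
end

section
/- Let n be a positive integer and let λ be a partition with at most 2n parts whose Young diagram can be tiled by dominoes, padded with zeros so that λ_1, …, λ_{2n} are defined. Then b(λ') = |λ|/2 − n^2 − n + Σ_{1≤i<j≤2n} (−1)^{λ_i − λ_j + j − i}(λ_j − j). -/
/-- A partition `λ`, 1-indexed: `λ_i = part i` for `i ≥ 1`. -/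
structure OneIndexedPartition where
  part : ℕ → ℕ
  part_zero : part 0 = 0
  antitone : ∀ ⦃i j : ℕ⦄, 1 ≤ i → i ≤ j → part j ≤ part i
  finite : ∃ N : ℕ, ∀ i : ℕ, N ≤ i → part i = 0

-- small alternating-sum closed forms
lemma alt1 (m : ℕ) : 2 * ∑ j ∈ Finset.Icc 1 m, ((-1:ℤ))^j = (-1)^m - 1 := by
  induction m with
  | zero => simp
  | succ m ih =>
    rw [Finset.sum_Icc_succ_top (by omega)]
    rw [mul_add, ih, pow_succ]
    ring

lemma altH (k : ℕ) : ∀ m : ℕ, 4 * ∑ c ∈ Finset.Ioc 0 m, ((-1:ℤ))^(k+c+1) * ((k:ℤ) - c)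
    = (-1:ℤ)^(k+1) * ((-1)^m * (2*k - 2*m - 1) - (2*(k:ℤ) - 1)) := by
  intro m
  induction m with
  | zero => simp
  | succ m ih =>
    rw [Finset.sum_Ioc_succ_top (by omega), mul_add, ih]
    have h1 : ((-1:ℤ))^(k+(m+1)+1) = (-1)^(k+1) * (-1)^m * (-1) := by
      rw [show k+(m+1)+1 = (k+1)+m+1 by omega, pow_succ, pow_add]
    rw [h1]
    push_cast
    rw [pow_succ]
    ring

section Part
variable {f : ℕ → ℕ} (hf0 : f 0 = 0)
  (hanti : ∀ ⦃i j : ℕ⦄, 1 ≤ i → i ≤ j → f j ≤ f i)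
  {K : ℕ} (hK : ∀ i, K + 1 ≤ i → f i = 0)

include hanti hK in
lemma galois_aux {c j : ℕ} (hc : 1 ≤ c) (hj : 1 ≤ j) : j ≤ conjFn f c ↔ c ≤ f j := by
  unfold conjFn
  have hsub : {i : ℕ | 1 ≤ i ∧ c ≤ f i} ⊆ ↑(Finset.Icc 1 K) := by
    intro i hi
    simp only [Set.mem_setOf_eq] at hi
    simp only [Finset.coe_Icc, Set.mem_Icc]
    refine ⟨hi.1, ?_⟩
    by_contra h
    have := hK i (by omega)
    omega
  have hfin : {i : ℕ | 1 ≤ i ∧ c ≤ f i}.Finite :=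
    Set.Finite.subset (Finset.Icc 1 K).finite_toSet hsub
  constructor
  · intro h
    by_contra hcf
    have hsub2 : {i : ℕ | 1 ≤ i ∧ c ≤ f i} ⊆ ↑(Finset.Icc 1 (j-1)) := by
      intro i hi
      simp only [Set.mem_setOf_eq] at hi
      simp only [Finset.coe_Icc, Set.mem_Icc]
      refine ⟨hi.1, ?_⟩
      by_contra hcon
      have : f i ≤ f j := hanti hj (by omega)
      omega
    have := Set.ncard_le_ncard hsub2 (Finset.Icc 1 (j-1)).finite_toSet
    rw [Set.ncard_coe_finset, Nat.card_Icc] at this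
    omega
  · intro h
    have hsub2 : ↑(Finset.Icc 1 j) ⊆ {i : ℕ | 1 ≤ i ∧ c ≤ f i} := by
      intro i hi
      simp only [Finset.coe_Icc, Set.mem_Icc] at hi
      exact ⟨hi.1, le_trans h (hanti hi.1 hi.2)⟩
    have := Set.ncard_le_ncard hsub2 hfin
    rw [Set.ncard_coe_finset, Nat.card_Icc] at this
    omega

lemma conj_zero : conjFn f 0 = 0 := by
  unfold conjFn
  have : {i : ℕ | 1 ≤ i ∧ 0 ≤ f i} = Set.Ici 1 := by
    ext i; simp
  rw [this]
  exact Set.Infinite.ncard (Set.Ici_infinite 1)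

omit hf0 in
include hanti in
lemma conj_eq_zero_of_gt {c : ℕ} (hc : f 1 < c) : conjFn f c = 0 := by
  unfold conjFn
  have : {i : ℕ | 1 ≤ i ∧ c ≤ f i} = ∅ := by
    ext i
    simp only [Set.mem_setOf_eq, Set.mem_empty_iff_false, iff_false, not_and, not_le]
    intro hi
    exact lt_of_le_of_lt (hanti le_rfl hi) hc
  rw [this, Set.ncard_empty]

include hanti hK in
lemma conj_conj {j : ℕ} (hj : 1 ≤ j) : conjFn (conjFn f) j = f j := by
  rw [show conjFn (conjFn f) j = Set.ncard {c : ℕ | 1 ≤ c ∧ j ≤ conjFn f c} from rfl]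
  have : {c : ℕ | 1 ≤ c ∧ j ≤ conjFn f c} = ↑(Finset.Icc 1 (f j)) := by
    ext c
    simp only [Set.mem_setOf_eq, Finset.coe_Icc, Set.mem_Icc]
    constructor
    · rintro ⟨h1, h2⟩
      exact ⟨h1, (galois_aux hanti hK h1 hj).mp h2⟩
    · rintro ⟨h1, h2⟩
      exact ⟨h1, (galois_aux hanti hK h1 hj).mpr h2⟩
  rw [this, Set.ncard_coe_finset, Nat.card_Icc]
  omega

end Part

-- regroup: sum over Icc 1 (a 1) as sum over fibers Ioc (a (k+1)) (a k)
lemma regroup (a : ℕ → ℕ) (t : ℕ → ℤ) :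
    ∀ K : ℕ, (∀ i j, 1 ≤ i → i ≤ j → j ≤ K + 1 → a j ≤ a i) →
    ∑ k ∈ Finset.Icc 1 K, ∑ c ∈ Finset.Ioc (a (k+1)) (a k), t c
      = ∑ c ∈ Finset.Ioc (a (K+1)) (a 1), t c := by
  intro K
  induction K with
  | zero => intro _; simp
  | succ K ih =>
    intro hmono
    rw [Finset.sum_Icc_succ_top (by omega), ih (fun i j h1 h2 h3 => hmono i j h1 h2 (by omega))]
    rw [add_comm]
    exact Finset.sum_Ioc_consecutive t (hmono (K+1) (K+2) (by omega) (by omega) (by omega))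
      (hmono 1 (K+1) le_rfl (by omega) (by omega))

lemma reindex (h : ℕ → ℤ) : ∀ K : ℕ,
    ∑ k ∈ Finset.Icc 1 K, h (k+1) = (∑ k ∈ Finset.Icc 1 (K+1), h k) - h 1 := by
  intro K
  induction K with
  | zero => simp
  | succ K ih =>
    rw [Finset.sum_Icc_succ_top (a := 1) (b := K) (by omega),
      Finset.sum_Icc_succ_top (a := 1) (b := K+1) (by omega), ih]
    ring

lemma swap_tri (h : ℕ → ℕ → ℤ) : ∀ K : ℕ,
    ∑ k ∈ Finset.Icc 1 K, ∑ j ∈ Finset.Ico 1 k, h j k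
      = ∑ j ∈ Finset.Icc 1 K, ∑ k ∈ Finset.Ioc j K, h j k := by
  intro K
  induction K with
  | zero => simp
  | succ K ih =>
    rw [Finset.sum_Icc_succ_top (by omega), ih,
      Finset.sum_Icc_succ_top (a := 1) (b := K) (by omega)]
    have h1 : ∀ j ∈ Finset.Icc 1 K, ∑ k ∈ Finset.Ioc j (K+1), h j k
        = (∑ k ∈ Finset.Ioc j K, h j k) + h j (K+1) := by
      intro j hj
      simp only [Finset.mem_Icc] at hj
      rw [Finset.sum_Ioc_succ_top (by omega)]
    rw [Finset.sum_congr rfl h1, Finset.sum_add_distrib]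
    have h2 : ∑ j ∈ Finset.Ico 1 (K+1), h j (K+1) = ∑ j ∈ Finset.Icc 1 K, h j (K+1) := by
      congr 1
    simp only [Finset.Ioc_self, Finset.sum_empty, add_zero]
    rw [h2]

lemma pair_sq (δ : ℕ → ℤ) (hδ : ∀ j, δ j = 1 ∨ δ j = -1) : ∀ K : ℕ,
    (∑ j ∈ Finset.Icc 1 K, δ j)^2
      = K + 2 * ∑ k ∈ Finset.Icc 1 K, ∑ j ∈ Finset.Ico 1 k, δ j * δ k := by
  intro K
  induction K with
  | zero => simp
  | succ K ih =>
    rw [Finset.sum_Icc_succ_top (by omega), Finset.sum_Icc_succ_top (a := 1) (b := K) (by omega),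
      add_sq, ih]
    have h2 : ∑ j ∈ Finset.Ico 1 (K+1), δ j * δ (K+1)
        = (∑ j ∈ Finset.Icc 1 K, δ j) * δ (K+1) := by
      rw [Finset.sum_mul]
      congr 1
    have h3 : δ (K+1) ^ 2 = 1 := by rcases hδ (K+1) with h | h <;> rw [h] <;> ring
    rw [h2, h3]
    push_cast
    ring

lemma tiling_delta_zero (f : ℕ → ℕ)
    (hanti : ∀ ⦃i j : ℕ⦄, 1 ≤ i → i ≤ j → f j ≤ f i)
    (K : ℕ) (hK : ∀ i, K + 1 ≤ i → f i = 0) (hKeven : ((-1:ℤ))^K = 1)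
    (ht : HasDominoTiling f) :
    ∑ k ∈ Finset.Icc 1 K, ((-1:ℤ))^(f k + k) = 0 := by
  classical
  set w : ℕ × ℕ → ℤ := fun p => (-1:ℤ)^(p.1 + p.2) with hw
  set P : Finset (ℕ × ℕ) :=
    ((Finset.Icc 1 K) ×ˢ (Finset.Icc 1 (f 1))).filter (fun p => p.2 ≤ f p.1) with hP
  have hset : cellsFn f = ↑P := by
    ext p
    simp only [cellsFn, Set.mem_setOf_eq, hP, Finset.coe_filter, Finset.mem_product,
      Finset.mem_Icc]
    constructor
    · rintro ⟨h1, h2, h3⟩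
      have hp1 : p.1 ≤ K := by
        by_contra hcon
        have := hK p.1 (by omega)
        omega
      have hp2 : p.2 ≤ f 1 := le_trans h3 (hanti le_rfl h1)
      exact ⟨⟨⟨h1, hp1⟩, h2, hp2⟩, h3⟩
    · rintro ⟨⟨⟨h1, _⟩, h2, _⟩, h3⟩
      exact ⟨h1, h2, h3⟩
  have hfin : (cellsFn f).Finite := by rw [hset]; exact P.finite_toSet
  obtain ⟨D, hdom, hdisj, hun⟩ := ht
  have hDfin : D.Finite := by
    apply Set.Finite.subset hfin.finite_subsets
    intro d hd
    rw [← hun]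
    exact Set.subset_sUnion_of_mem hd
  have hzero : (∑ᶠ p ∈ cellsFn f, w p) = 0 := by
    rw [← hun, finsum_mem_sUnion hdisj hDfin
      (fun d hd => hfin.subset (hun ▸ Set.subset_sUnion_of_mem hd))]
    have hdz : ∀ d ∈ D, (∑ᶠ p ∈ d, w p) = 0 := by
      intro d hd
      obtain ⟨i, j, hcase | hcase⟩ := hdom d hd
      · rw [hcase, finsum_mem_pair (by simp)]
        simp only [hw]
        rw [show i + (j+1) = (i+j)+1 by omega, pow_succ]
        ring
      · rw [hcase, finsum_mem_pair (by simp)]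
        simp only [hw]
        rw [show (i+1) + j = (i+j)+1 by omega, pow_succ]
        ring
    rw [finsum_mem_congr rfl hdz]
    simp
  have hPsum : ∑ p ∈ P, w p = 0 := by
    rw [← finsum_mem_coe_finset, ← hset]
    exact hzero
  have hexp : ∑ p ∈ P, w p
      = ∑ i ∈ Finset.Icc 1 K, ((-1:ℤ))^i * ∑ j ∈ Finset.Icc 1 (f i), ((-1:ℤ))^j := by
    rw [hP, Finset.sum_filter, Finset.sum_product]
    apply Finset.sum_congr rfl
    intro i hi
    simp only [Finset.mem_Icc] at hi
    rw [← Finset.sum_filter]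
    have hfi : Finset.filter (fun j => j ≤ f i) (Finset.Icc 1 (f 1)) = Finset.Icc 1 (f i) := by
      ext j
      simp only [Finset.mem_filter, Finset.mem_Icc]
      have : f i ≤ f 1 := hanti le_rfl hi.1
      omega
    rw [hfi, Finset.mul_sum]
    apply Finset.sum_congr rfl
    intro j _
    rw [hw]
    simp only
    rw [pow_add]
  have key : ∑ k ∈ Finset.Icc 1 K, (((-1:ℤ))^(f k + k) - ((-1:ℤ))^k) = 0 := by
    have step : ∀ k ∈ Finset.Icc 1 K, (((-1:ℤ))^(f k + k) - ((-1:ℤ))^k)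
        = ((-1:ℤ))^k * (2 * ∑ j ∈ Finset.Icc 1 (f k), ((-1:ℤ))^j) := by
      intro k _
      rw [alt1, pow_add]
      ring
    rw [Finset.sum_congr rfl step]
    have : ∑ k ∈ Finset.Icc 1 K, ((-1:ℤ))^k * (2 * ∑ j ∈ Finset.Icc 1 (f k), ((-1:ℤ))^j)
        = 2 * ∑ k ∈ Finset.Icc 1 K, ((-1:ℤ))^k * ∑ j ∈ Finset.Icc 1 (f k), ((-1:ℤ))^j := by
      rw [Finset.mul_sum]
      apply Finset.sum_congr rfl
      intro k _
      ring
    rw [this, ← hexp, hPsum]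
    ring
  rw [Finset.sum_sub_distrib] at key
  have halt : 2 * ∑ k ∈ Finset.Icc 1 K, ((-1:ℤ))^k = 0 := by
    rw [alt1, hKeven]
    ring
  omega

lemma altIoc (k a b : ℕ) (hab : a ≤ b) :
    4 * ∑ c ∈ Finset.Ioc a b, ((-1:ℤ))^(k+c+1) * ((k:ℤ) - c)
      = (-1:ℤ)^(k+1) * ((-1)^b * (2*(k:ℤ) - 2*b - 1) - (-1)^a * (2*(k:ℤ) - 2*a - 1)) := by
  have hcons := Finset.sum_Ioc_consecutive
    (fun c => ((-1:ℤ))^(k+c+1) * ((k:ℤ) - c)) (Nat.zero_le a) hab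
  have ha := altH k a
  have hb := altH k b
  linear_combination hb - ha + 4 * hcons

lemma sum2k : ∀ K : ℕ, ∑ k ∈ Finset.Icc 1 K, (2*(k:ℤ)) = (K:ℤ)*(K+1) := by
  intro K
  induction K with
  | zero => simp
  | succ K ih =>
    rw [Finset.sum_Icc_succ_top (by omega), ih]
    push_cast
    ring


/-- for `λ` with at most `2n` parts and empty 2-core,
`b(λ') = |λ|/2 − n² − n + Σ_{1≤i<j≤2n} (−1)^{λ_i−λ_j+j−i}(λ_j−j)`. -/
theorem b_conj_formula (n : ℕ) (hn : 0 < n) (μ : OneIndexedPartition)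
    (hlen : μ.part (2 * n + 1) = 0) (ht : HasDominoTiling μ.part) :
    bFn (conjFn μ.part) =
      (sizeFn μ.part : ℤ) / 2 - (n : ℤ) ^ 2 - (n : ℤ) +
        ∑ i ∈ Finset.Icc 1 (2 * n), ∑ j ∈ Finset.Ioc i (2 * n),
          (-1 : ℤ) ^ (μ.part i + μ.part j + i + j) * ((μ.part j : ℤ) - (j : ℤ)) := by
  classical
  set f := μ.part with hfdef
  have hanti := μ.antitone
  have hf0 := μ.part_zero
  set K := 2 * n with hKdef
  have hK : ∀ i, K + 1 ≤ i → f i = 0 := by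
    intro i hi
    have h3 : f i ≤ f (K + 1) := hanti (by omega) hi
    omega
  set g := conjFn f with hgdef
  set δ : ℕ → ℤ := fun k => (-1:ℤ)^(f k + k) with hδdef
  set A : ℕ → ℤ := fun m => ∑ j ∈ Finset.Icc 1 m, δ j with hAdef
  have hgal : ∀ c j, 1 ≤ c → 1 ≤ j → (j ≤ g c ↔ c ≤ f j) :=
    fun c j hc hj => galois_aux hanti hK hc hj
  have hcc : ∀ j, 1 ≤ j → conjFn g j = f j := fun j hj => conj_conj hanti hK hj
  have hg0 : g 0 = 0 := conj_zero
  have hggt : ∀ c, f 1 < c → g c = 0 := fun c hc => conj_eq_zero_of_gt hanti hc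
  -- the key balance condition from the domino tiling
  have hbal : A K = 0 := tiling_delta_zero f hanti K hK
    (by rw [hKdef, pow_mul]; norm_num) ht
  have hδsq : ∀ j, δ j * δ j = 1 := by
    intro j
    simp only [hδdef]
    rw [← pow_add, show (f j + j) + (f j + j) = 2 * (f j + j) by ring, pow_mul]
    norm_num
  -- Step 1: bFn g as a finite sum over columns
  have h1 : bFn g = ∑ c ∈ Finset.Icc 1 (f 1), ∑ j ∈ Finset.Icc 1 (g c),
      (-1:ℤ)^(g c + f j + c + j + 1) * ((g c : ℤ) - c) := by
    rw [bFn]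
    rw [finsum_eq_sum_of_support_subset _ (s := Finset.Icc 1 (f 1)) ?hsupp]
    · apply Finset.sum_congr rfl
      intro c _
      apply Finset.sum_congr rfl
      intro j hj
      simp only [Finset.mem_Icc] at hj
      rw [hcc j hj.1]
    · intro c hc
      simp only [Function.mem_support] at hc
      simp only [Finset.coe_Icc, Set.mem_Icc]
      by_contra hcon
      have hgc : g c = 0 := by
        rcases Nat.lt_or_ge c 1 with h | h
        · interval_cases c
          exact hg0
        · exact hggt c (by omega)
      rw [hgc] at hc
      simp at hc
  -- Step 2: regroup by the value k = g c
  have hmono' : ∀ i j, 1 ≤ i → i ≤ j → j ≤ K + 1 → f j ≤ f i :=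
    fun i j hi hij _ => hanti hi hij
  have hIoc0 : Finset.Ioc 0 (f 1) = Finset.Icc 1 (f 1) := by
    ext c
    simp only [Finset.mem_Ioc, Finset.mem_Icc]
    omega
  have hfib : ∀ k, k ∈ Finset.Icc 1 K → ∀ c, c ∈ Finset.Ioc (f (k+1)) (f k) → g c = k := by
    intro k hk c hc
    simp only [Finset.mem_Icc] at hk
    simp only [Finset.mem_Ioc] at hc
    have hc1 : 1 ≤ c := by omega
    have hle : k ≤ g c := (hgal c k hc1 hk.1).mpr hc.2
    have hlt : ¬ (k + 1 ≤ g c) := by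
      intro hcon
      have := (hgal c (k+1) hc1 (by omega)).mp hcon
      omega
    omega
  have h2 : bFn g = ∑ k ∈ Finset.Icc 1 K, ∑ c ∈ Finset.Ioc (f (k+1)) (f k),
      ((-1:ℤ)^(k + c + 1) * ((k:ℤ) - c)) * A k := by
    rw [h1, ← hIoc0, ← hK (K+1) le_rfl]
    rw [← regroup f (fun c => ∑ j ∈ Finset.Icc 1 (g c),
      (-1:ℤ)^(g c + f j + c + j + 1) * ((g c : ℤ) - c)) K hmono']
    apply Finset.sum_congr rfl
    intro k hk
    apply Finset.sum_congr rfl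
    intro c hc
    rw [hfib k hk c hc]
    have : ∀ j ∈ Finset.Icc 1 k, (-1:ℤ)^(k + f j + c + j + 1) * ((k : ℤ) - c)
        = ((-1:ℤ)^(k + c + 1) * ((k:ℤ) - c)) * δ j := by
      intro j _
      simp only [hδdef]
      rw [show k + f j + c + j + 1 = (k + c + 1) + (f j + j) by omega, pow_add]
      ring
    rw [Finset.sum_congr rfl this, ← Finset.mul_sum]
  -- Step 3: closed form of the inner sums
  set Q : ℕ → ℤ := fun k => 2*(f k : ℤ) - 2*(k:ℤ) + 1 with hQdef
  have h3 : 4 * bFn g = ∑ k ∈ Finset.Icc 1 K,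
      A k * (δ k * Q k + δ (k+1) * (Q (k+1) + 2)) := by
    rw [h2, Finset.mul_sum]
    apply Finset.sum_congr rfl
    intro k hk
    simp only [Finset.mem_Icc] at hk
    rw [← Finset.sum_mul, show (4:ℤ) * ((∑ c ∈ Finset.Ioc (f (k+1)) (f k),
      (-1:ℤ)^(k + c + 1) * ((k:ℤ) - c)) * A k)
        = (4 * ∑ c ∈ Finset.Ioc (f (k+1)) (f k),
            (-1:ℤ)^(k + c + 1) * ((k:ℤ) - c)) * A k by ring]
    rw [altIoc k (f (k+1)) (f k) (hanti hk.1 (by omega))]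
    simp only [hδdef, hQdef]
    rw [pow_add (-1:ℤ) (f k) k, pow_add (-1:ℤ) (f (k+1)) (k+1),
      pow_succ (-1:ℤ) k]
    push_cast
    ring
  -- Step 4: shift the (k+1)-part
  have hAsucc : ∀ k : ℕ, A (k+1) = A k + δ (k+1) := by
    intro k
    simp only [hAdef]
    rw [Finset.sum_Icc_succ_top (by omega)]
  set E : ℕ → ℤ := fun k => (A k * δ k - 1) * (Q k + 2) with hEdef
  have h4 : 4 * bFn g = ∑ k ∈ Finset.Icc 1 K, (A k * δ k * Q k + E (k+1)) := by
    rw [h3]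
    apply Finset.sum_congr rfl
    intro k _
    simp only [hEdef]
    rw [hAsucc k]
    linear_combination (-(Q (k+1) + 2)) * hδsq (k+1)
  -- Step 5: Abel summation / shifting
  have h5 : 4 * bFn g = (∑ k ∈ Finset.Icc 1 K, A k * δ k * Q k)
      + ∑ k ∈ Finset.Icc 1 K, E (k+1) := by
    rw [h4, Finset.sum_add_distrib]
  have hE1 : E 1 = 0 := by
    have hA1 : A 1 = δ 1 := by
      simp only [hAdef]
      rw [Finset.Icc_self, Finset.sum_singleton]
    simp only [hEdef]
    rw [hA1]
    linear_combination (Q 1 + 2) * hδsq 1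
  have hEK : E (K+1) = 0 := by
    simp only [hEdef]
    rw [hAsucc K, hbal]
    linear_combination (Q (K+1) + 2) * hδsq (K+1)
  have h6 : ∑ k ∈ Finset.Icc 1 K, E (k+1) = ∑ k ∈ Finset.Icc 1 K, E k := by
    rw [reindex E K, Finset.sum_Icc_succ_top (show 1 ≤ K+1 by omega) E, hEK, hE1]
    ring
  have h7 : 4 * bFn g = ∑ k ∈ Finset.Icc 1 K,
      (Q k + 2 * (∑ j ∈ Finset.Ico 1 k, δ j * δ k) * (Q k + 1)) := by
    rw [h5, h6, ← Finset.sum_add_distrib]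
    apply Finset.sum_congr rfl
    intro k hk
    simp only [Finset.mem_Icc] at hk
    have hsplit : A k = (∑ j ∈ Finset.Ico 1 k, δ j) + δ k := by
      simp only [hAdef]
      rw [← Finset.Ico_add_one_right_eq_Icc 1 k, Finset.sum_Ico_succ_top hk.1]
    simp only [hEdef]
    rw [hsplit, ← Finset.sum_mul]
    linear_combination (2 * Q k + 2) * hδsq k
  -- Step 6: expand into the three pieces
  set X : ℤ := ∑ k ∈ Finset.Icc 1 K, ∑ j ∈ Finset.Ico 1 k,
    δ j * δ k * ((f k : ℤ) - (k:ℤ)) with hXdef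
  set P2 : ℤ := ∑ k ∈ Finset.Icc 1 K, ∑ j ∈ Finset.Ico 1 k, δ j * δ k with hP2def
  set S : ℤ := ∑ k ∈ Finset.Icc 1 K, (f k : ℤ) with hSdef
  have h4X : 4 * X = ∑ k ∈ Finset.Icc 1 K, ∑ j ∈ Finset.Ico 1 k,
      4 * (δ j * δ k * ((f k : ℤ) - (k:ℤ))) := by
    rw [hXdef, Finset.mul_sum]
    apply Finset.sum_congr rfl
    intro k _
    rw [Finset.mul_sum]
  have h4P : 4 * P2 = ∑ k ∈ Finset.Icc 1 K, ∑ j ∈ Finset.Ico 1 k, 4 * (δ j * δ k) := by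
    rw [hP2def, Finset.mul_sum]
    apply Finset.sum_congr rfl
    intro k _
    rw [Finset.mul_sum]
  have h8 : 4 * bFn g = (∑ k ∈ Finset.Icc 1 K, Q k) + 4 * X + 4 * P2 := by
    rw [h7, Finset.sum_add_distrib, h4X, h4P, add_assoc]
    congr 1
    rw [← Finset.sum_add_distrib]
    apply Finset.sum_congr rfl
    intro k _
    rw [Finset.mul_sum, Finset.sum_mul, ← Finset.sum_add_distrib]
    apply Finset.sum_congr rfl
    intro j _
    simp only [hQdef]
    ring
  have hsumQ : ∑ k ∈ Finset.Icc 1 K, Q k = 2 * S - (K:ℤ) * (K:ℤ) := by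
    have e1 : ∀ k ∈ Finset.Icc 1 K, Q k = 2 * (f k:ℤ) + 1 - 2*(k:ℤ) := by
      intro k _
      simp only [hQdef]
      ring
    rw [Finset.sum_congr rfl e1, Finset.sum_sub_distrib, Finset.sum_add_distrib, sum2k K,
      Finset.sum_const, Nat.card_Icc, hSdef, Finset.mul_sum]
    simp only [Nat.add_sub_cancel, nsmul_eq_mul, mul_one]
    ring
  have hδpm : ∀ j, δ j = 1 ∨ δ j = -1 := by
    intro j
    simp only [hδdef]
    rcases Nat.even_or_odd (f j + j) with h | h
    · left; exact h.neg_one_pow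
    · right; exact h.neg_one_pow
  have hpair2 : 2 * P2 = -(K:ℤ) := by
    have := pair_sq δ hδpm K
    have hb : (∑ j ∈ Finset.Icc 1 K, δ j) = 0 := hbal
    rw [hb] at this
    simp only [hP2def]
    omega
  have hX' : X = ∑ i ∈ Finset.Icc 1 K, ∑ j ∈ Finset.Ioc i K,
      δ i * δ j * ((f j : ℤ) - (j:ℤ)) := by
    rw [hXdef]
    exact swap_tri (fun j k => δ j * δ k * ((f k : ℤ) - (k:ℤ))) K
  have hgs : ∑ i ∈ Finset.Icc 1 K, ∑ j ∈ Finset.Ioc i K,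
      (-1 : ℤ) ^ (f i + f j + i + j) * ((f j : ℤ) - (j : ℤ)) = X := by
    rw [hX']
    apply Finset.sum_congr rfl
    intro i _
    apply Finset.sum_congr rfl
    intro j _
    simp only [hδdef]
    rw [show f i + f j + i + j = (f i + i) + (f j + j) by omega, pow_add]
  have hsize : (sizeFn f : ℤ) = S := by
    have e1 : sizeFn f = ∑ k ∈ Finset.Icc 1 K, f k := by
      rw [sizeFn]
      apply finsum_eq_sum_of_support_subset
      intro i hi
      simp only [Function.mem_support] at hi
      simp only [Finset.coe_Icc, Set.mem_Icc]
      constructor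
      · rcases Nat.eq_zero_or_pos i with h | h
        · exact absurd (h ▸ hf0) hi
        · omega
      · by_contra hcon
        exact hi (hK i (by omega))
    rw [e1, hSdef]
    push_cast
    ring
  have hfinal : 4 * bFn g = 2 * S - (K:ℤ) * (K:ℤ) + 4 * X + 2 * (2 * P2) := by
    rw [h8, hsumQ]
    ring
  rw [hpair2] at hfinal
  rw [hgs, hsize]
  have hKcast : (K:ℤ) = 2 * (n:ℤ) := by rw [hKdef]; push_cast; ring
  have hn2 : 4 * (n:ℤ)^2 = (K:ℤ) * (K:ℤ) := by rw [hKcast]; ring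
  generalize bFn g = B at hfinal ⊢
  generalize hgen : (n:ℤ)^2 = N2 at hn2 ⊢
  generalize (n:ℤ) = nu at hKcast hn2 hfinal ⊢
  omega
end

section
/- Let n be a positive integer and let λ be a partition with at most 2n parts whose Young diagram can be tiled by dominoes, padded with zeros so that λ_1, …, λ_{2n} are defined. Then Σ_{i=1}^{2n} Σ_{j=1}^{λ_i+2n−i} (−1)^{λ_i − i − j + 1}(2n − j) + Σ_{1≤i<j≤2n} (−1)^{λ_i − λ_j + j − i} = |λ|/2 − n^2 − n. -/
/-- A partition `λ`, 1-indexed: `λ_i = part i` for `i ≥ 1`. -/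
structure YPartition where
  part : ℕ → ℕ
  part_zero : part 0 = 0
  antitone : ∀ ⦃i j : ℕ⦄, 1 ≤ i → i ≤ j → part j ≤ part i
  finite : ∃ N : ℕ, ∀ i : ℕ, N ≤ i → part i = 0

/-! ### Auxiliary arithmetic lemmas -/

lemma negOnePow_eq (m : ℕ) :
    (-1 : ℤ) ^ m = 1 + 2 * ∑ j ∈ Finset.Icc 1 m, (-1 : ℤ) ^ j := by
  induction m with
  | zero => simp
  | succ m ih =>
    rw [Finset.sum_Icc_succ_top (by omega), pow_succ]
    linarith

lemma gauss_Icc (m : ℕ) : 2 * ∑ i ∈ Finset.Icc 1 m, (i : ℤ) = m * (m + 1) := by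
  induction m with
  | zero => simp
  | succ m ih =>
    rw [Finset.sum_Icc_succ_top (by omega)]
    push_cast
    linarith

lemma Tsum (N m : ℕ) :
    2 * ∑ j ∈ Finset.Icc 1 m, (-1 : ℤ) ^ j * ((N : ℤ) - j)
      = if Odd m then (m : ℤ) + 1 - 2 * N else -(m : ℤ) := by
  induction m with
  | zero => simp
  | succ m ih =>
    rw [Finset.sum_Icc_succ_top (by omega)]
    rcases Nat.even_or_odd m with he | ho
    · rw [if_neg (by simp [Nat.not_odd_iff_even.mpr he])] at ih
      rw [if_pos he.add_one, pow_succ, he.neg_one_pow]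
      push_cast
      linarith
    · rw [if_pos ho] at ih
      rw [if_neg (by simp [Nat.not_odd_iff_even.mpr ho.add_one]), pow_succ, ho.neg_one_pow]
      push_cast
      linarith

lemma sq_sum_triangle (x : ℕ → ℤ) (m : ℕ) :
    (∑ i ∈ Finset.Icc 1 m, x i) ^ 2
      = ∑ i ∈ Finset.Icc 1 m, (x i) ^ 2
        + 2 * ∑ i ∈ Finset.Icc 1 m, ∑ j ∈ Finset.Ioc i m, x i * x j := by
  induction m with
  | zero => simp
  | succ m ih =>
    rw [Finset.sum_Icc_succ_top (by omega), Finset.sum_Icc_succ_top (by omega),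
      Finset.sum_Icc_succ_top (by omega : (1:ℕ) ≤ m + 1)
        (fun i => ∑ j ∈ Finset.Ioc i (m+1), x i * x j)]
    have h1 : ∀ i ∈ Finset.Icc 1 m,
        ∑ j ∈ Finset.Ioc i (m+1), x i * x j
          = (∑ j ∈ Finset.Ioc i m, x i * x j) + x i * x (m+1) := by
      intro i hi
      exact Finset.sum_Ioc_succ_top (Finset.mem_Icc.mp hi).2 _
    rw [Finset.sum_congr rfl h1, Finset.sum_add_distrib, ← Finset.sum_mul]
    rw [show Finset.Ioc (m+1) (m+1) = ∅ from Finset.Ioc_self _]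
    simp only [Finset.sum_empty]
    linear_combination ih

/-! ### The tiling parity lemma -/

lemma tiling_parity_sum {f : ℕ → ℕ} (ht : HasDominoTiling f) (N : ℕ)
    (hzero : ∀ i, N < i → f i = 0) :
    ∑ i ∈ Finset.Icc 1 N, ∑ j ∈ Finset.Icc 1 (f i), (-1 : ℤ) ^ (i + j) = 0 := by
  classical
  obtain ⟨D, hdom, hdisj, hcover⟩ := ht
  set Rel : ℕ × ℕ → ℕ × ℕ → Prop :=
    fun p q => p ≠ q ∧ ({p, q} : Set (ℕ × ℕ)) ∈ D with hRel
  have hsymm : ∀ p q, Rel p q → Rel q p := by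
    intro p q ⟨h1, h2⟩
    exact ⟨h1.symm, by rwa [Set.pair_comm]⟩
  have huniq : ∀ p q q', Rel p q → Rel p q' → q = q' := by
    intro p q q' ⟨h1, h2⟩ ⟨h1', h2'⟩
    by_cases hdd : ({p, q} : Set (ℕ × ℕ)) = {p, q'}
    · have := Set.pair_eq_pair_iff.mp hdd
      rcases this with ⟨hp, hq⟩ | ⟨hp, hq⟩
      · exact hq
      · exact hq.trans hp
    · have hd := hdisj h2 h2' hdd
      exact absurd (Set.mem_insert p {q'})
        (Set.disjoint_left.mp hd (Set.mem_insert p {q}))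
  have hex : ∀ p ∈ cellsFn f, ∃ q, Rel p q := by
    intro p hp
    rw [← hcover] at hp
    obtain ⟨d, hd, hpd⟩ := hp
    obtain ⟨i, j, hcase | hcase⟩ := hdom d hd
    · subst hcase
      rcases hpd with rfl | rfl
      · exact ⟨(i, j + 1), by simp [hRel], hd⟩
      · refine ⟨(i, j), by simp [hRel], ?_⟩
        rwa [Set.pair_comm]
    · subst hcase
      rcases hpd with rfl | rfl
      · exact ⟨(i + 1, j), by simp [hRel], hd⟩
      · refine ⟨(i, j), by simp [hRel], ?_⟩
        rwa [Set.pair_comm]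
  have hmem' : ∀ p q, Rel p q → q ∈ cellsFn f := by
    intro p q ⟨h1, h2⟩
    rw [← hcover]
    exact ⟨{p, q}, h2, Set.mem_insert_of_mem _ rfl⟩
  have hpar : ∀ p q, Rel p q → (-1 : ℤ) ^ (p.1 + p.2) + (-1 : ℤ) ^ (q.1 + q.2) = 0 := by
    intro p q ⟨h1, h2⟩
    obtain ⟨i, j, hcase | hcase⟩ := hdom _ h2
    all_goals {
      have hodd : (p.1 + p.2 + (q.1 + q.2)) % 2 = 1 := by
        rcases Set.pair_eq_pair_iff.mp hcase with ⟨hp, hq⟩ | ⟨hp, hq⟩ <;>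
          subst hp <;> subst hq <;> simp <;> omega
      have h3 : Odd (p.1 + p.2 + (q.1 + q.2)) := Nat.odd_iff.mpr hodd
      rcases Nat.even_or_odd (p.1 + p.2) with he | ho
      · have hq : Odd (q.1 + q.2) := by
          rw [Nat.odd_iff] at h3 ⊢; rw [Nat.even_iff] at he; omega
        rw [he.neg_one_pow, hq.neg_one_pow]; ring
      · have hq : Even (q.1 + q.2) := by
          rw [Nat.odd_iff] at h3 ho; rw [Nat.even_iff]; omega
        rw [ho.neg_one_pow, hq.neg_one_pow]; ring }
  set C : Finset (ℕ × ℕ) :=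
    (Finset.Icc 1 N).biUnion (fun i => {i} ×ˢ Finset.Icc 1 (f i)) with hCdef
  have hC : ∀ p : ℕ × ℕ, p ∈ C ↔ p ∈ cellsFn f := by
    intro p
    simp only [hCdef, Finset.mem_biUnion, Finset.mem_product, Finset.mem_singleton,
      Finset.mem_Icc, cellsFn, Set.mem_setOf_eq]
    constructor
    · rintro ⟨i, ⟨hi1, hi2⟩, hp1, hp2⟩
      subst hp1
      exact ⟨hi1, hp2⟩
    · rintro ⟨h1, h2, h3⟩
      refine ⟨p.1, ⟨h1, ?_⟩, rfl, h2, h3⟩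
      by_contra h
      have := hzero p.1 (by omega)
      omega
  have hsum : ∑ p ∈ C, (-1 : ℤ) ^ (p.1 + p.2) = 0 := by
    have hexu : ∀ p ∈ C, ∃ q, Rel p q := fun p hp => hex p ((hC p).mp hp)
    refine Finset.sum_involution (fun p hp => (hexu p hp).choose) ?_ ?_ ?_ ?_
    · intro p hp
      exact hpar p _ (hexu p hp).choose_spec
    · intro p hp _
      exact fun h => (hexu p hp).choose_spec.1 h.symm
    · intro p hp
      exact (hC _).mpr (hmem' p _ (hexu p hp).choose_spec)
    · intro p hp
      have h1 := (hexu p hp).choose_spec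
      have h2 := (hexu _ ((hC _).mpr (hmem' p _ h1))).choose_spec
      exact huniq _ _ _ h2 (hsymm _ _ h1)
  rw [← hsum, hCdef, Finset.sum_biUnion]
  · refine Finset.sum_congr rfl fun i _ => ?_
    rw [Finset.sum_product, Finset.sum_singleton]
  · intro a _ b _ hab
    simp only [Function.onFun, Finset.disjoint_left, Finset.mem_product, Finset.mem_singleton]
    rintro p ⟨rfl, -⟩ ⟨h, -⟩
    exact hab h

/-! ### Main theorem -/

/-- for `λ` with at most `2n` parts and empty 2-core,
`Σ_{i=1}^{2n} Σ_{j=1}^{λ_i+2n−i} (−1)^{λ_i−i−j+1}(2n−j)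
  + Σ_{1≤i<j≤2n} (−1)^{λ_i−λ_j+j−i} = |λ|/2 − n² − n`. -/
theorem staircase_content_sum (n : ℕ) (hn : 0 < n) (μ : YPartition)
    (hlen : μ.part (2 * n + 1) = 0) (ht : HasDominoTiling μ.part) :
    (∑ i ∈ Finset.Icc 1 (2 * n), ∑ j ∈ Finset.Icc 1 (μ.part i + 2 * n - i),
        (-1 : ℤ) ^ (μ.part i + i + j + 1) * ((2 * n : ℤ) - (j : ℤ)))
      + (∑ i ∈ Finset.Icc 1 (2 * n), ∑ j ∈ Finset.Ioc i (2 * n),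
          (-1 : ℤ) ^ (μ.part i + μ.part j + i + j))
      = (sizeFn μ.part : ℤ) / 2 - (n : ℤ) ^ 2 - (n : ℤ) := by
  classical
  set I : Finset ℕ := Finset.Icc 1 (2 * n) with hI
  have hzero : ∀ i, 2 * n < i → μ.part i = 0 := by
    intro i hi
    have := μ.antitone (show 1 ≤ 2 * n + 1 by omega) (show 2 * n + 1 ≤ i by omega)
    omega
  have P0 := tiling_parity_sum ht (2 * n) hzero
  -- Σ (-1)^i = 0 over I
  have halt : ∑ i ∈ I, (-1 : ℤ) ^ i = 0 := by
    have h := negOnePow_eq (2 * n)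
    rw [Even.neg_one_pow ⟨n, by ring⟩] at h
    rw [hI]; linarith
  -- per-row expansion of (-1)^(λ_i+i)
  have hA : ∀ i : ℕ, (-1 : ℤ) ^ (μ.part i + i)
      = (-1 : ℤ) ^ i + 2 * ∑ j ∈ Finset.Icc 1 (μ.part i), (-1 : ℤ) ^ (i + j) := by
    intro i
    have h1 : ∑ j ∈ Finset.Icc 1 (μ.part i), (-1 : ℤ) ^ (i + j)
        = (-1 : ℤ) ^ i * ∑ j ∈ Finset.Icc 1 (μ.part i), (-1 : ℤ) ^ j := by
      rw [Finset.mul_sum]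
      exact Finset.sum_congr rfl fun j _ => pow_add _ i j
    rw [h1, pow_add, negOnePow_eq (μ.part i)]
    ring
  have X0 : ∑ i ∈ I, (-1 : ℤ) ^ (μ.part i + i) = 0 := by
    calc ∑ i ∈ I, (-1 : ℤ) ^ (μ.part i + i)
        = ∑ i ∈ I, ((-1 : ℤ) ^ i
            + 2 * ∑ j ∈ Finset.Icc 1 (μ.part i), (-1 : ℤ) ^ (i + j)) :=
          Finset.sum_congr rfl fun i _ => hA i
      _ = (∑ i ∈ I, (-1 : ℤ) ^ i)
            + 2 * ∑ i ∈ I, ∑ j ∈ Finset.Icc 1 (μ.part i), (-1 : ℤ) ^ (i + j) := by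
          rw [Finset.sum_add_distrib, Finset.mul_sum]
      _ = 0 := by rw [halt, hI, P0]; ring
  -- number of odd (λ_i + i) is n
  have hx_o : ∀ c : ℕ, (-1 : ℤ) ^ c = 1 - 2 * (if Odd c then (1 : ℤ) else 0) := by
    intro c
    rcases Nat.even_or_odd c with h | h
    · rw [h.neg_one_pow, if_neg (by simp [Nat.not_odd_iff_even.mpr h])]; ring
    · rw [h.neg_one_pow, if_pos h]; ring
  have hcard : (I.card : ℤ) = 2 * n := by
    rw [hI, Nat.card_Icc]; push_cast; ring
  have hO : ∑ i ∈ I, (if Odd (μ.part i + i) then (1 : ℤ) else 0) = n := by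
    have h1 : ∑ i ∈ I, ((1 : ℤ) - 2 * (if Odd (μ.part i + i) then (1 : ℤ) else 0)) = 0 := by
      have := Finset.sum_congr rfl (fun i (_ : i ∈ I) => (hx_o (μ.part i + i)).symm)
      rw [this, X0]
    rw [Finset.sum_sub_distrib, Finset.sum_const, ← Finset.mul_sum, nsmul_eq_mul,
      mul_one] at h1
    rw [hcard] at h1
    linarith
  -- row sums of the first double sum
  have hrow : ∀ i ∈ I,
      2 * ∑ j ∈ Finset.Icc 1 (μ.part i + 2 * n - i),
          (-1 : ℤ) ^ (μ.part i + i + j + 1) * ((2 * n : ℤ) - (j : ℤ))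
        = ((μ.part i + 2 * n - i : ℕ) : ℤ)
            + (if Odd (μ.part i + i) then 1 - 4 * (n : ℤ) else 0) := by
    intro i hi
    rw [hI, Finset.mem_Icc] at hi
    set c := μ.part i + i with hc
    set m := μ.part i + 2 * n - i with hm
    have e1 : ∀ j ∈ Finset.Icc 1 m, (-1 : ℤ) ^ (c + j + 1) * ((2 * n : ℤ) - (j : ℤ))
        = (-1 : ℤ) ^ (c + 1) * ((-1 : ℤ) ^ j * (((2 * n : ℕ) : ℤ) - (j : ℤ))) := by
      intro j _
      rw [show c + j + 1 = (c + 1) + j by ring, pow_add]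
      push_cast
      ring
    rw [Finset.sum_congr rfl e1, ← Finset.mul_sum]
    have hT := Tsum (2 * n) m
    rcases Nat.even_or_odd c with hc2 | hc2
    · have hme : Even m := by
        rw [Nat.even_iff] at hc2 ⊢; omega
      rw [if_neg (by simp [Nat.not_odd_iff_even.mpr hme])] at hT
      rw [if_neg (by simp [Nat.not_odd_iff_even.mpr hc2]), pow_succ, hc2.neg_one_pow]
      push_cast at hT ⊢
      linarith
    · have hmo : Odd m := by
        rw [Nat.odd_iff] at hc2 ⊢; omega
      rw [if_pos hmo] at hT
      rw [if_pos hc2, pow_succ, hc2.neg_one_pow]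
      push_cast at hT ⊢
      linarith
  -- the size as a finite sum
  have hsize : (sizeFn μ.part : ℤ) = ∑ i ∈ I, (μ.part i : ℤ) := by
    have hsupp : Function.support μ.part ⊆ ↑I := by
      intro i hi
      simp only [Function.mem_support] at hi
      rw [hI, Finset.coe_Icc, Set.mem_Icc]
      constructor
      · by_contra h
        have : i = 0 := by omega
        rw [this, μ.part_zero] at hi
        exact hi rfl
      · by_contra h
        exact hi (hzero i (by omega))
    rw [sizeFn, finsum_eq_sum_of_support_subset μ.part hsupp]
    push_cast
    rfl
  -- Gauss
  have hg : 2 * ∑ i ∈ I, (i : ℤ) = (2 * n) * (2 * n + 1) := by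
    have := gauss_Icc (2 * n)
    rw [hI]
    push_cast at this ⊢
    linarith
  -- sum of the m_i
  have hmsum : ∑ i ∈ I, ((μ.part i + 2 * n - i : ℕ) : ℤ)
      = (sizeFn μ.part : ℤ) + ∑ i ∈ I, (2 * (n : ℤ) - (i : ℤ)) := by
    rw [hsize, ← Finset.sum_add_distrib]
    refine Finset.sum_congr rfl fun i hi => ?_
    rw [hI, Finset.mem_Icc] at hi
    have : i ≤ μ.part i + 2 * n := by omega
    push_cast [Nat.cast_sub this]
    ring
  have hconst : ∑ i ∈ I, (2 * (n : ℤ) - (i : ℤ))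
      = (2 * n) * (2 * (n : ℤ)) - ∑ i ∈ I, (i : ℤ) := by
    rw [Finset.sum_sub_distrib, Finset.sum_const, nsmul_eq_mul, hcard]
  -- first double sum
  set S1 := ∑ i ∈ Finset.Icc 1 (2 * n), ∑ j ∈ Finset.Icc 1 (μ.part i + 2 * n - i),
      (-1 : ℤ) ^ (μ.part i + i + j + 1) * ((2 * n : ℤ) - (j : ℤ)) with hS1def
  have h2S1 : 2 * S1 = (sizeFn μ.part : ℤ) - 2 * (n : ℤ) ^ 2 := by
    have e2 : 2 * S1 = ∑ i ∈ I, (((μ.part i + 2 * n - i : ℕ) : ℤ)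
        + (if Odd (μ.part i + i) then 1 - 4 * (n : ℤ) else 0)) := by
      rw [hS1def, Finset.mul_sum, ← hI]
      exact Finset.sum_congr rfl hrow
    have e3 : ∑ i ∈ I, (if Odd (μ.part i + i) then 1 - 4 * (n : ℤ) else 0)
        = (1 - 4 * (n : ℤ)) * ∑ i ∈ I, (if Odd (μ.part i + i) then (1 : ℤ) else 0) := by
      rw [Finset.mul_sum]
      refine Finset.sum_congr rfl fun i _ => ?_
      split_ifs <;> ring
    rw [e2, Finset.sum_add_distrib, e3, hO, hmsum, hconst]
    linarith
  -- second double sum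
  set S2 := ∑ i ∈ Finset.Icc 1 (2 * n), ∑ j ∈ Finset.Ioc i (2 * n),
      (-1 : ℤ) ^ (μ.part i + μ.part j + i + j) with hS2def
  have hS2 : S2 = -(n : ℤ) := by
    have hsq := sq_sum_triangle (fun i => (-1 : ℤ) ^ (μ.part i + i)) (2 * n)
    rw [← hI] at hsq
    rw [X0] at hsq
    have hones : ∑ i ∈ I, ((-1 : ℤ) ^ (μ.part i + i)) ^ 2 = 2 * (n : ℤ) := by
      have : ∀ i ∈ I, ((-1 : ℤ) ^ (μ.part i + i)) ^ 2 = 1 := by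
        intro i _
        rw [← pow_mul]
        exact Even.neg_one_pow ⟨μ.part i + i, by ring⟩
      rw [Finset.sum_congr rfl this, Finset.sum_const, nsmul_eq_mul, mul_one, hcard]
    have hS2' : S2 = ∑ i ∈ I, ∑ j ∈ Finset.Ioc i (2 * n),
        (-1 : ℤ) ^ (μ.part i + i) * (-1 : ℤ) ^ (μ.part j + j) := by
      rw [hS2def, ← hI]
      refine Finset.sum_congr rfl fun i _ => Finset.sum_congr rfl fun j _ => ?_
      rw [show μ.part i + μ.part j + i + j = (μ.part i + i) + (μ.part j + j) by ring, pow_add]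
    rw [hones] at hsq
    rw [hS2']
    norm_num at hsq
    linarith
  -- conclusion
  have hscast : (sizeFn μ.part : ℤ) = 2 * (S1 + (n : ℤ) ^ 2) := by linarith
  rw [hS2, hscast, Int.mul_ediv_cancel_left _ two_ne_zero]
  ring
end
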